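/- arXiv:1708.01512 — 6 statements merged into one kernel-verified Lean document; each statement's English description precedes it below -/
import Mathlib

section
/- Let f and g be real analytic functions on [-1,1] and consider the Abel equation x'(t) = f(t)x(t)^3 + g(t)x(t)^2 on [-1,1]. If this equation has a center at x = 0, then the moments m_k = ∫_{-1}^1 f(t) (G(t))^k dt vanish for k = 0, 1, 2, where G(t) = ∫_{-1}^t g(s) ds. -/
open MeasureTheory intervalIntegral
open Set Metric

lemma helper_hasDerivAt_primitive {h : ℝ → ℝ} {A B c : ℝ}
    (hcont : ContinuousOn h (Set.Icc A B)) (hc : c ∈ Set.Icc A B) {t : ℝ}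
    (ht : t ∈ Set.Ioo A B) :
    HasDerivAt (fun u => ∫ s in c..u, h s) (h t) t := by
  have htI : t ∈ Set.Icc A B := Set.Ioo_subset_Icc_self ht
  apply intervalIntegral.integral_hasDerivAt_right
  · exact (hcont.mono (Set.uIcc_subset_Icc hc htI)).intervalIntegrable
  · exact (hcont.mono Set.Ioo_subset_Icc_self).stronglyMeasurableAtFilter isOpen_Ioo t ht
  · exact (hcont t htI).continuousAt (Icc_mem_nhds ht.1 ht.2)

lemma helper_abs_integral_le {h : ℝ → ℝ} {K t : ℝ}
    (hK : ∀ s ∈ Set.Icc (-1:ℝ) 1, |h s| ≤ K) (ht : t ∈ Set.Icc (-1:ℝ) 1) :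
    |∫ s in (-1:ℝ)..t, h s| ≤ 2 * K := by
  have hK0 : 0 ≤ K := (abs_nonneg _).trans (hK 0 (by norm_num))
  have h1 : |∫ s in (-1:ℝ)..t, h s| ≤ K * |t - (-1)| := by
    have := intervalIntegral.norm_integral_le_of_norm_le_const (C := K) (f := h) (a := -1) (b := t)
      (fun s hs => by
        rw [Real.norm_eq_abs]
        exact hK s (Set.uIoc_subset_uIcc.trans (Set.uIcc_subset_Icc (by norm_num) ht) hs))
    simpa [Real.norm_eq_abs] using this
  have : K * |t - (-1)| ≤ 2 * K := by
    rw [abs_of_nonneg (by linarith [ht.1])]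
    nlinarith [ht.1, ht.2]
  linarith

lemma helper_eq_zero {c C ε₀ : ℝ} (hε₀ : 0 < ε₀)
    (h : ∀ ε : ℝ, 0 < ε → ε < ε₀ → |c| ≤ C * ε) : c = 0 := by
  by_contra h0
  have hc : 0 < |c| := abs_pos.mpr h0
  have hC : 0 < C := by
    have := h (ε₀/2) (by linarith) (by linarith)
    nlinarith
  have hkey := h (min (ε₀/2) (|c|/(2*C))) (lt_min (by linarith) (by positivity))
    (lt_of_le_of_lt (min_le_left _ _) (by linarith))
  have : C * min (ε₀/2) (|c|/(2*C)) ≤ C * (|c|/(2*C)) :=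
    mul_le_mul_of_nonneg_left (min_le_right _ _) hC.le
  rw [mul_div_assoc'] at this
  have : C * |c| / (2*C) = |c|/2 := by field_simp
  nlinarith [hkey, mul_le_mul_of_nonneg_left (min_le_right (ε₀/2) (|c|/(2*C))) hC.le]

lemma helper_abs_mul_le {a b A B : ℝ} (ha : |a| ≤ A) (hb : |b| ≤ B) : |a * b| ≤ A * B := by
  rw [abs_mul]
  exact mul_le_mul ha hb (abs_nonneg _) ((abs_nonneg a).trans ha)


lemma helper_exists_r {U : Set ℝ} (hU : IsOpen U) (hsub : Set.Icc (-1:ℝ) 1 ⊆ U) :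
    ∃ r : ℝ, 0 < r ∧ Set.Icc (-1-r) (1+r) ⊆ U := by
  obtain ⟨δ, hδ, hsubδ⟩ := (isCompact_Icc (a := (-1:ℝ)) (b := 1)).exists_cthickening_subset_open hU hsub
  refine ⟨δ, hδ, fun y hy => hsubδ ?_⟩
  have : y ∈ Metric.cthickening δ (Set.Icc (-1:ℝ) 1) := by
    apply Metric.mem_cthickening_of_dist_le y (max (-1) (min 1 y)) δ _ _
    · rcases le_total y (-1) with h1 | h1
      · have : min 1 y = y := min_eq_right (by linarith)
        rw [this, max_eq_left h1, Real.dist_eq, abs_le]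
        constructor <;> [linarith [hy.1]; linarith]
      · rcases le_total y 1 with h2 | h2
        · rw [min_eq_right h2, max_eq_right h1, Real.dist_eq, abs_le]
          constructor <;> linarith
        · rw [min_eq_left h2, max_eq_right (by linarith : (-1:ℝ) ≤ 1), Real.dist_eq, abs_le]
          constructor <;> [linarith; linarith [hy.2]]
    · constructor
      · exact le_max_left _ _
      · exact max_le (by norm_num) (min_le_left _ _)
  exact this


theorem pl_exists_solution (v : ℝ → ℝ → ℝ) {tMin tMax : ℝ} {t₀ : Set.Icc tMin tMax} (x₀ : ℝ)
    {a L K : NNReal}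
    (hpl : IsPicardLindelof v t₀ x₀ a 0 L K) :
    ∃ x : ℝ → ℝ, x t₀ = x₀ ∧ (∀ t ∈ Set.Icc tMin tMax, |x t - x₀| ≤ a) ∧
      ∀ t ∈ Set.Icc tMin tMax, HasDerivWithinAt x (v t (x t)) (Set.Icc tMin tMax) t := by
  obtain ⟨α, hα⟩ := ODE.FunSpace.exists_isFixedPt_next hpl (mem_closedBall_self le_rfl)
  refine ⟨α.compProj, by rw [ODE.FunSpace.compProj_val, ← hα, ODE.FunSpace.next_apply₀],
    fun t ht => ?_, fun t ht => ?_⟩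
  · have h := α.compProj_mem_closedBall hpl.mul_max_le (t := t)
    rw [Metric.mem_closedBall, Real.dist_eq] at h
    exact h
  · apply ODE.hasDerivWithinAt_picard_Icc t₀.2 hpl.continuousOn_uncurry
      α.continuous_compProj.continuousOn (fun _ ht' => α.compProj_mem_closedBall hpl.mul_max_le)
      x₀ ht |>.congr_of_mem _ ht
    intro t' ht'
    nth_rw 1 [← hα]
    rw [ODE.FunSpace.compProj_of_mem ht', ODE.FunSpace.next_apply]


lemma helper_integral_deriv {φ φ' : ℝ → ℝ} {t : ℝ} (ht : t ∈ Set.Icc (-1:ℝ) 1)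
    (hd : ∀ u ∈ Set.Icc (-1:ℝ) 1, HasDerivAt φ (φ' u) u)
    (hint : ContinuousOn φ' (Set.Icc (-1:ℝ) 1)) :
    ∫ s in (-1:ℝ)..t, φ' s = φ t - φ (-1) := by
  have hsub : Set.uIcc (-1:ℝ) t ⊆ Set.Icc (-1:ℝ) 1 := Set.uIcc_subset_Icc (by norm_num) ht
  exact intervalIntegral.integral_eq_sub_of_hasDerivAt (fun u hu => hd u (hsub hu))
    ((hint.mono hsub).intervalIntegrable)

lemma helper_abs_pow {a A : ℝ} (h : |a| ≤ A) (n : ℕ) : |a^n| ≤ A^n := by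
  rw [abs_pow]; exact pow_le_pow_left₀ (abs_nonneg _) h n

lemma helper_abs_add {a b A B : ℝ} (ha : |a| ≤ A) (hb : |b| ≤ B) : |a + b| ≤ A + B :=
  (abs_add_le _ _).trans (add_le_add ha hb)

lemma helper_peel4 {a b c d D : ℝ} (h : |a + b + c + d| ≤ D) :
    |a| ≤ D + |b| + |c| + |d| := by
  have h1 : |a| = |a + b + c + d + -b + -c + -d| := by
    rw [show a + b + c + d + -b + -c + -d = a from by ring]
  have h2 : |a + b + c + d + -b + -c + -d| ≤ |a + b + c + d + -b + -c| + |-d| := abs_add_le _ _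
  have h3 : |a + b + c + d + -b + -c| ≤ |a + b + c + d + -b| + |-c| := abs_add_le _ _
  have h4 : |a + b + c + d + -b| ≤ |a + b + c + d| + |-b| := abs_add_le _ _
  rw [abs_neg] at h2 h3 h4
  linarith

lemma helper_peel3 {a b c D : ℝ} (h : |a + b + c| ≤ D) : |a| ≤ D + |b| + |c| := by
  have := helper_peel4 (a := a) (b := b) (c := c) (d := 0) (by simpa using h)
  simpa using this

lemma helper_peel2 {a b D : ℝ} (h : |a + b| ≤ D) : |a| ≤ D + |b| := by
  have := helper_peel3 (a := a) (b := b) (c := 0) (by simpa using h)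
  simpa using this

/-- The Abel equation `x' = f(t) x^3 + g(t) x^2` has a center at `x = 0` on `[a, b]`:
every solution defined on all of `[a, b]` with `|x(a)|` small enough satisfies `x(a) = x(b)`. -/
def HasCenter (f g : ℝ → ℝ) (a b : ℝ) : Prop :=
  ∃ δ > 0, ∀ x : ℝ → ℝ,
    (∀ t ∈ Set.Icc a b, HasDerivWithinAt x (f t * x t ^ 3 + g t * x t ^ 2) (Set.Icc a b) t) →
    |x a| < δ → x a = x b

set_option maxHeartbeats 1000000 in
/-- If `f, g` are real analytic on `[-1,1]` and the Abel equation
`x' = f(t) x^3 + g(t) x^2` has a center at `x = 0`, then the moments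
`m_k = ∫_{-1}^1 f(t) G(t)^k dt` vanish for `k = 0, 1, 2`, where `G(t) = ∫_{-1}^t g(s) ds`. -/
theorem moments_vanish_of_center
    (f g : ℝ → ℝ)
    (hf : AnalyticOnNhd ℝ f (Set.Icc (-1 : ℝ) 1))
    (hg : AnalyticOnNhd ℝ g (Set.Icc (-1 : ℝ) 1))
    (hcenter : HasCenter f g (-1) 1) :
    ∀ k : ℕ, k ≤ 2 →
      ∫ t in (-1 : ℝ)..1, f t * (∫ s in (-1 : ℝ)..t, g s) ^ k = 0 := by
  obtain ⟨r, hr, hrU⟩ : ∃ r : ℝ, 0 < r ∧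
      ∀ y ∈ Set.Icc (-1-r) (1+r), AnalyticAt ℝ f y ∧ AnalyticAt ℝ g y := by
    obtain ⟨r, hr, hsub⟩ := helper_exists_r (U := {x | AnalyticAt ℝ f x} ∩ {x | AnalyticAt ℝ g x})
      ((isOpen_analyticAt ℝ f).inter (isOpen_analyticAt ℝ g)) (fun y hy => ⟨hf y hy, hg y hy⟩)
    exact ⟨r, hr, fun y hy => hsub hy⟩
  have hIsub : Set.Icc (-1:ℝ) 1 ⊆ Set.Icc (-1-r) (1+r) :=
    fun y hy => ⟨by linarith [hy.1], by linarith [hy.2]⟩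
  have hsub2 : Set.Icc (-1-r/2) (1+r/2) ⊆ Set.Ioo (-1-r) (1+r) :=
    fun y hy => ⟨by linarith [hy.1], by linarith [hy.2]⟩
  have hsub4 : Set.Icc (-1-r/4) (1+r/4) ⊆ Set.Ioo (-1-r/2) (1+r/2) :=
    fun y hy => ⟨by linarith [hy.1], by linarith [hy.2]⟩
  have hI2 : Set.Icc (-1:ℝ) 1 ⊆ Set.Icc (-1-r/2) (1+r/2) :=
    fun y hy => ⟨by linarith [hy.1], by linarith [hy.2]⟩
  have hI4 : Set.Icc (-1:ℝ) 1 ⊆ Set.Icc (-1-r/4) (1+r/4) :=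
    fun y hy => ⟨by linarith [hy.1], by linarith [hy.2]⟩
  have hI4o : Set.Icc (-1:ℝ) 1 ⊆ Set.Ioo (-1-r/4) (1+r/4) :=
    fun y hy => ⟨by linarith [hy.1], by linarith [hy.2]⟩
  have hfc : ContinuousOn f (Set.Icc (-1-r) (1+r)) :=
    fun y hy => ((hrU y hy).1.continuousAt).continuousWithinAt
  have hgc : ContinuousOn g (Set.Icc (-1-r) (1+r)) :=
    fun y hy => ((hrU y hy).2.continuousAt).continuousWithinAt
  have hfcI : ContinuousOn f (Set.Icc (-1:ℝ) 1) := hfc.mono hIsub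
  have hgcI : ContinuousOn g (Set.Icc (-1:ℝ) 1) := hgc.mono hIsub
  -- bound M
  obtain ⟨Mf, hMf⟩ := (isCompact_Icc (a := (-1:ℝ)) (b := 1)).exists_bound_of_continuousOn hfcI
  obtain ⟨Mg, hMg⟩ := (isCompact_Icc (a := (-1:ℝ)) (b := 1)).exists_bound_of_continuousOn hgcI
  set M : ℝ := max 1 (max Mf Mg) with hMdef
  have hM1 : (1:ℝ) ≤ M := le_max_left _ _
  have hM0 : (0:ℝ) < M := by linarith
  have hMfb : ∀ s ∈ Set.Icc (-1:ℝ) 1, |f s| ≤ M := fun s hs =>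
    (Real.norm_eq_abs (f s) ▸ hMf s hs).trans ((le_max_left _ _).trans (le_max_right _ _))
  have hMgb : ∀ s ∈ Set.Icc (-1:ℝ) 1, |g s| ≤ M := fun s hs =>
    (Real.norm_eq_abs (g s) ▸ hMg s hs).trans ((le_max_right _ _).trans (le_max_right _ _))
  -- primitives
  set G : ℝ → ℝ := fun t => ∫ s in (-1:ℝ)..t, g s with hGdef
  set FF : ℝ → ℝ := fun t => ∫ s in (-1:ℝ)..t, f s with hFFdef
  have hm1r : (-1:ℝ) ∈ Set.Icc (-1-r) (1+r) := ⟨by linarith, by linarith⟩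
  have hGd : ∀ t ∈ Set.Ioo (-1-r) (1+r), HasDerivAt G (g t) t :=
    fun t ht => helper_hasDerivAt_primitive hgc hm1r ht
  have hFFd : ∀ t ∈ Set.Ioo (-1-r) (1+r), HasDerivAt FF (f t) t :=
    fun t ht => helper_hasDerivAt_primitive hfc hm1r ht
  have hGc2 : ContinuousOn G (Set.Icc (-1-r/2) (1+r/2)) :=
    fun t ht => ((hGd t (hsub2 ht)).continuousAt).continuousWithinAt
  have hFFc2 : ContinuousOn FF (Set.Icc (-1-r/2) (1+r/2)) :=
    fun t ht => ((hFFd t (hsub2 ht)).continuousAt).continuousWithinAt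
  have hGcI : ContinuousOn G (Set.Icc (-1:ℝ) 1) := hGc2.mono hI2
  have hFFcI : ContinuousOn FF (Set.Icc (-1:ℝ) 1) := hFFc2.mono hI2
  have hfc2 : ContinuousOn f (Set.Icc (-1-r/2) (1+r/2)) :=
    hfc.mono (fun y hy => ⟨by linarith [hy.1], by linarith [hy.2]⟩)
  have hgc2 : ContinuousOn g (Set.Icc (-1-r/2) (1+r/2)) :=
    hgc.mono (fun y hy => ⟨by linarith [hy.1], by linarith [hy.2]⟩)
  -- P
  set P : ℝ → ℝ := fun t => ∫ s in (-1:ℝ)..t, (3*f s*G s + g s*(3*G s^2 + 2*FF s)) with hPdef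
  have hPintc : ContinuousOn (fun s => 3*f s*G s + g s*(3*G s^2 + 2*FF s))
      (Set.Icc (-1-r/2) (1+r/2)) := by
    exact ((continuousOn_const.mul hfc2).mul hGc2).add
      (hgc2.mul ((continuousOn_const.mul (hGc2.pow 2)).add (continuousOn_const.mul hFFc2)))
  have hm1r2 : (-1:ℝ) ∈ Set.Icc (-1-r/2) (1+r/2) := ⟨by linarith, by linarith⟩
  have hPd : ∀ t ∈ Set.Ioo (-1-r/2) (1+r/2),
      HasDerivAt P (3*f t*G t + g t*(3*G t^2 + 2*FF t)) t :=
    fun t ht => helper_hasDerivAt_primitive hPintc hm1r2 ht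
  have hPc4 : ContinuousOn P (Set.Icc (-1-r/4) (1+r/4)) :=
    fun t ht => ((hPd t (hsub4 ht)).continuousAt).continuousWithinAt
  have hPcI : ContinuousOn P (Set.Icc (-1:ℝ) 1) := hPc4.mono hI4
  -- Q
  set Q : ℝ → ℝ := fun t => ∫ s in (-1:ℝ)..t,
      (f s*(6*G s^2 + 3*FF s) + g s*(2*P s + 2*G s^3 + 2*G s*FF s)) with hQdef
  have hfc4 : ContinuousOn f (Set.Icc (-1-r/4) (1+r/4)) :=
    hfc.mono (fun y hy => ⟨by linarith [hy.1], by linarith [hy.2]⟩)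
  have hgc4 : ContinuousOn g (Set.Icc (-1-r/4) (1+r/4)) :=
    hgc.mono (fun y hy => ⟨by linarith [hy.1], by linarith [hy.2]⟩)
  have hGc4 : ContinuousOn G (Set.Icc (-1-r/4) (1+r/4)) :=
    hGc2.mono (fun y hy => ⟨by linarith [hy.1], by linarith [hy.2]⟩)
  have hFFc4 : ContinuousOn FF (Set.Icc (-1-r/4) (1+r/4)) :=
    hFFc2.mono (fun y hy => ⟨by linarith [hy.1], by linarith [hy.2]⟩)
  have hQintc : ContinuousOn (fun s => f s*(6*G s^2 + 3*FF s)
      + g s*(2*P s + 2*G s^3 + 2*G s*FF s)) (Set.Icc (-1-r/4) (1+r/4)) := by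
    exact (hfc4.mul ((continuousOn_const.mul (hGc4.pow 2)).add (continuousOn_const.mul hFFc4))).add
      (hgc4.mul (((continuousOn_const.mul hPc4).add (continuousOn_const.mul (hGc4.pow 3))).add
        ((continuousOn_const.mul hGc4).mul hFFc4)))
  have hm1r4 : (-1:ℝ) ∈ Set.Icc (-1-r/4) (1+r/4) := ⟨by linarith, by linarith⟩
  have hQd : ∀ t ∈ Set.Ioo (-1-r/4) (1+r/4),
      HasDerivAt Q (f t*(6*G t^2 + 3*FF t) + g t*(2*P t + 2*G t^3 + 2*G t*FF t)) t :=
    fun t ht => helper_hasDerivAt_primitive hQintc hm1r4 ht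
  -- pointwise bounds on Icc(-1,1)
  have hGb : ∀ s ∈ Set.Icc (-1:ℝ) 1, |G s| ≤ 2*M := fun s hs => helper_abs_integral_le hMgb hs
  have hFFb : ∀ s ∈ Set.Icc (-1:ℝ) 1, |FF s| ≤ 2*M := fun s hs => helper_abs_integral_le hMfb hs
  have hPb : ∀ s ∈ Set.Icc (-1:ℝ) 1, |P s| ≤ 44*M^3 := by
    intro s hs
    have hbnd : ∀ u ∈ Set.Icc (-1:ℝ) 1, |3*f u*G u + g u*(3*G u^2 + 2*FF u)| ≤ 22*M^3 := by
      intro u hu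
      have hfu := hMfb u hu; have hgu := hMgb u hu
      have hGu := hGb u hu; have hFu := hFFb u hu
      have e1 : |3*f u*G u| ≤ 3*(M*(2*M)) := by
        rw [mul_assoc, abs_mul, abs_of_nonneg (by norm_num : (0:ℝ) ≤ 3)]
        exact mul_le_mul_of_nonneg_left (helper_abs_mul_le hfu hGu) (by norm_num)
      have e2 : |g u*(3*G u^2 + 2*FF u)| ≤ M*(3*(2*M)^2 + 2*(2*M)) := by
        refine helper_abs_mul_le hgu (helper_abs_add ?_ ?_)
        · rw [show (3:ℝ)*G u^2 = 3*(G u^2) from rfl, abs_mul,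
            abs_of_nonneg (by norm_num : (0:ℝ) ≤ 3)]
          exact mul_le_mul_of_nonneg_left (helper_abs_pow hGu 2) (by norm_num)
        · rw [abs_mul, abs_of_nonneg (by norm_num : (0:ℝ) ≤ 2)]
          exact mul_le_mul_of_nonneg_left hFu (by norm_num)
      calc |3*f u*G u + g u*(3*G u^2 + 2*FF u)| ≤ 3*(M*(2*M)) + M*(3*(2*M)^2 + 2*(2*M)) :=
            helper_abs_add e1 e2
        _ ≤ 22*M^3 := by nlinarith
    have := helper_abs_integral_le hbnd hs
    linarith
  -- the identity int_{-1}^t (2 g G + f) = G^2 + FF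
  have hwq : ∀ t ∈ Set.Icc (-1:ℝ) 1,
      (∫ s in (-1:ℝ)..t, (2*g s*G s + f s)) = G t^2 + FF t := by
    intro t ht
    have hsubt : Set.uIcc (-1:ℝ) t ⊆ Set.Icc (-1:ℝ) 1 := Set.uIcc_subset_Icc (by norm_num) ht
    have hint1 : IntervalIntegrable (fun s => 2*g s*G s) volume (-1) t :=
      (((continuousOn_const.mul hgcI).mul hGcI).mono hsubt).intervalIntegrable
    have hint2 : IntervalIntegrable f volume (-1) t := (hfcI.mono hsubt).intervalIntegrable
    rw [intervalIntegral.integral_add hint1 hint2]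
    have hsq : (∫ s in (-1:ℝ)..t, 2*g s*G s) = G t^2 - G (-1)^2 := by
      apply helper_integral_deriv ht
      · intro u hu
        have := (hGd u (hsub2 (hI2 hu))).fun_pow 2
        exact this.congr_deriv (by push_cast; ring)
      · exact (continuousOn_const.mul hgcI).mul hGcI
    have hG0 : G (-1) = 0 := intervalIntegral.integral_same
    have hFt : (∫ s in (-1:ℝ)..t, f s) = FF t := rfl
    rw [hsq, hG0, hFt]
    ring
  have hWb : ∀ s ∈ Set.Icc (-1:ℝ) 1, |G s^2 + FF s| ≤ 6*M^2 := by
    intro s hs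
    have := helper_abs_add (helper_abs_pow (hGb s hs) 2) (hFFb s hs)
    have h2 : (2*M)^2 + 2*M ≤ 6*M^2 := by nlinarith
    linarith
  obtain ⟨δ, hδ, hcen⟩ := hcenter
  set ε₀ : ℝ := min δ (min 1 (1/(24*M))) with hε₀def
  have hε₀ : 0 < ε₀ := lt_min hδ (lt_min one_pos (by positivity))
  have master : ∀ ε : ℝ, 0 < ε → ε < ε₀ →
      |ε^2*G 1 + ε^3*(G 1^2 + FF 1) + ε^4*P 1 + ε^5*Q 1| ≤ 500000*M^6*ε^6 := by
    intro ε hε hεlt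
    have hε1 : ε ≤ 1 := le_of_lt (lt_of_lt_of_le hεlt ((min_le_right _ _).trans (min_le_left _ _)))
    have hε24 : 24*M*ε ≤ 1 := by
      have h := le_of_lt (lt_of_lt_of_le hεlt ((min_le_right _ _).trans (min_le_right _ _)))
      rw [le_div_iff₀ (by positivity : (0:ℝ) < 24*M)] at h
      linarith
    have hεδ : ε < δ := lt_of_lt_of_le hεlt (min_le_left _ _)
    have mono : ∀ (i j k l : ℕ), i ≤ k → l ≤ j → M^i*ε^j ≤ M^k*ε^l := by
      intro i j k l hik hlj
      have hh1 : M^i ≤ M^k := pow_le_pow_right₀ hM1 hik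
      have hh2 : ε^j ≤ ε^l := pow_le_pow_of_le_one hε.le hε1 hlj
      exact mul_le_mul hh1 hh2 (pow_nonneg hε.le _) (pow_nonneg (by linarith) _)
    -- Picard–Lindelöf solution
    obtain ⟨x, hx0, hball, hxd⟩ : ∃ x : ℝ → ℝ, x (-1) = ε ∧
        (∀ t ∈ Set.Icc (-1:ℝ) 1, |x t - ε| ≤ ε) ∧
        ∀ t ∈ Set.Icc (-1:ℝ) 1,
          HasDerivWithinAt x (f t * x t ^ 3 + g t * x t ^ 2) (Set.Icc (-1:ℝ) 1) t := by
      obtain ⟨x, h0, hb, hd⟩ := pl_exists_solution (fun t y => f t * y^3 + g t * y^2)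
        (t₀ := (⟨-1, by norm_num, by norm_num⟩ : Set.Icc (-1:ℝ) 1)) ε
        (K := Real.toNNReal (16*M)) (a := Real.toNNReal ε) (L := Real.toNNReal (12*M*ε^2)) (by
      constructor
      case lipschitzOnWith =>
        intro t ht
        rw [lipschitzOnWith_iff_dist_le_mul]
        intro y₁ h₁ y₂ h₂
        rw [Real.coe_toNNReal _ hε.le] at h₁ h₂
        rw [Real.dist_eq, Real.dist_eq, Real.coe_toNNReal _ (by positivity)]
        have hy₁ : |y₁ - ε| ≤ ε := by rw [← Real.dist_eq]; exact Metric.mem_closedBall.mp h₁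
        have hy₂ : |y₂ - ε| ≤ ε := by rw [← Real.dist_eq]; exact Metric.mem_closedBall.mp h₂
        have hy₁b : |y₁| ≤ 2 := by
          have : |y₁| ≤ |y₁ - ε| + |ε| := by
            calc |y₁| = |(y₁ - ε) + ε| := by ring_nf
              _ ≤ |y₁ - ε| + |ε| := abs_add_le _ _
          rw [abs_of_pos hε] at this; linarith
        have hy₂b : |y₂| ≤ 2 := by
          have : |y₂| ≤ |y₂ - ε| + |ε| := by
            calc |y₂| = |(y₂ - ε) + ε| := by ring_nf
              _ ≤ |y₂ - ε| + |ε| := abs_add_le _ _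
          rw [abs_of_pos hε] at this; linarith
        have hq : |y₁^2 + y₁*y₂ + y₂^2| ≤ 12 := by
          obtain ⟨l1, u1⟩ := abs_le.mp hy₁b
          obtain ⟨l2, u2⟩ := abs_le.mp hy₂b
          rw [abs_le]; constructor <;> nlinarith
        have hs : |y₁ + y₂| ≤ 4 := by
          have := helper_abs_add hy₁b hy₂b; linarith
        have hft := hMfb t ht; have hgt := hMgb t ht
        calc |f t * y₁^3 + g t * y₁^2 - (f t * y₂^3 + g t * y₂^2)|
            = |f t * ((y₁^2 + y₁*y₂ + y₂^2) * (y₁ - y₂)) + g t * ((y₁ + y₂) * (y₁ - y₂))| := by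
              ring_nf
          _ ≤ M * (12 * |y₁ - y₂|) + M * (4 * |y₁ - y₂|) :=
              helper_abs_add (helper_abs_mul_le hft (helper_abs_mul_le hq (le_refl _)))
                (helper_abs_mul_le hgt (helper_abs_mul_le hs (le_refl _)))
          _ = 16*M * |y₁ - y₂| := by ring
      case continuousOn =>
        intro y hy
        exact (hfcI.mul continuousOn_const).add (hgcI.mul continuousOn_const)
      case norm_le =>
        intro t ht y hy
        rw [Real.coe_toNNReal _ hε.le] at hy
        rw [Real.coe_toNNReal _ (by positivity)]
        have hyb : |y| ≤ 2*ε := by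
          have hyε : |y - ε| ≤ ε := by rw [← Real.dist_eq]; exact Metric.mem_closedBall.mp hy
          have : |y| ≤ |y - ε| + |ε| := by
            calc |y| = |(y - ε) + ε| := by ring_nf
              _ ≤ |y - ε| + |ε| := abs_add_le _ _
          rw [abs_of_pos hε] at this; linarith
        rw [Real.norm_eq_abs]
        have := helper_abs_add (helper_abs_mul_le (hMfb t ht) (helper_abs_pow hyb 3))
          (helper_abs_mul_le (hMgb t ht) (helper_abs_pow hyb 2))
        have h2 : M*(2*ε)^3 + M*(2*ε)^2 ≤ 12*M*ε^2 := by nlinarith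
        linarith
      case mul_max_le =>
        show ((12*M*ε^2).toNNReal : ℝ) * max ((1:ℝ) - (-1)) ((-1) - (-1))
          ≤ (ε.toNNReal : ℝ) - ((0:NNReal) : ℝ)
        rw [Real.coe_toNNReal _ (by positivity), Real.coe_toNNReal _ hε.le, NNReal.coe_zero, sub_zero]
        have : max ((1:ℝ) - (-1)) ((-1) - (-1)) = 2 := by norm_num
        rw [this]
        nlinarith)
      refine ⟨x, h0, fun t ht => ?_, hd⟩
      have := hb t ht
      rwa [Real.coe_toNNReal _ hε.le] at this
    have hxd' : ∀ t ∈ Set.Icc (-1:ℝ) 1,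
        HasDerivWithinAt x (f t * x t ^ 3 + g t * x t ^ 2) (Set.Icc (-1:ℝ) 1) t := hxd
    have hx1 : x 1 = ε := by
      have h := hcen x hxd' (by rw [hx0, abs_of_pos hε]; exact hεδ)
      rw [← h, hx0]
    have hxcont : ContinuousOn x (Set.Icc (-1:ℝ) 1) :=
      fun s hs => (hxd s hs).continuousWithinAt
    have hxb : ∀ s ∈ Set.Icc (-1:ℝ) 1, |x s| ≤ 2*ε := by
      intro s hs
      have : |x s| ≤ |x s - ε| + |ε| := by
        calc |x s| = |(x s - ε) + ε| := by ring_nf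
          _ ≤ |x s - ε| + |ε| := abs_add_le _ _
      rw [abs_of_pos hε] at this
      linarith [hball s hs]
    -- representation of x via its integral equation
    have hxrep : ∀ s ∈ Set.Icc (-1:ℝ) 1,
        x s - ε = ∫ u in (-1:ℝ)..s, (f u*x u^3 + g u*x u^2) := by
      intro s hs
      have hcont : ContinuousOn x (Set.Icc (-1) s) :=
        hxcont.mono (Set.Icc_subset_Icc le_rfl hs.2)
      have hderiv : ∀ u ∈ Set.Ioo (-1:ℝ) s,
          HasDerivWithinAt x (f u*x u^3 + g u*x u^2) (Set.Ioi u) u := by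
        intro u hu
        have huI : u ∈ Set.Icc (-1:ℝ) 1 := ⟨hu.1.le, le_trans hu.2.le hs.2⟩
        have huO : u ∈ Set.Ioo (-1:ℝ) 1 := ⟨hu.1, lt_of_lt_of_le hu.2 hs.2⟩
        have := (hxd u huI).hasDerivAt (Icc_mem_nhds huO.1 huO.2)
        exact this.hasDerivWithinAt
      have hint : IntervalIntegrable (fun u => f u*x u^3 + g u*x u^2) volume (-1) s := by
        apply ContinuousOn.intervalIntegrable
        exact ((hfcI.mul (hxcont.pow 3)).add (hgcI.mul (hxcont.pow 2))).mono
          (Set.uIcc_subset_Icc (by norm_num) hs)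
      have h := intervalIntegral.integral_eq_sub_of_hasDeriv_right_of_le hs.1 hcont hderiv hint
      rw [h, hx0]
    have hii : ∀ (h : ℝ → ℝ), ContinuousOn h (Set.Icc (-1:ℝ) 1) → ∀ s ∈ Set.Icc (-1:ℝ) 1,
        IntervalIntegrable h volume (-1) s := fun h hc s hs =>
      (hc.mono (Set.uIcc_subset_Icc (by norm_num) hs)).intervalIntegrable
    have cvx : ContinuousOn (fun u => f u*x u^3 + g u*x u^2) (Set.Icc (-1:ℝ) 1) :=
      (hfcI.mul (hxcont.pow 3)).add (hgcI.mul (hxcont.pow 2))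
    have c2 : ContinuousOn (fun u => ε^2*g u) (Set.Icc (-1:ℝ) 1) :=
      continuousOn_const.mul hgcI
    have c3 : ContinuousOn (fun u => ε^3*(2*g u*G u + f u)) (Set.Icc (-1:ℝ) 1) :=
      continuousOn_const.mul (((continuousOn_const.mul hgcI).mul hGcI).add hfcI)
    have c4 : ContinuousOn (fun u => ε^4*(3*f u*G u + g u*(3*G u^2 + 2*FF u)))
        (Set.Icc (-1:ℝ) 1) := continuousOn_const.mul (hPintc.mono hI2)
    have c5 : ContinuousOn (fun u => ε^5*(f u*(6*G u^2 + 3*FF u)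
        + g u*(2*P u + 2*G u^3 + 2*G u*FF u))) (Set.Icc (-1:ℝ) 1) :=
      continuousOn_const.mul (hQintc.mono hI4)
    have hrep2 : ∀ s ∈ Set.Icc (-1:ℝ) 1, x s - ε - ε^2*G s
        = ∫ u in (-1:ℝ)..s, (f u*x u^3 + g u*x u^2 - ε^2*g u) := by
      intro s hs
      rw [intervalIntegral.integral_sub (hii _ cvx s hs) (hii _ c2 s hs), ← hxrep s hs,
        intervalIntegral.integral_const_mul]
    have hrep3 : ∀ s ∈ Set.Icc (-1:ℝ) 1, x s - ε - ε^2*G s - ε^3*(G s^2 + FF s)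
        = ∫ u in (-1:ℝ)..s, (f u*x u^3 + g u*x u^2 - ε^2*g u - ε^3*(2*g u*G u + f u)) := by
      intro s hs
      rw [intervalIntegral.integral_sub ((hii _ cvx s hs).sub (hii _ c2 s hs)) (hii _ c3 s hs),
        ← hrep2 s hs, intervalIntegral.integral_const_mul, hwq s hs]
    have hrep4 : ∀ s ∈ Set.Icc (-1:ℝ) 1,
        x s - ε - ε^2*G s - ε^3*(G s^2 + FF s) - ε^4*P s
        = ∫ u in (-1:ℝ)..s, (f u*x u^3 + g u*x u^2 - ε^2*g u - ε^3*(2*g u*G u + f u)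
            - ε^4*(3*f u*G u + g u*(3*G u^2 + 2*FF u))) := by
      intro s hs
      rw [intervalIntegral.integral_sub (((hii _ cvx s hs).sub (hii _ c2 s hs)).sub
          (hii _ c3 s hs)) (hii _ c4 s hs),
        ← hrep3 s hs, intervalIntegral.integral_const_mul]
    have hrep5 : ∀ s ∈ Set.Icc (-1:ℝ) 1,
        x s - ε - ε^2*G s - ε^3*(G s^2 + FF s) - ε^4*P s - ε^5*Q s
        = ∫ u in (-1:ℝ)..s, (f u*x u^3 + g u*x u^2 - ε^2*g u - ε^3*(2*g u*G u + f u)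
            - ε^4*(3*f u*G u + g u*(3*G u^2 + 2*FF u))
            - ε^5*(f u*(6*G u^2 + 3*FF u) + g u*(2*P u + 2*G u^3 + 2*G u*FF u))) := by
      intro s hs
      rw [intervalIntegral.integral_sub ((((hii _ cvx s hs).sub (hii _ c2 s hs)).sub
          (hii _ c3 s hs)).sub (hii _ c4 s hs)) (hii _ c5 s hs),
        ← hrep4 s hs, intervalIntegral.integral_const_mul]
    -- step 1
    have h1 : ∀ s ∈ Set.Icc (-1:ℝ) 1, |x s - ε| ≤ 24*M*ε^2 := by
      intro s hs
      rw [hxrep s hs]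
      have hbnd : ∀ w ∈ Set.Icc (-1:ℝ) 1, |f w*x w^3 + g w*x w^2| ≤ 12*M*ε^2 := by
        intro w hw
        have := helper_abs_add (helper_abs_mul_le (hMfb w hw) (helper_abs_pow (hxb w hw) 3))
          (helper_abs_mul_le (hMgb w hw) (helper_abs_pow (hxb w hw) 2))
        have h2 : M*(2*ε)^3 + M*(2*ε)^2 ≤ 12*M*ε^2 := by nlinarith
        linarith
      have := helper_abs_integral_le hbnd hs
      linarith
    -- step 2
    have h2b : ∀ s ∈ Set.Icc (-1:ℝ) 1, |x s - ε - ε^2*G s| ≤ 160*M^2*ε^3 := by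
      intro s hs
      rw [hrep2 s hs]
      have hbnd : ∀ w ∈ Set.Icc (-1:ℝ) 1,
          |f w*x w^3 + g w*x w^2 - ε^2*g w| ≤ 80*M^2*ε^3 := by
        intro w hw
        have key : |f w*x w^3 + g w*x w^2 - ε^2*g w|
            = |f w*(x w^3) + g w*((x w - ε)*(x w + ε))| := by ring_nf
        rw [key]
        have hxe : |x w + ε| ≤ 2*ε + ε := by
          have h := abs_add_le (x w) ε
          rw [abs_of_pos hε] at h
          linarith [hxb w hw]
        have := helper_abs_add (helper_abs_mul_le (hMfb w hw) (helper_abs_pow (hxb w hw) 3))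
          (helper_abs_mul_le (hMgb w hw) (helper_abs_mul_le (h1 w hw) hxe))
        have h2 : M*(2*ε)^3 + M*(24*M*ε^2*(2*ε+ε)) ≤ 80*M^2*ε^3 := by
          nlinarith [mono 1 3 2 3 (by norm_num) (by norm_num)]
        linarith
      have := helper_abs_integral_le hbnd hs
      linarith
    -- step 3
    have h3b : ∀ s ∈ Set.Icc (-1:ℝ) 1,
        |x s - ε - ε^2*G s - ε^3*(G s^2 + FF s)| ≤ 2200*M^3*ε^4 := by
      intro s hs
      rw [hrep3 s hs]
      have hbnd : ∀ w ∈ Set.Icc (-1:ℝ) 1,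
          |f w*x w^3 + g w*x w^2 - ε^2*g w - ε^3*(2*g w*G w + f w)| ≤ 1100*M^3*ε^4 := by
        intro w hw
        have key : |f w*x w^3 + g w*x w^2 - ε^2*g w - ε^3*(2*g w*G w + f w)|
            = |f w*((x w - ε)*(x w^2 + x w*ε + ε^2))
                + g w*(2*ε*(x w - ε - ε^2*G w) + (x w - ε)^2)| := by ring_nf
        rw [key]
        have hq : |x w^2 + x w*ε + ε^2| ≤ 7*ε^2 := by
          obtain ⟨hl, hu⟩ := abs_le.mp (hxb w hw)
          rw [abs_le]
          constructor <;> nlinarith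
        have h2e : |2*ε*(x w - ε - ε^2*G w)| ≤ 2*ε*(160*M^2*ε^3) := by
          rw [abs_mul, abs_of_pos (by positivity : (0:ℝ) < 2*ε)]
          exact mul_le_mul_of_nonneg_left (h2b w hw) (by positivity)
        have hB : |2*ε*(x w - ε - ε^2*G w) + (x w - ε)^2|
            ≤ 2*ε*(160*M^2*ε^3) + (24*M*ε^2)^2 :=
          helper_abs_add h2e (helper_abs_pow (h1 w hw) 2)
        have := helper_abs_add
          (helper_abs_mul_le (hMfb w hw) (helper_abs_mul_le (h1 w hw) hq))
          (helper_abs_mul_le (hMgb w hw) hB)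
        have h2 : M*(24*M*ε^2*(7*ε^2)) + M*(2*ε*(160*M^2*ε^3) + (24*M*ε^2)^2)
            ≤ 1100*M^3*ε^4 := by
          nlinarith [mono 2 4 3 4 (by norm_num) (by norm_num)]
        linarith
      have := helper_abs_integral_le hbnd hs
      linarith
    -- step 4
    have h4b : ∀ s ∈ Set.Icc (-1:ℝ) 1,
        |x s - ε - ε^2*G s - ε^3*(G s^2 + FF s) - ε^4*P s| ≤ 50000*M^4*ε^5 := by
      intro s hs
      rw [hrep4 s hs]
      have hbnd : ∀ w ∈ Set.Icc (-1:ℝ) 1,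
          |f w*x w^3 + g w*x w^2 - ε^2*g w - ε^3*(2*g w*G w + f w)
            - ε^4*(3*f w*G w + g w*(3*G w^2 + 2*FF w))| ≤ 25000*M^4*ε^5 := by
        intro w hw
        have key : |f w*x w^3 + g w*x w^2 - ε^2*g w - ε^3*(2*g w*G w + f w)
            - ε^4*(3*f w*G w + g w*(3*G w^2 + 2*FF w))|
            = |f w*(3*ε^2*(x w - ε - ε^2*G w) + 3*ε*(x w - ε)^2 + (x w - ε)^3)
                + g w*(2*ε*(x w - ε - ε^2*G w - ε^3*(G w^2 + FF w))
                  + (x w - ε - ε^2*G w)*(x w - ε + ε^2*G w))| := by ring_nf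
        rw [key]
        have e1 : |3*ε^2*(x w - ε - ε^2*G w)| ≤ 3*ε^2*(160*M^2*ε^3) := by
          rw [abs_mul, abs_of_pos (by positivity : (0:ℝ) < 3*ε^2)]
          exact mul_le_mul_of_nonneg_left (h2b w hw) (by positivity)
        have e2 : |3*ε*(x w - ε)^2| ≤ 3*ε*(24*M*ε^2)^2 := by
          rw [abs_mul, abs_of_pos (by positivity : (0:ℝ) < 3*ε)]
          exact mul_le_mul_of_nonneg_left (helper_abs_pow (h1 w hw) 2) (by positivity)
        have hC : |3*ε^2*(x w - ε - ε^2*G w) + 3*ε*(x w - ε)^2 + (x w - ε)^3|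
            ≤ 3*ε^2*(160*M^2*ε^3) + 3*ε*(24*M*ε^2)^2 + (24*M*ε^2)^3 :=
          helper_abs_add (helper_abs_add e1 e2) (helper_abs_pow (h1 w hw) 3)
        have e3 : |2*ε*(x w - ε - ε^2*G w - ε^3*(G w^2 + FF w))| ≤ 2*ε*(2200*M^3*ε^4) := by
          rw [abs_mul, abs_of_pos (by positivity : (0:ℝ) < 2*ε)]
          exact mul_le_mul_of_nonneg_left (h3b w hw) (by positivity)
        have e4 : |x w - ε + ε^2*G w| ≤ 24*M*ε^2 + ε^2*(2*M) := by
          refine helper_abs_add (h1 w hw) ?_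
          rw [abs_mul, abs_of_nonneg (by positivity : (0:ℝ) ≤ ε^2)]
          exact mul_le_mul_of_nonneg_left (hGb w hw) (by positivity)
        have hB : |2*ε*(x w - ε - ε^2*G w - ε^3*(G w^2 + FF w))
              + (x w - ε - ε^2*G w)*(x w - ε + ε^2*G w)|
            ≤ 2*ε*(2200*M^3*ε^4) + 160*M^2*ε^3*(24*M*ε^2 + ε^2*(2*M)) :=
          helper_abs_add e3 (helper_abs_mul_le (h2b w hw) e4)
        have := helper_abs_add (helper_abs_mul_le (hMfb w hw) hC)
          (helper_abs_mul_le (hMgb w hw) hB)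
        have h2 : M*(3*ε^2*(160*M^2*ε^3) + 3*ε*(24*M*ε^2)^2 + (24*M*ε^2)^3)
            + M*(2*ε*(2200*M^3*ε^4) + 160*M^2*ε^3*(24*M*ε^2 + ε^2*(2*M)))
            ≤ 25000*M^4*ε^5 := by
          nlinarith [mono 3 5 4 5 (by norm_num) (by norm_num),
            mono 4 6 4 5 (by norm_num) (by norm_num)]
        linarith
      have := helper_abs_integral_le hbnd hs
      linarith
    -- step 5 (at s = 1)
    have h5 : |x 1 - ε - ε^2*G 1 - ε^3*(G 1^2 + FF 1) - ε^4*P 1 - ε^5*Q 1|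
        ≤ 500000*M^6*ε^6 := by
      have h1I : (1:ℝ) ∈ Set.Icc (-1:ℝ) 1 := ⟨by norm_num, le_refl _⟩
      rw [hrep5 1 h1I]
      have hbnd : ∀ w ∈ Set.Icc (-1:ℝ) 1,
          |f w*x w^3 + g w*x w^2 - ε^2*g w - ε^3*(2*g w*G w + f w)
            - ε^4*(3*f w*G w + g w*(3*G w^2 + 2*FF w))
            - ε^5*(f w*(6*G w^2 + 3*FF w) + g w*(2*P w + 2*G w^3 + 2*G w*FF w))|
            ≤ 250000*M^6*ε^6 := by
        intro w hw
        have key : |f w*x w^3 + g w*x w^2 - ε^2*g w - ε^3*(2*g w*G w + f w)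
            - ε^4*(3*f w*G w + g w*(3*G w^2 + 2*FF w))
            - ε^5*(f w*(6*G w^2 + 3*FF w) + g w*(2*P w + 2*G w^3 + 2*G w*FF w))|
            = |f w*(3*ε^2*(x w - ε - ε^2*G w - ε^3*(G w^2 + FF w))
                  + 3*ε*((x w - ε - ε^2*G w)*(x w - ε + ε^2*G w)) + (x w - ε)^3)
                + g w*(2*ε*(x w - ε - ε^2*G w - ε^3*(G w^2 + FF w) - ε^4*P w)
                  + (x w - ε - ε^2*G w - ε^3*(G w^2 + FF w))
                    *(x w - ε + ε^2*G w + ε^3*(G w^2 + FF w))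
                  + ε^6*(G w^2 + FF w)^2)| := by ring_nf
        rw [key]
        have e1 : |3*ε^2*(x w - ε - ε^2*G w - ε^3*(G w^2 + FF w))| ≤ 3*ε^2*(2200*M^3*ε^4) := by
          rw [abs_mul, abs_of_pos (by positivity : (0:ℝ) < 3*ε^2)]
          exact mul_le_mul_of_nonneg_left (h3b w hw) (by positivity)
        have e4 : |x w - ε + ε^2*G w| ≤ 24*M*ε^2 + ε^2*(2*M) := by
          refine helper_abs_add (h1 w hw) ?_
          rw [abs_mul, abs_of_nonneg (by positivity : (0:ℝ) ≤ ε^2)]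
          exact mul_le_mul_of_nonneg_left (hGb w hw) (by positivity)
        have e2 : |3*ε*((x w - ε - ε^2*G w)*(x w - ε + ε^2*G w))|
            ≤ 3*ε*(160*M^2*ε^3*(24*M*ε^2 + ε^2*(2*M))) := by
          rw [abs_mul, abs_of_pos (by positivity : (0:ℝ) < 3*ε)]
          exact mul_le_mul_of_nonneg_left (helper_abs_mul_le (h2b w hw) e4) (by positivity)
        have hC : |3*ε^2*(x w - ε - ε^2*G w - ε^3*(G w^2 + FF w))
              + 3*ε*((x w - ε - ε^2*G w)*(x w - ε + ε^2*G w)) + (x w - ε)^3|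
            ≤ 3*ε^2*(2200*M^3*ε^4) + 3*ε*(160*M^2*ε^3*(24*M*ε^2 + ε^2*(2*M)))
              + (24*M*ε^2)^3 :=
          helper_abs_add (helper_abs_add e1 e2) (helper_abs_pow (h1 w hw) 3)
        have e5 : |2*ε*(x w - ε - ε^2*G w - ε^3*(G w^2 + FF w) - ε^4*P w)|
            ≤ 2*ε*(50000*M^4*ε^5) := by
          rw [abs_mul, abs_of_pos (by positivity : (0:ℝ) < 2*ε)]
          exact mul_le_mul_of_nonneg_left (h4b w hw) (by positivity)
        have e6 : |x w - ε + ε^2*G w + ε^3*(G w^2 + FF w)|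
            ≤ 24*M*ε^2 + ε^2*(2*M) + ε^3*(6*M^2) := by
          refine helper_abs_add e4 ?_
          rw [abs_mul, abs_of_nonneg (by positivity : (0:ℝ) ≤ ε^3)]
          exact mul_le_mul_of_nonneg_left (hWb w hw) (by positivity)
        have e7 : |ε^6*(G w^2 + FF w)^2| ≤ ε^6*(6*M^2)^2 := by
          rw [abs_mul, abs_of_nonneg (by positivity : (0:ℝ) ≤ ε^6)]
          exact mul_le_mul_of_nonneg_left (helper_abs_pow (hWb w hw) 2) (by positivity)
        have hB : |2*ε*(x w - ε - ε^2*G w - ε^3*(G w^2 + FF w) - ε^4*P w)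
              + (x w - ε - ε^2*G w - ε^3*(G w^2 + FF w))
                *(x w - ε + ε^2*G w + ε^3*(G w^2 + FF w))
              + ε^6*(G w^2 + FF w)^2|
            ≤ 2*ε*(50000*M^4*ε^5) + 2200*M^3*ε^4*(24*M*ε^2 + ε^2*(2*M) + ε^3*(6*M^2))
              + ε^6*(6*M^2)^2 :=
          helper_abs_add (helper_abs_add e5 (helper_abs_mul_le (h3b w hw) e6)) e7
        have := helper_abs_add (helper_abs_mul_le (hMfb w hw) hC)
          (helper_abs_mul_le (hMgb w hw) hB)
        have h2 : M*(3*ε^2*(2200*M^3*ε^4) + 3*ε*(160*M^2*ε^3*(24*M*ε^2 + ε^2*(2*M)))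
              + (24*M*ε^2)^3)
            + M*(2*ε*(50000*M^4*ε^5) + 2200*M^3*ε^4*(24*M*ε^2 + ε^2*(2*M) + ε^3*(6*M^2))
              + ε^6*(6*M^2)^2)
            ≤ 250000*M^6*ε^6 := by
          nlinarith [mono 4 6 6 6 (by norm_num) (by norm_num),
            mono 5 6 6 6 (by norm_num) (by norm_num),
            mono 6 7 6 6 (by norm_num) (by norm_num)]
        linarith
      have := helper_abs_integral_le hbnd h1I
      linarith
    rw [hx1] at h5
    have hswap : ε - ε - ε^2*G 1 - ε^3*(G 1^2 + FF 1) - ε^4*P 1 - ε^5*Q 1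
        = -(ε^2*G 1 + ε^3*(G 1^2 + FF 1) + ε^4*P 1 + ε^5*Q 1) := by ring
    rw [hswap, abs_neg] at h5
    exact h5
  -- peel off the coefficients one by one
  have hεmono : ∀ ε : ℝ, 0 < ε → ε < ε₀ → ∀ (i j : ℕ), i ≤ j → ε^j ≤ ε^i := by
    intro ε hε hεlt i j hij
    have hε1 : ε ≤ 1 := le_of_lt (lt_of_lt_of_le hεlt ((min_le_right _ _).trans (min_le_left _ _)))
    exact pow_le_pow_of_le_one hε.le hε1 hij
  have hG1 : G 1 = 0 := by
    apply helper_eq_zero (C := |G 1^2 + FF 1| + |P 1| + |Q 1| + 500000*M^6) hε₀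
    intro ε hε hεlt
    have hm := helper_peel4 (master ε hε hεlt)
    simp only [abs_mul, abs_pow, abs_of_pos hε] at hm
    have c1 : 500000*M^6*ε^6 ≤ 500000*M^6*ε^3 :=
      mul_le_mul_of_nonneg_left (hεmono ε hε hεlt 3 6 (by norm_num)) (by positivity)
    have c2 : ε^4*|P 1| ≤ ε^3*|P 1| :=
      mul_le_mul_of_nonneg_right (hεmono ε hε hεlt 3 4 (by norm_num)) (abs_nonneg _)
    have c3 : ε^5*|Q 1| ≤ ε^3*|Q 1| :=
      mul_le_mul_of_nonneg_right (hεmono ε hε hεlt 3 5 (by norm_num)) (abs_nonneg _)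
    have key : ε^2*|G 1| ≤ ε^2*((|G 1^2 + FF 1| + |P 1| + |Q 1| + 500000*M^6)*ε) := by
      nlinarith [hm, c1, c2, c3]
    exact (mul_le_mul_iff_right₀ (by positivity : (0:ℝ) < ε^2)).mp key
  have hFF1 : FF 1 = 0 := by
    apply helper_eq_zero (C := |P 1| + |Q 1| + 500000*M^6) hε₀
    intro ε hε hεlt
    have hm0 : |ε^3*FF 1 + ε^4*P 1 + ε^5*Q 1| ≤ 500000*M^6*ε^6 := by
      have h := master ε hε hεlt
      convert h using 2
      rw [hG1]
      ring
    have hm := helper_peel3 hm0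
    simp only [abs_mul, abs_pow, abs_of_pos hε] at hm
    have c1 : 500000*M^6*ε^6 ≤ 500000*M^6*ε^4 :=
      mul_le_mul_of_nonneg_left (hεmono ε hε hεlt 4 6 (by norm_num)) (by positivity)
    have c3 : ε^5*|Q 1| ≤ ε^4*|Q 1| :=
      mul_le_mul_of_nonneg_right (hεmono ε hε hεlt 4 5 (by norm_num)) (abs_nonneg _)
    have key : ε^3*|FF 1| ≤ ε^3*((|P 1| + |Q 1| + 500000*M^6)*ε) := by
      nlinarith [hm, c1, c3]
    exact (mul_le_mul_iff_right₀ (by positivity : (0:ℝ) < ε^3)).mp key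
  have hP1z : P 1 = 0 := by
    apply helper_eq_zero (C := |Q 1| + 500000*M^6) hε₀
    intro ε hε hεlt
    have hm0 : |ε^4*P 1 + ε^5*Q 1| ≤ 500000*M^6*ε^6 := by
      have h := master ε hε hεlt
      convert h using 2
      rw [hG1, hFF1]
      ring
    have hm := helper_peel2 hm0
    simp only [abs_mul, abs_pow, abs_of_pos hε] at hm
    have c1 : 500000*M^6*ε^6 ≤ 500000*M^6*ε^5 :=
      mul_le_mul_of_nonneg_left (hεmono ε hε hεlt 5 6 (by norm_num)) (by positivity)
    have key : ε^4*|P 1| ≤ ε^4*((|Q 1| + 500000*M^6)*ε) := by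
      nlinarith [hm, c1]
    exact (mul_le_mul_iff_right₀ (by positivity : (0:ℝ) < ε^4)).mp key
  have hQ1z : Q 1 = 0 := by
    apply helper_eq_zero (C := 500000*M^6) hε₀
    intro ε hε hεlt
    have hm0 : |ε^5*Q 1| ≤ 500000*M^6*ε^6 := by
      have h := master ε hε hεlt
      convert h using 2
      rw [hG1, hFF1, hP1z]
      ring
    simp only [abs_mul, abs_pow, abs_of_pos hε] at hm0
    have c1 : 500000*M^6*ε^6 ≤ 500000*M^6*ε^5*ε := by
      have := hεmono ε hε hεlt 5 6 (by norm_num)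
      nlinarith [pow_pos hε 5]
    have key : ε^5*|Q 1| ≤ ε^5*(500000*M^6*ε) := by nlinarith [hm0, c1]
    exact (mul_le_mul_iff_right₀ (by positivity : (0:ℝ) < ε^5)).mp key
  -- integration by parts identities
  have h1I : (1:ℝ) ∈ Set.Icc (-1:ℝ) 1 := ⟨by norm_num, le_refl _⟩
  have hG0 : G (-1) = 0 := intervalIntegral.integral_same
  have hFF0 : FF (-1) = 0 := intervalIntegral.integral_same
  have iccII : ∀ (h : ℝ → ℝ), ContinuousOn h (Set.Icc (-1:ℝ) 1) →
      IntervalIntegrable h volume (-1) 1 := fun h hc =>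
    (hc.mono (Set.uIcc_subset_Icc ⟨le_refl _, by norm_num⟩ h1I)).intervalIntegrable
  have hIoo2 : Set.Icc (-1:ℝ) 1 ⊆ Set.Ioo (-1-r/2) (1+r/2) :=
    fun y hy => ⟨by linarith [hy.1], by linarith [hy.2]⟩
  have hIoo : Set.Icc (-1:ℝ) 1 ⊆ Set.Ioo (-1-r) (1+r) :=
    fun y hy => ⟨by linarith [hy.1], by linarith [hy.2]⟩
  -- ∫ g G^2 = 0
  have hgG2 : (∫ s in (-1:ℝ)..1, g s*G s^2) = 0 := by
    have h := helper_integral_deriv (φ := fun u => G u^3) (φ' := fun u => 3*(g u*G u^2)) h1I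
      (fun u hu => by
        have := (hGd u (hIoo hu)).fun_pow 3
        exact this.congr_deriv (by push_cast; ring))
      (continuousOn_const.mul (hgcI.mul (hGcI.pow 2)))
    rw [intervalIntegral.integral_const_mul, hG1, hG0] at h
    norm_num at h
    exact h
  -- ∫ g G^3 = 0
  have hgG3 : (∫ s in (-1:ℝ)..1, g s*G s^3) = 0 := by
    have h := helper_integral_deriv (φ := fun u => G u^4) (φ' := fun u => 4*(g u*G u^3)) h1I
      (fun u hu => by
        have := (hGd u (hIoo hu)).fun_pow 4
        exact this.congr_deriv (by push_cast; ring))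
      (continuousOn_const.mul (hgcI.mul (hGcI.pow 3)))
    rw [intervalIntegral.integral_const_mul, hG1, hG0] at h
    norm_num at h
    exact h
  -- ∫ g FF = - ∫ f G
  have hgFF : (∫ s in (-1:ℝ)..1, g s*FF s) = -(∫ s in (-1:ℝ)..1, f s*G s) := by
    have h := helper_integral_deriv (φ := fun u => G u*FF u)
      (φ' := fun u => g u*FF u + G u*f u) h1I
      (fun u hu => (hGd u (hIoo hu)).mul (hFFd u (hIoo hu)))
      ((hgcI.mul hFFcI).add (hGcI.mul hfcI))
    rw [intervalIntegral.integral_add (iccII _ (hgcI.fun_mul hFFcI)) (iccII _ (hGcI.fun_mul hfcI)),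
      hG1, hG0] at h
    have hcomm : (∫ s in (-1:ℝ)..1, G s*f s) = ∫ s in (-1:ℝ)..1, f s*G s :=
      intervalIntegral.integral_congr (fun u _ => mul_comm (G u) (f u))
    rw [hcomm] at h
    linarith [h]
  -- ∫ f FF = 0
  have hfFF : (∫ s in (-1:ℝ)..1, f s*FF s) = 0 := by
    have h := helper_integral_deriv (φ := fun u => FF u*FF u)
      (φ' := fun u => f u*FF u + FF u*f u) h1I
      (fun u hu => (hFFd u (hIoo hu)).mul (hFFd u (hIoo hu)))
      ((hfcI.mul hFFcI).add (hFFcI.mul hfcI))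
    rw [intervalIntegral.integral_add (iccII _ (hfcI.fun_mul hFFcI)) (iccII _ (hFFcI.fun_mul hfcI)),
      hFF1, hFF0] at h
    have hcomm : (∫ s in (-1:ℝ)..1, FF s*f s) = ∫ s in (-1:ℝ)..1, f s*FF s :=
      intervalIntegral.integral_congr (fun u _ => mul_comm (FF u) (f u))
    rw [hcomm] at h
    linarith [h]
  -- ∫ g (G FF) = -(1/2) ∫ f G^2
  have hgGFF : (∫ s in (-1:ℝ)..1, g s*(G s*FF s))
      = -(1/2)*(∫ s in (-1:ℝ)..1, f s*G s^2) := by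
    have h := helper_integral_deriv (φ := fun u => G u*(G u*FF u))
      (φ' := fun u => g u*(G u*FF u) + G u*(g u*FF u + G u*f u)) h1I
      (fun u hu => (hGd u (hIoo hu)).mul ((hGd u (hIoo hu)).mul (hFFd u (hIoo hu))))
      ((hgcI.mul (hGcI.mul hFFcI)).add
        (hGcI.mul ((hgcI.mul hFFcI).add (hGcI.mul hfcI))))
    rw [intervalIntegral.integral_congr
        (g := fun s => 2*(g s*(G s*FF s)) + f s*G s^2) (fun u _ => by ring),
      intervalIntegral.integral_add
        (iccII _ (continuousOn_const.fun_mul (hgcI.fun_mul (hGcI.fun_mul hFFcI))))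
        (iccII _ (hfcI.fun_mul (hGcI.fun_pow 2))),
      intervalIntegral.integral_const_mul, hG1, hG0] at h
    norm_num at h
    linarith [h]
  -- ∫ g P = -2 ∫ f G^2
  have hgP : (∫ s in (-1:ℝ)..1, g s*P s) = -2*(∫ s in (-1:ℝ)..1, f s*G s^2) := by
    have h := helper_integral_deriv (φ := fun u => G u*P u)
      (φ' := fun u => g u*P u + G u*(3*f u*G u + g u*(3*G u^2 + 2*FF u))) h1I
      (fun u hu => (hGd u (hIoo hu)).mul (hPd u (hIoo2 hu)))
      ((hgcI.mul hPcI).add (hGcI.mul (hPintc.mono hI2)))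
    rw [intervalIntegral.integral_congr
        (g := fun s => g s*P s + (3*(f s*G s^2) + (3*(g s*G s^3) + 2*(g s*(G s*FF s)))))
        (fun u _ => by ring),
      intervalIntegral.integral_add (iccII _ (hgcI.fun_mul hPcI))
        (iccII _ ((continuousOn_const.fun_mul (hfcI.fun_mul (hGcI.fun_pow 2))).fun_add
          ((continuousOn_const.fun_mul (hgcI.fun_mul (hGcI.fun_pow 3))).fun_add
            (continuousOn_const.fun_mul (hgcI.fun_mul (hGcI.fun_mul hFFcI)))))),
      intervalIntegral.integral_add (iccII _ (continuousOn_const.fun_mul (hfcI.fun_mul (hGcI.fun_pow 2))))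
        (iccII _ ((continuousOn_const.fun_mul (hgcI.fun_mul (hGcI.fun_pow 3))).fun_add
          (continuousOn_const.fun_mul (hgcI.fun_mul (hGcI.fun_mul hFFcI))))),
      intervalIntegral.integral_add (iccII _ (continuousOn_const.fun_mul (hgcI.fun_mul (hGcI.fun_pow 3))))
        (iccII _ (continuousOn_const.fun_mul (hgcI.fun_mul (hGcI.fun_mul hFFcI)))),
      intervalIntegral.integral_const_mul, intervalIntegral.integral_const_mul,
      intervalIntegral.integral_const_mul, hG1, hG0, hgG3, hgGFF] at h
    norm_num at h
    linarith [h]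
  -- P 1 = ∫ f G
  have hm1 : (∫ s in (-1:ℝ)..1, f s*G s) = 0 := by
    have hP1eq : P 1 = ∫ s in (-1:ℝ)..1, (3*f s*G s + g s*(3*G s^2 + 2*FF s)) := rfl
    rw [intervalIntegral.integral_congr
        (g := fun s => 3*(f s*G s) + (3*(g s*G s^2) + 2*(g s*FF s))) (fun u _ => by ring),
      intervalIntegral.integral_add (iccII _ (continuousOn_const.fun_mul (hfcI.fun_mul hGcI)))
        (iccII _ ((continuousOn_const.fun_mul (hgcI.fun_mul (hGcI.fun_pow 2))).fun_add
          (continuousOn_const.fun_mul (hgcI.fun_mul hFFcI)))),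
      intervalIntegral.integral_add (iccII _ (continuousOn_const.fun_mul (hgcI.fun_mul (hGcI.fun_pow 2))))
        (iccII _ (continuousOn_const.fun_mul (hgcI.fun_mul hFFcI))),
      intervalIntegral.integral_const_mul, intervalIntegral.integral_const_mul,
      intervalIntegral.integral_const_mul, hgG2, hgFF] at hP1eq
    rw [hP1z] at hP1eq
    linarith [hP1eq]
  -- Q 1 = ∫ f G^2
  have hm2 : (∫ s in (-1:ℝ)..1, f s*G s^2) = 0 := by
    have hQ1eq : Q 1 = ∫ s in (-1:ℝ)..1,
        (f s*(6*G s^2 + 3*FF s) + g s*(2*P s + 2*G s^3 + 2*G s*FF s)) := rfl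
    rw [intervalIntegral.integral_congr
        (g := fun s => 6*(f s*G s^2) + (3*(f s*FF s) + (2*(g s*P s)
          + (2*(g s*G s^3) + 2*(g s*(G s*FF s)))))) (fun u _ => by ring),
      intervalIntegral.integral_add (iccII _ (continuousOn_const.fun_mul (hfcI.fun_mul (hGcI.fun_pow 2))))
        (iccII _ ((continuousOn_const.fun_mul (hfcI.fun_mul hFFcI)).fun_add
          ((continuousOn_const.fun_mul (hgcI.fun_mul hPcI)).fun_add
            ((continuousOn_const.fun_mul (hgcI.fun_mul (hGcI.fun_pow 3))).fun_add
              (continuousOn_const.fun_mul (hgcI.fun_mul (hGcI.fun_mul hFFcI))))))),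
      intervalIntegral.integral_add (iccII _ (continuousOn_const.fun_mul (hfcI.fun_mul hFFcI)))
        (iccII _ ((continuousOn_const.fun_mul (hgcI.fun_mul hPcI)).fun_add
          ((continuousOn_const.fun_mul (hgcI.fun_mul (hGcI.fun_pow 3))).fun_add
            (continuousOn_const.fun_mul (hgcI.fun_mul (hGcI.fun_mul hFFcI)))))),
      intervalIntegral.integral_add (iccII _ (continuousOn_const.fun_mul (hgcI.fun_mul hPcI)))
        (iccII _ ((continuousOn_const.fun_mul (hgcI.fun_mul (hGcI.fun_pow 3))).fun_add
          (continuousOn_const.fun_mul (hgcI.fun_mul (hGcI.fun_mul hFFcI))))),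
      intervalIntegral.integral_add (iccII _ (continuousOn_const.fun_mul (hgcI.fun_mul (hGcI.fun_pow 3))))
        (iccII _ (continuousOn_const.fun_mul (hgcI.fun_mul (hGcI.fun_mul hFFcI)))),
      intervalIntegral.integral_const_mul, intervalIntegral.integral_const_mul,
      intervalIntegral.integral_const_mul, intervalIntegral.integral_const_mul,
      intervalIntegral.integral_const_mul, hfFF, hgP, hgG3, hgGFF] at hQ1eq
    rw [hQ1z] at hQ1eq
    linarith [hQ1eq]
  -- conclusion
  intro k hk
  interval_cases k
  · have heq : (∫ t in (-1:ℝ)..1, f t * (∫ s in (-1:ℝ)..t, g s)^0)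
        = ∫ t in (-1:ℝ)..1, f t :=
      intervalIntegral.integral_congr (fun t _ => by simp)
    rw [heq]
    exact hFF1
  · have heq : (∫ t in (-1:ℝ)..1, f t * (∫ s in (-1:ℝ)..t, g s)^1)
        = ∫ t in (-1:ℝ)..1, f t * G t :=
      intervalIntegral.integral_congr (fun t _ => by simp [hGdef])
    rw [heq]
    exact hm1
  · have heq : (∫ t in (-1:ℝ)..1, f t * (∫ s in (-1:ℝ)..t, g s)^2)
        = ∫ t in (-1:ℝ)..1, f t * G t^2 :=
      intervalIntegral.integral_congr (fun t _ => by simp [hGdef])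
    rw [heq]
    exact hm2
end

section
/- For f(θ) = sin θ − sin 2θ + sin 3θ and G(θ) = ∫_0^θ (cos s + 2 cos 2s) ds, the moments over [0, 2π] satisfy m_0 = ∫_0^{2π} f(θ) dθ = 0, m_1 = ∫_0^{2π} f(θ) G(θ) dθ = 0, m_2 = ∫_0^{2π} f(θ) G(θ)^2 dθ = 0, while m_3 = ∫_0^{2π} f(θ) G(θ)^3 dθ = π/2 ≠ 0. -/
open MeasureTheory intervalIntegral Real

private theorem hG_GGS (t : ℝ) :
    (∫ s in (0:ℝ)..t, (cos s + 2 * cos (2 * s))) = sin t + sin (2 * t) := by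
  have h2 : ∀ x : ℝ, HasDerivAt (fun y : ℝ => sin y + sin (2 * y)) (cos x + 2 * cos (2 * x)) x := by
    intro x
    have hs := Real.hasDerivAt_sin x
    have h2s : HasDerivAt (fun y : ℝ => sin (2 * y)) (2 * cos (2 * x)) x := by
      simpa [mul_comm] using (((hasDerivAt_id x).const_mul 2).sin)
    exact hs.add h2s
  rw [integral_eq_sub_of_hasDerivAt (fun x _ => h2 x)
    ((Continuous.intervalIntegrable (by fun_prop) _ _))]
  simp


private theorem mom0 : (∫ θ in (0:ℝ)..(2*π), (sin θ - sin (2*θ) + sin (3*θ))) = 0 := by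
  have key : ∀ t : ℝ, HasDerivAt (fun x : ℝ => ((0 : ℝ) + ((1 : ℝ) * cos x ^ 2 + ((-4 : ℝ)/3) * cos x ^ 3)))
      ((sin t - sin (2*t) + sin (3*t))) t := by
    intro t
    have hc := Real.hasDerivAt_cos t
    have H := ((((hc.pow 2).const_mul (1 : ℝ)).add ((hc.pow 3).const_mul ((-4 : ℝ)/3))).const_add (0 : ℝ))
    refine H.congr_deriv ?_
    symm
    simp only [Real.sin_two_mul, Real.sin_three_mul]
    push_cast
    norm_num
    linear_combination (((-4 : ℝ)) * sin t ^ 1 * cos t ^ 0) * (Real.sin_sq_add_cos_sq t)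
  rw [integral_eq_sub_of_hasDerivAt (fun x _ => key x)
    ((Continuous.intervalIntegrable (by fun_prop) _ _))]
  norm_num [Real.sin_two_pi, Real.cos_two_pi]


private theorem mom1 : (∫ θ in (0:ℝ)..(2*π), (sin θ - sin (2*θ) + sin (3*θ)) * (sin θ + sin (2*θ))) = 0 := by
  have key : ∀ t : ℝ, HasDerivAt (fun x : ℝ => sin x * (((2 : ℝ)/5) + (((6 : ℝ)/5) * cos x ^ 2 + ((-8 : ℝ)/5) * cos x ^ 4)))
      ((sin t - sin (2*t) + sin (3*t)) * (sin t + sin (2*t))) t := by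
    intro t
    have hc := Real.hasDerivAt_cos t
    have H := ((Real.hasDerivAt_sin t).mul ((((hc.pow 2).const_mul ((6 : ℝ)/5)).add ((hc.pow 4).const_mul ((-8 : ℝ)/5))).const_add ((2 : ℝ)/5)))
    refine H.congr_deriv ?_
    symm
    simp only [Real.sin_two_mul, Real.sin_three_mul]
    push_cast
    norm_num
    linear_combination ((((2 : ℝ)/5)) * sin t ^ 0 * cos t ^ 1 + (((8 : ℝ)/5)) * sin t ^ 0 * cos t ^ 3 + ((-4 : ℝ)) * sin t ^ 2 * cos t ^ 0 + ((-8 : ℝ)) * sin t ^ 2 * cos t ^ 1) * (Real.sin_sq_add_cos_sq t)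
  rw [integral_eq_sub_of_hasDerivAt (fun x _ => key x)
    ((Continuous.intervalIntegrable (by fun_prop) _ _))]
  norm_num [Real.sin_two_pi, Real.cos_two_pi]


private theorem mom2 : (∫ θ in (0:ℝ)..(2*π), (sin θ - sin (2*θ) + sin (3*θ)) * (sin θ + sin (2*θ)) ^ 2) = 0 := by
  have key : ∀ t : ℝ, HasDerivAt (fun x : ℝ => ((0 : ℝ) + ((1 : ℝ) * cos x ^ 2 + ((4 : ℝ)/3) * cos x ^ 3 + ((-5 : ℝ)/2) * cos x ^ 4 + (-4 : ℝ) * cos x ^ 5 + ((4 : ℝ)/3) * cos x ^ 6 + ((16 : ℝ)/7) * cos x ^ 7)))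
      ((sin t - sin (2*t) + sin (3*t)) * (sin t + sin (2*t)) ^ 2) t := by
    intro t
    have hc := Real.hasDerivAt_cos t
    have H := ((((((((hc.pow 2).const_mul (1 : ℝ)).add ((hc.pow 3).const_mul ((4 : ℝ)/3))).add ((hc.pow 4).const_mul ((-5 : ℝ)/2))).add ((hc.pow 5).const_mul (-4 : ℝ))).add ((hc.pow 6).const_mul ((4 : ℝ)/3))).add ((hc.pow 7).const_mul ((16 : ℝ)/7))).const_add (0 : ℝ))
    refine H.congr_deriv ?_
    symm
    simp only [Real.sin_two_mul, Real.sin_three_mul]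
    push_cast
    norm_num
    linear_combination (((-2 : ℝ)) * sin t ^ 1 * cos t ^ 1 + ((-4 : ℝ)) * sin t ^ 1 * cos t ^ 2 + ((8 : ℝ)) * sin t ^ 1 * cos t ^ 3 + ((16 : ℝ)) * sin t ^ 1 * cos t ^ 4 + ((-4 : ℝ)) * sin t ^ 3 * cos t ^ 0 + ((-16 : ℝ)) * sin t ^ 3 * cos t ^ 1 + ((-16 : ℝ)) * sin t ^ 3 * cos t ^ 2) * (Real.sin_sq_add_cos_sq t)
  rw [integral_eq_sub_of_hasDerivAt (fun x _ => key x)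
    ((Continuous.intervalIntegrable (by fun_prop) _ _))]
  norm_num [Real.sin_two_pi, Real.cos_two_pi]


private theorem mom3 : (∫ θ in (0:ℝ)..(2*π), (sin θ - sin (2*θ) + sin (3*θ)) * (sin θ + sin (2*θ)) ^ 3) = π / 2 := by
  have key : ∀ t : ℝ, HasDerivAt (fun x : ℝ => ((1 : ℝ)/4) * x + sin x * (((26 : ℝ)/63) + (((1 : ℝ)/4) * cos x ^ 1 + ((76 : ℝ)/63) * cos x ^ 2 + ((17 : ℝ)/6) * cos x ^ 3 + ((-2 : ℝ)/21) * cos x ^ 4 + ((-22 : ℝ)/3) * cos x ^ 5 + ((-320 : ℝ)/63) * cos x ^ 6 + (4 : ℝ) * cos x ^ 7 + ((32 : ℝ)/9) * cos x ^ 8)))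
      ((sin t - sin (2*t) + sin (3*t)) * (sin t + sin (2*t)) ^ 3) t := by
    intro t
    have hc := Real.hasDerivAt_cos t
    have H := (((hasDerivAt_id t).const_mul ((1 : ℝ)/4)).add ((Real.hasDerivAt_sin t).mul ((((((((((hc.pow 1).const_mul ((1 : ℝ)/4)).add ((hc.pow 2).const_mul ((76 : ℝ)/63))).add ((hc.pow 3).const_mul ((17 : ℝ)/6))).add ((hc.pow 4).const_mul ((-2 : ℝ)/21))).add ((hc.pow 5).const_mul ((-22 : ℝ)/3))).add ((hc.pow 6).const_mul ((-320 : ℝ)/63))).add ((hc.pow 7).const_mul (4 : ℝ))).add ((hc.pow 8).const_mul ((32 : ℝ)/9))).const_add ((26 : ℝ)/63))))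
    refine H.congr_deriv ?_
    symm
    simp only [Real.sin_two_mul, Real.sin_three_mul]
    push_cast
    norm_num
    linear_combination ((((1 : ℝ)/4)) * sin t ^ 0 * cos t ^ 0 + (((26 : ℝ)/63)) * sin t ^ 0 * cos t ^ 1 + (((1 : ℝ)/2)) * sin t ^ 0 * cos t ^ 2 + (((34 : ℝ)/21)) * sin t ^ 0 * cos t ^ 3 + (((10 : ℝ)/3)) * sin t ^ 0 * cos t ^ 4 + (((32 : ℝ)/21)) * sin t ^ 0 * cos t ^ 5 + ((-4 : ℝ)) * sin t ^ 0 * cos t ^ 6 + (((-32 : ℝ)/9)) * sin t ^ 0 * cos t ^ 7 + ((-2 : ℝ)) * sin t ^ 2 * cos t ^ 1 + ((-8 : ℝ)) * sin t ^ 2 * cos t ^ 2 + ((32 : ℝ)) * sin t ^ 2 * cos t ^ 4 + ((32 : ℝ)) * sin t ^ 2 * cos t ^ 5 + ((-4 : ℝ)) * sin t ^ 4 * cos t ^ 0 + ((-24 : ℝ)) * sin t ^ 4 * cos t ^ 1 + ((-48 : ℝ)) * sin t ^ 4 * cos t ^ 2 + ((-32 : ℝ)) * sin t ^ 4 * cos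 t ^ 3) * (Real.sin_sq_add_cos_sq t)
  rw [integral_eq_sub_of_hasDerivAt (fun x _ => key x)
    ((Continuous.intervalIntegrable (by fun_prop) _ _))]
  norm_num [Real.sin_two_pi, Real.cos_two_pi]
  ring_nf


/-- For `f(θ) = sin θ − sin 2θ + sin 3θ` and `G(θ) = ∫_0^θ (cos s + 2 cos 2s) ds`,
the moments over `[0, 2π]` satisfy `m_0 = m_1 = m_2 = 0` while `m_3 = π/2 ≠ 0`. -/
theorem moments_example_GGS :
    (∫ θ in (0 : ℝ)..(2 * π), (sin θ - sin (2 * θ) + sin (3 * θ))) = 0 ∧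
    (∫ θ in (0 : ℝ)..(2 * π), (sin θ - sin (2 * θ) + sin (3 * θ)) *
      (∫ s in (0 : ℝ)..θ, (cos s + 2 * cos (2 * s)))) = 0 ∧
    (∫ θ in (0 : ℝ)..(2 * π), (sin θ - sin (2 * θ) + sin (3 * θ)) *
      (∫ s in (0 : ℝ)..θ, (cos s + 2 * cos (2 * s))) ^ 2) = 0 ∧
    (∫ θ in (0 : ℝ)..(2 * π), (sin θ - sin (2 * θ) + sin (3 * θ)) *
      (∫ s in (0 : ℝ)..θ, (cos s + 2 * cos (2 * s))) ^ 3) = π / 2 ∧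
    (π / 2 : ℝ) ≠ 0 := by
  refine ⟨mom0, ?_, ?_, ?_, by positivity⟩ <;>
  · simp only [hG_GGS]
    first | exact mom1 | exact mom2 | exact mom3
end

section
/- Let n be a positive even integer, g(t) = t^{n-1}, and let f(t) = Σ_{j=0}^d a_j t^j be a real polynomial written as f(t) = p(t^2) + t q(t^2) with p, q real polynomials, such that the even part t ↦ p(t^2) changes sign at most two times on [-1,1]. If the Abel equation x'(t) = f(t)x(t)^3 + g(t)x(t)^2 on [-1,1] has a center at x = 0, then m_k = ∫_{-1}^1 f(t)(G(t))^k dt = 0 for every integer k ≥ 0, where G(t) = ∫_{-1}^t g(s) ds = (t^n − 1)/n. -/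
open MeasureTheory intervalIntegral

/-- `h` does not change sign on the set `s`. -/
def NoSignChangeOn (h : ℝ → ℝ) (s : Set ℝ) : Prop :=
  (∀ t ∈ s, 0 ≤ h t) ∨ (∀ t ∈ s, h t ≤ 0)

/-- `h` changes sign at most two times on `[-1,1]`: the interval can be split into
at most three consecutive subintervals on each of which `h` does not change sign. -/
def ChangesSignAtMostTwiceOn (h : ℝ → ℝ) : Prop :=
  ∃ c d : ℝ, -1 ≤ c ∧ c ≤ d ∧ d ≤ 1 ∧
    NoSignChangeOn h (Set.Icc (-1) c) ∧
    NoSignChangeOn h (Set.Icc c d) ∧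
    NoSignChangeOn h (Set.Icc d 1)

open Set

/-- FTC-2 workhorse: derivative of the integral within `Icc a b`. -/
lemma abel_hasDerivWithinAt_integral {h : ℝ → ℝ} {a b : ℝ}
    (hcont : ContinuousOn h (Set.Icc a b)) {t : ℝ} (ht : t ∈ Set.Icc a b) :
    HasDerivWithinAt (fun u => ∫ s in a..u, h s) (h t) (Set.Icc a b) t := by
  haveI : Fact (t ∈ Set.Icc a b) := ⟨ht⟩
  apply intervalIntegral.integral_hasDerivWithinAt_right
  · exact (hcont.mono (by rw [Set.uIcc_of_le ht.1]; exact Set.Icc_subset_Icc le_rfl ht.2)).intervalIntegrable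
  · exact hcont.stronglyMeasurableAtFilter_nhdsWithin measurableSet_Icc t
  · exact hcont t ht

/-- Integral equation from a derivative within `Icc`. -/
lemma abel_integral_eq {a b : ℝ} {x F : ℝ → ℝ}
    (hx : ∀ t ∈ Set.Icc a b, HasDerivWithinAt x (F t) (Set.Icc a b) t)
    (hF : ContinuousOn F (Set.Icc a b)) :
    ∀ t ∈ Set.Icc a b, x t = x a + ∫ s in a..t, F s := by
  intro t ht
  have hxc : ContinuousOn x (Set.Icc a b) := fun s hs => (hx s hs).continuousWithinAt
  have hIc : ContinuousOn (fun u => ∫ s in a..u, F s) (Set.Icc a b) :=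
    fun s hs => (abel_hasDerivWithinAt_integral hF hs).continuousWithinAt
  have key : ∀ u ∈ Set.Icc a b, (fun u => x u - ∫ s in a..u, F s) u
      = (fun u => x u - ∫ s in a..u, F s) a := by
    apply constant_of_has_deriv_right_zero (hxc.sub hIc)
    intro s hs
    have h1 : HasDerivWithinAt (fun u => x u - ∫ s in a..u, F s) (F s - F s)
        (Set.Icc a b) s := (hx s ⟨hs.1, hs.2.le⟩).sub
        (abel_hasDerivWithinAt_integral hF ⟨hs.1, hs.2.le⟩)
    rw [sub_self] at h1
    exact h1.mono_of_mem_nhdsWithin (Icc_mem_nhdsGE_of_mem hs)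
  have := key t ht
  simp only [intervalIntegral.integral_same, sub_zero] at this
  linarith [this]

/-- FTC-1 corollary. -/
lemma abel_integral_deriv {a b : ℝ} (hab : a ≤ b) {x F : ℝ → ℝ}
    (hx : ∀ t ∈ Set.Icc a b, HasDerivWithinAt x (F t) (Set.Icc a b) t)
    (hF : ContinuousOn F (Set.Icc a b)) :
    ∫ s in a..b, F s = x b - x a := by
  have := abel_integral_eq hx hF b ⟨hab, le_rfl⟩
  linarith [this]

/-- A nonnegative continuous function on `[a,b]` with zero integral vanishes. -/
lemma abel_eq_zero_of_integral_zero {a b : ℝ} (hab : a < b) {φ : ℝ → ℝ}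
    (hc : ContinuousOn φ (Set.Icc a b)) (hnn : ∀ t ∈ Set.Icc a b, 0 ≤ φ t)
    (hz : (∫ t in a..b, φ t) = 0) : ∀ t ∈ Set.Icc a b, φ t = 0 := by
  intro t ht
  by_contra hne
  have hpos : 0 < φ t := lt_of_le_of_ne (hnn t ht) (Ne.symm hne)
  have : 0 < ∫ t in a..b, φ t :=
    intervalIntegral.integral_pos hab hc (fun s hs => hnn s ⟨hs.1.le, hs.2⟩) ⟨t, ht, hpos⟩
  linarith

/-- Odd functions integrate to zero over `[-1,1]`. -/
lemma abel_integral_odd {F : ℝ → ℝ} (hodd : ∀ t, F (-t) = -F t) :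
    (∫ t in (-1 : ℝ)..1, F t) = 0 := by
  have h := intervalIntegral.integral_comp_neg (a := (-1:ℝ)) (b := 1) F
  simp only [neg_neg] at h
  have h2 : (∫ x in (-1:ℝ)..1, F (-x)) = ∫ x in (-1:ℝ)..1, -F x := by
    apply intervalIntegral.integral_congr
    intro s _
    exact hodd s
  rw [h2, intervalIntegral.integral_neg] at h
  linarith

/-- From "at most two sign changes on [-1,1]" and evenness, get a single split point on [0,1]. -/
lemma abel_sign_split {h : ℝ → ℝ} (heven : ∀ t, h (-t) = h t)
    (hs : ChangesSignAtMostTwiceOn h) :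
    ∃ r ∈ Set.Icc (0:ℝ) 1, NoSignChangeOn h (Set.Icc 0 r) ∧ NoSignChangeOn h (Set.Icc r 1) := by
  obtain ⟨c, d, hc1, hcd, hd1, H1, H2, H3⟩ := hs
  rcases le_or_gt 0 c with h0c | hc0
  · -- r = c; [0,c] ⊆ [-1,c]; [c,1] reflects into [-1,c]
    refine ⟨c, ⟨h0c, hcd.trans hd1⟩, ?_, ?_⟩
    · rcases H1 with H | H
      · exact Or.inl fun t ht => H t ⟨by linarith [ht.1], ht.2⟩
      · exact Or.inr fun t ht => H t ⟨by linarith [ht.1], ht.2⟩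
    · rcases H1 with H | H
      · refine Or.inl fun t ht => ?_
        have := H (-t) ⟨by linarith [ht.2], by linarith [ht.1]⟩
        rwa [heven t] at this
      · refine Or.inr fun t ht => ?_
        have := H (-t) ⟨by linarith [ht.2], by linarith [ht.1]⟩
        rwa [heven t] at this
  · rcases le_or_gt 0 d with h0d | hd0
    · -- r = d; [0,d] ⊆ [c,d]; [d,1] direct
      refine ⟨d, ⟨h0d, hd1⟩, ?_, H3⟩
      rcases H2 with H | H
      · exact Or.inl fun t ht => H t ⟨by linarith [ht.1], ht.2⟩
      · exact Or.inr fun t ht => H t ⟨by linarith [ht.1], ht.2⟩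
    · -- d < 0: r = -d; [0,-d] reflects into [d,1]; [-d,1] ⊆ [d,1]
      refine ⟨-d, ⟨by linarith, by linarith⟩, ?_, ?_⟩
      · rcases H3 with H | H
        · refine Or.inl fun t ht => ?_
          have := H (-t) ⟨by linarith [ht.2], by linarith [ht.1]⟩
          rwa [heven t] at this
        · refine Or.inr fun t ht => ?_
          have := H (-t) ⟨by linarith [ht.2], by linarith [ht.1]⟩
          rwa [heven t] at this
      · rcases H3 with H | H
        · exact Or.inl fun t ht => H t ⟨by linarith [ht.1], ht.2⟩
        · exact Or.inr fun t ht => H t ⟨by linarith [ht.1], ht.2⟩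

lemma abel_sign_vanish {h G : ℝ → ℝ} {r : ℝ} (hr : r ∈ Set.Icc (0:ℝ) 1)
    (hc : ContinuousOn h (Set.Icc 0 1)) (hGc : ContinuousOn G (Set.Icc 0 1))
    (hGm : StrictMonoOn G (Set.Icc 0 1))
    (h1 : NoSignChangeOn h (Set.Icc 0 r)) (h2 : NoSignChangeOn h (Set.Icc r 1))
    (hm0 : (∫ t in (0:ℝ)..1, h t) = 0) (hm1 : (∫ t in (0:ℝ)..1, h t * G t) = 0) :
    ∀ t ∈ Set.Icc (0:ℝ) 1, t ≠ r → h t = 0 := by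
  have hint_h : IntervalIntegrable h volume 0 1 :=
    (hc.mono (by rw [Set.uIcc_of_le (by norm_num : (0:ℝ) ≤ 1)])).intervalIntegrable
  have hint_hG : IntervalIntegrable (fun t => h t * G t) volume 0 1 :=
    ((hc.mul hGc).mono (by rw [Set.uIcc_of_le (by norm_num : (0:ℝ) ≤ 1)])).intervalIntegrable
  -- combined moment: ∫ h (G - G r) = 0
  have hcomb : (∫ t in (0:ℝ)..1, h t * (G t - G r)) = 0 := by
    have : (∫ t in (0:ℝ)..1, h t * (G t - G r))
        = (∫ t in (0:ℝ)..1, h t * G t) - G r * ∫ t in (0:ℝ)..1, h t := by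
      rw [← intervalIntegral.integral_const_mul, ← intervalIntegral.integral_sub hint_hG
        (hint_h.const_mul (G r))]
      apply intervalIntegral.integral_congr
      intro s _; ring
    rw [this, hm0, hm1]; ring
  have hGmono : ∀ s t : ℝ, s ∈ Set.Icc (0:ℝ) 1 → t ∈ Set.Icc (0:ℝ) 1 → s ≤ t → G s ≤ G t :=
    fun s t hs ht hst => hGm.monotoneOn hs ht hst
  have key : ∀ σ : ℝ, (σ = 1 ∨ σ = -1) →
      (∀ t ∈ Set.Icc (0:ℝ) 1, 0 ≤ σ * (h t * (G t - G r))) →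
      ∀ t ∈ Set.Icc (0:ℝ) 1, t ≠ r → h t = 0 := by
    intro σ hσ hnn t ht htr
    have hzero : ∀ t ∈ Set.Icc (0:ℝ) 1, σ * (h t * (G t - G r)) = 0 := by
      apply abel_eq_zero_of_integral_zero (by norm_num)
      · rcases hσ with h' | h' <;> subst h' <;>
          exact (continuousOn_const.mul (hc.mul (hGc.sub continuousOn_const)))
      · exact hnn
      · rw [intervalIntegral.integral_const_mul]
        rw [hcomb]; ring
    have h0 := hzero t ht
    have hGne : G t ≠ G r := fun hEq => htr (hGm.injOn ht hr hEq)
    have : h t * (G t - G r) = 0 := by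
      rcases hσ with h' | h' <;> subst h' <;> linarith
    rcases mul_eq_zero.mp this with h' | h'
    · exact h'
    · exact absurd (by linarith : G t = G r) hGne
  rcases h1 with hp1 | hn1 <;> rcases h2 with hp2 | hn2
  · -- h ≥ 0 on [0,1]: use m0
    intro t ht _
    have : ∀ t ∈ Set.Icc (0:ℝ) 1, h t = 0 := by
      apply abel_eq_zero_of_integral_zero (by norm_num) hc _ hm0
      intro s hs
      rcases le_total s r with h' | h'
      · exact hp1 s ⟨hs.1, h'⟩
      · exact hp2 s ⟨h', hs.2⟩
    exact this t ht
  · -- h ≥ 0 then ≤ 0 : σ = -1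
    refine key (-1) (Or.inr rfl) ?_
    intro s hs
    rcases le_total s r with h' | h'
    · have := hp1 s ⟨hs.1, h'⟩
      have hG := hGmono s r ⟨hs.1, h'.trans hr.2⟩ hr h'
      nlinarith
    · have := hn2 s ⟨h', hs.2⟩
      have hG := hGmono r s hr ⟨hr.1.trans h', hs.2⟩ h'
      nlinarith
  · -- h ≤ 0 then ≥ 0 : σ = 1
    refine key 1 (Or.inl rfl) ?_
    intro s hs
    rcases le_total s r with h' | h'
    · have := hn1 s ⟨hs.1, h'⟩
      have hG := hGmono s r ⟨hs.1, h'.trans hr.2⟩ hr h'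
      nlinarith
    · have := hp2 s ⟨h', hs.2⟩
      have hG := hGmono r s hr ⟨hr.1.trans h', hs.2⟩ h'
      nlinarith
  · -- h ≤ 0 on [0,1]
    intro t ht _
    have : ∀ t ∈ Set.Icc (0:ℝ) 1, -h t = 0 := by
      apply abel_eq_zero_of_integral_zero (by norm_num) hc.neg
      · intro s hs
        rcases le_total s r with h' | h'
        · simpa using hn1 s ⟨hs.1, h'⟩
        · simpa using hn2 s ⟨h', hs.2⟩
      · simp only [Pi.neg_apply]; rw [intervalIntegral.integral_neg, hm0]; ring
    have := this t ht; linarith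

lemma abel_poly_zero (p : Polynomial ℝ) {r : ℝ}
    (hz : ∀ t ∈ Set.Icc (0:ℝ) 1, t ≠ r → p.eval (t^2) = 0) : p = 0 := by
  apply p.eq_zero_of_infinite_isRoot
  have hS : (Set.Icc (1/2 : ℝ) 1 \ {r}).Infinite :=
    (Set.Icc_infinite (by norm_num)).diff (Set.finite_singleton r)
  have himg : ((fun t => t^2) '' (Set.Icc (1/2 : ℝ) 1 \ {r})).Infinite := by
    apply hS.image
    intro a ha b hb hab
    simp only [Set.mem_diff, Set.mem_Icc] at ha hb
    have hab' : a^2 = b^2 := hab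
    nlinarith [ha.1.1, hb.1.1, hab']
  apply himg.mono
  rintro x ⟨t, ⟨⟨ht1, ht2⟩, htr⟩, rfl⟩
  exact hz t ⟨by linarith, ht2⟩ (by simpa using htr)

/-- Existence of a small solution of the Abel equation on `[-1,1]` with `x(-1) = ε`. -/
lemma abel_solution_exists (n : ℕ) {f : ℝ → ℝ} (hfc : Continuous f) {K : ℝ} (hK1 : 1 ≤ K)
    (hK : ∀ t ∈ Set.Icc (-1:ℝ) 1, |f t| ≤ K) {ε : ℝ} (hε : 0 < ε) (hε1 : ε ≤ 1)
    (hεK : 48 * K * ε ≤ 1) :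
    ∃ x : ℝ → ℝ, x (-1) = ε ∧
      (∀ t ∈ Set.Icc (-1:ℝ) 1,
        HasDerivWithinAt x (f t * x t ^ 3 + t ^ (n-1) * x t ^ 2) (Set.Icc (-1:ℝ) 1) t) ∧
      (∀ t ∈ Set.Icc (-1:ℝ) 1, |x t - ε| ≤ 24 * K * ε ^ 2) := by
  set c : ℝ → ℝ := fun u => max (min u (2*ε)) 0 with hc_def
  have hc_mem : ∀ u, 0 ≤ c u ∧ c u ≤ 2*ε := by
    intro u
    refine ⟨le_max_right _ _, max_le (min_le_right _ _) (by positivity)⟩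
  have hc_lip : ∀ u w, |c u - c w| ≤ |u - w| := by
    intro u w
    calc |c u - c w| ≤ |min u (2*ε) - min w (2*ε)| := abs_max_sub_max_le_abs _ _ _
    _ ≤ max |u - w| |2*ε - 2*ε| := abs_min_sub_min_le_max _ _ _ _
    _ = |u - w| := by simp
  have hc_id : ∀ u, 0 ≤ u → u ≤ 2*ε → c u = u := by
    intro u h0 h2
    simp [hc_def, min_eq_left h2, max_eq_left h0]
  set v : ℝ → ℝ → ℝ := fun t u => f t * (c u) ^ 3 + t ^ (n-1) * (c u) ^ 2 with hv_def
  have hgb : ∀ t : ℝ, t ∈ Set.Icc (-1:ℝ) 1 → |t ^ (n-1)| ≤ 1 := by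
    intro t ht
    rw [abs_pow]
    exact pow_le_one₀ (abs_nonneg t) (abs_le.mpr ⟨ht.1, ht.2⟩)
  have hvb : ∀ t ∈ Set.Icc (-1:ℝ) 1, ∀ u : ℝ, |v t u| ≤ 12 * K * ε ^ 2 := by
    intro t ht u
    have h1 := hc_mem u
    have h2 := hK t ht
    have h3 := hgb t ht
    have habs : |v t u| ≤ |f t| * |c u| ^ 3 + |t ^ (n-1)| * |c u| ^ 2 := by
      calc |v t u| ≤ |f t * (c u)^3| + |t ^ (n-1) * (c u)^2| := abs_add_le _ _
      _ = |f t| * |c u| ^ 3 + |t ^ (n-1)| * |c u| ^ 2 := by simp [abs_mul, abs_pow]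
    rw [abs_of_nonneg h1.1] at habs
    have hcu3 : (c u)^3 ≤ 8 * ε^3 := by
      calc (c u)^3 ≤ (2*ε)^3 := pow_le_pow_left₀ h1.1 h1.2 3
      _ = 8 * ε^3 := by ring
    have hcu2 : (c u)^2 ≤ 4 * ε^2 := by
      calc (c u)^2 ≤ (2*ε)^2 := pow_le_pow_left₀ h1.1 h1.2 2
      _ = 4 * ε^2 := by ring
    have := habs
    nlinarith [abs_nonneg (f t), abs_nonneg (t ^ (n-1)), pow_nonneg h1.1 3, pow_nonneg h1.1 2,
      mul_le_mul h2 hcu3 (pow_nonneg h1.1 3) (by linarith : (0:ℝ) ≤ K),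
      mul_le_mul h3 hcu2 (pow_nonneg h1.1 2) zero_le_one]
  have hlip : ∀ t ∈ Set.Icc (-1:ℝ) 1, ∀ u w : ℝ, |v t u - v t w| ≤ 16 * K * ε * |u - w| := by
    intro t ht u w
    have h1 := hc_mem u
    have h2 := hc_mem w
    have hcl := hc_lip u w
    have hfK := hK t ht
    have hgK := hgb t ht
    have key : v t u - v t w
        = (c u - c w) * (f t * ((c u)^2 + c u * c w + (c w)^2) + t ^ (n-1) * (c u + c w)) := by
      simp only [hv_def]; ring
    rw [key, abs_mul]
    have hb : |f t * ((c u)^2 + c u * c w + (c w)^2) + t ^ (n-1) * (c u + c w)| ≤ 16 * K * ε := by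
      have e1 : |f t * ((c u)^2 + c u * c w + (c w)^2)| ≤ K * (12 * ε^2) := by
        rw [abs_mul]
        have : |(c u)^2 + c u * c w + (c w)^2| ≤ 12 * ε^2 := by
          rw [abs_of_nonneg (by nlinarith [h1.1, h2.1])]
          nlinarith [h1.1, h1.2, h2.1, h2.2]
        exact mul_le_mul hfK this (abs_nonneg _) (by linarith)
      have e2 : |t ^ (n-1) * (c u + c w)| ≤ 1 * (4 * ε) := by
        rw [abs_mul]
        have : |c u + c w| ≤ 4 * ε := by
          rw [abs_of_nonneg (by linarith [h1.1, h2.1])]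
          linarith [h1.2, h2.2]
        exact mul_le_mul hgK this (abs_nonneg _) zero_le_one
      calc |f t * ((c u)^2 + c u * c w + (c w)^2) + t ^ (n-1) * (c u + c w)|
          ≤ |f t * ((c u)^2 + c u * c w + (c w)^2)| + |t ^ (n-1) * (c u + c w)| := abs_add_le _ _
      _ ≤ K * (12 * ε^2) + 1 * (4 * ε) := add_le_add e1 e2
      _ ≤ 16 * K * ε := by nlinarith
    calc |c u - c w| * |f t * ((c u)^2 + c u * c w + (c w)^2) + t ^ (n-1) * (c u + c w)|
        ≤ |u - w| * (16 * K * ε) := mul_le_mul hcl hb (abs_nonneg _) (abs_nonneg _)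
    _ = 16 * K * ε * |u - w| := by ring
  -- Picard-Lindelöf
  have hpl : IsPicardLindelof v (tmin := -1) (tmax := 1) ⟨-1, by norm_num, by norm_num⟩ ε
      (Real.toNNReal (24*K*ε^2)) 0 (Real.toNNReal (12*K*ε^2)) (Real.toNNReal (16*K*ε)) := by
    have e1 : ((Real.toNNReal (12*K*ε^2)) : ℝ) = 12*K*ε^2 := Real.coe_toNNReal _ (by positivity)
    have e2 : ((Real.toNNReal (24*K*ε^2)) : ℝ) = 24*K*ε^2 := Real.coe_toNNReal _ (by positivity)
    constructor
    · intro t ht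
      rw [lipschitzOnWith_iff_dist_le_mul]
      intro u _ w _
      rw [Real.dist_eq, Real.dist_eq, Real.coe_toNNReal _ (by positivity)]
      exact hlip t ht u w
    · intro u _
      exact ((hfc.mul continuous_const).add ((continuous_pow _).mul continuous_const)).continuousOn
    · intro t ht u _
      rw [Real.norm_eq_abs, e1]
      exact hvb t ht u
    · simp only [e1, e2, NNReal.coe_zero, sub_zero, tsub_zero]
      rw [show max ((1:ℝ) - (-1)) ((-1) - (-1)) = 2 by norm_num]
      nlinarith
  obtain ⟨x, hx0, hxd⟩ := hpl.exists_eq_forall_mem_Icc_hasDerivWithinAt₀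
  change x (-1) = ε at hx0
  -- continuity of x and of the vector field along x
  have hxc : ContinuousOn x (Set.Icc (-1:ℝ) 1) := fun s hs => (hxd s hs).continuousWithinAt
  have hcc : Continuous c := by
    apply Continuous.max _ continuous_const
    exact Continuous.min continuous_id continuous_const
  have hFc : ContinuousOn (fun t => v t (x t)) (Set.Icc (-1:ℝ) 1) := by
    apply ContinuousOn.add
    · exact (hfc.continuousOn.mul (((hcc.comp_continuousOn hxc)).pow 3))
    · exact ((continuous_pow (n-1)).continuousOn.mul (((hcc.comp_continuousOn hxc)).pow 2))
  -- a priori bound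
  have hbound : ∀ t ∈ Set.Icc (-1:ℝ) 1, |x t - ε| ≤ 24 * K * ε ^ 2 := by
    intro t ht
    have heq := abel_integral_eq hxd hFc t ht
    rw [hx0] at heq
    have : |x t - ε| = ‖∫ s in (-1:ℝ)..t, v s (x s)‖ := by
      rw [Real.norm_eq_abs]; congr 1; linarith
    rw [this]
    have hb := intervalIntegral.norm_integral_le_of_norm_le_const (C := 12*K*ε^2)
      (f := fun s => v s (x s)) (a := (-1:ℝ)) (b := t) ?_
    · calc ‖∫ s in (-1:ℝ)..t, v s (x s)‖ ≤ 12*K*ε^2 * |t - (-1)| := hb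
      _ ≤ 12*K*ε^2 * 2 := by
          have h2 : |t - (-1)| ≤ 2 := by rw [abs_le]; constructor <;> linarith [ht.1, ht.2]
          exact mul_le_mul_of_nonneg_left h2 (by positivity)
      _ = 24 * K * ε^2 := by ring
    · intro s hs
      rw [Real.norm_eq_abs]
      have hs' : s ∈ Set.Icc (-1:ℝ) 1 := by
        rcases le_total (-1:ℝ) t with h' | h'
        · rw [Set.uIoc_of_le h'] at hs
          exact ⟨hs.1.le, hs.2.trans ht.2⟩
        · rw [Set.uIoc_of_ge h'] at hs
          exact ⟨ht.1.trans hs.1.le, hs.2.trans (by norm_num)⟩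
      exact hvb s hs' (x s)
  -- de-truncation
  refine ⟨x, hx0, ?_, hbound⟩
  intro t ht
  have hb := hbound t ht
  have hx_mem : 0 ≤ x t ∧ x t ≤ 2*ε := by
    have h24 : 24 * K * ε^2 ≤ ε / 2 := by nlinarith
    rw [abs_le] at hb
    constructor <;> nlinarith [hb.1, hb.2]
  have := hxd t ht
  rwa [show v t (x t) = f t * x t ^ 3 + t ^ (n-1) * x t ^ 2 by
    simp only [hv_def]; rw [hc_id _ hx_mem.1 hx_mem.2]] at this

/-- Second-order estimate for small solutions. -/
lemma abel_refined (n : ℕ) (hn : 0 < n) (hneven : Even n) {f : ℝ → ℝ} (hfc : Continuous f)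
    {K : ℝ} (hK1 : 1 ≤ K) (hK : ∀ t ∈ Set.Icc (-1:ℝ) 1, |f t| ≤ K)
    {ε : ℝ} (hε : 0 < ε) (hε1 : ε ≤ 1) (hεK : 48 * K * ε ≤ 1)
    {x : ℝ → ℝ} (hx0 : x (-1) = ε)
    (hxd : ∀ t ∈ Set.Icc (-1:ℝ) 1,
      HasDerivWithinAt x (f t * x t ^ 3 + t ^ (n-1) * x t ^ 2) (Set.Icc (-1:ℝ) 1) t)
    (hxb : ∀ t ∈ Set.Icc (-1:ℝ) 1, |x t - ε| ≤ 24 * K * ε ^ 2) :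
    ∀ t ∈ Set.Icc (-1:ℝ) 1, |x t - ε - ε^2 * ((t^n - 1)/n)| ≤ 128 * K * ε ^ 3 := by
  have hxc : ContinuousOn x (Set.Icc (-1:ℝ) 1) := fun s hs => (hxd s hs).continuousWithinAt
  have hFc : ContinuousOn (fun t => f t * x t ^ 3 + t ^ (n-1) * x t ^ 2) (Set.Icc (-1:ℝ) 1) :=
    (hfc.continuousOn.mul (hxc.pow 3)).add ((continuous_pow (n-1)).continuousOn.mul (hxc.pow 2))
  intro t ht
  have heq := abel_integral_eq hxd hFc t ht
  rw [hx0] at heq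
  have hpow : (∫ s in (-1:ℝ)..t, s ^ (n-1)) = (t^n - 1)/n := by
    rw [integral_pow]
    have hsub : n - 1 + 1 = n := Nat.succ_pred_eq_of_pos hn
    rw [hsub, hneven.neg_one_pow]
    have hcast : ((n - 1 : ℕ) : ℝ) + 1 = (n : ℝ) := by exact_mod_cast congrArg (Nat.cast : ℕ → ℝ) hsub
    rw [hcast]
  have hint1 : IntervalIntegrable (fun s => f s * x s ^ 3 + s ^ (n-1) * x s ^ 2) volume (-1) t := by
    apply (hFc.mono _).intervalIntegrable
    rw [Set.uIcc_of_le ht.1]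
    exact Set.Icc_subset_Icc le_rfl ht.2
  have hint2 : IntervalIntegrable (fun s : ℝ => ε^2 * s ^ (n-1)) volume (-1) t :=
    (intervalIntegral.intervalIntegrable_pow _).const_mul _
  have key : x t - ε - ε^2 * ((t^n - 1)/n)
      = ∫ s in (-1:ℝ)..t, (f s * x s ^ 3 + s ^ (n-1) * x s ^ 2 - ε^2 * s ^ (n-1)) := by
    rw [intervalIntegral.integral_sub hint1 hint2, intervalIntegral.integral_const_mul, hpow]
    linarith [heq]
  rw [key]
  have hb := intervalIntegral.norm_integral_le_of_norm_le_const (C := 64*K*ε^3)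
    (f := fun s => f s * x s ^ 3 + s ^ (n-1) * x s ^ 2 - ε^2 * s ^ (n-1)) (a := (-1:ℝ)) (b := t) ?_
  · rw [← Real.norm_eq_abs]
    calc ‖_‖ ≤ 64*K*ε^3 * |t - (-1)| := hb
    _ ≤ 64*K*ε^3 * 2 := by
        have h2 : |t - (-1)| ≤ 2 := by rw [abs_le]; constructor <;> linarith [ht.1, ht.2]
        exact mul_le_mul_of_nonneg_left h2 (by positivity)
    _ = 128 * K * ε^3 := by ring
  · intro s hs
    have hs' : s ∈ Set.Icc (-1:ℝ) 1 := by
      rcases le_total (-1:ℝ) t with h' | h'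
      · rw [Set.uIoc_of_le h'] at hs
        exact ⟨hs.1.le, hs.2.trans ht.2⟩
      · rw [Set.uIoc_of_ge h'] at hs
        exact ⟨ht.1.trans hs.1.le, hs.2.trans (by norm_num)⟩
    rw [Real.norm_eq_abs]
    have hxs := hxb s hs'
    have hfs := hK s hs'
    have hgs : |s ^ (n-1)| ≤ 1 := by
      rw [abs_pow]
      exact pow_le_one₀ (abs_nonneg s) (abs_le.mpr ⟨hs'.1, hs'.2⟩)
    -- |x s| ≤ 3ε/2
    have h24 : 24 * K * ε^2 ≤ ε / 2 := by nlinarith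
    have hxabs : |x s| ≤ 3*ε/2 := by
      rw [abs_le] at hxs ⊢
      constructor <;> nlinarith [hxs.1, hxs.2]
    have step : f s * x s ^ 3 + s ^ (n-1) * x s ^ 2 - ε^2 * s ^ (n-1)
        = f s * x s ^ 3 + s ^ (n-1) * ((x s - ε) * (x s + ε)) := by ring
    rw [step]
    calc |f s * x s ^ 3 + s ^ (n-1) * ((x s - ε) * (x s + ε))|
        ≤ |f s * x s ^ 3| + |s ^ (n-1) * ((x s - ε) * (x s + ε))| := abs_add_le _ _
    _ = |f s| * |x s|^3 + |s ^ (n-1)| * (|x s - ε| * |x s + ε|) := by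
        simp [abs_mul, abs_pow]
    _ ≤ K * (3*ε/2)^3 + 1 * (24 * K * ε^2 * (5*ε/2)) := by
        have e1 : |f s| * |x s|^3 ≤ K * (3*ε/2)^3 := by
          apply mul_le_mul hfs _ (by positivity) (by linarith)
          exact pow_le_pow_left₀ (abs_nonneg _) hxabs 3
        have e2 : |s ^ (n-1)| * (|x s - ε| * |x s + ε|) ≤ 1 * (24 * K * ε^2 * (5*ε/2)) := by
          apply mul_le_mul hgs _ (by positivity) zero_le_one
          apply mul_le_mul hxs _ (abs_nonneg _) (by positivity)
          rw [abs_le] at hxabs ⊢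
          constructor <;> nlinarith [hxabs.1, hxabs.2]
        linarith
    _ ≤ 64 * K * ε^3 := by nlinarith [mul_nonneg (by linarith : (0:ℝ) ≤ K) (pow_nonneg hε.le 3)]

lemma abel_cube_diff {y b M R : ℝ} (hR : 0 ≤ R) (hyb : |y - b| ≤ R) (hy : |y| ≤ M) (hb : |b| ≤ M) :
    |y^3 - b^3| ≤ R * (3*M^2) := by
  have e : y^3 - b^3 = (y - b)*(y^2 + y*b + b^2) := by ring
  rw [e, abs_mul]
  apply mul_le_mul hyb _ (abs_nonneg _) hR
  calc |y^2 + y*b + b^2| ≤ |y|^2 + |y| * |b| + |b|^2 := by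
        calc |y^2 + y*b + b^2| ≤ |y^2 + y*b| + |b^2| := abs_add_le _ _
        _ ≤ |y^2| + |y * b| + |b^2| := by linarith [abs_add_le (y^2) (y*b)]
        _ = |y|^2 + |y| * |b| + |b|^2 := by rw [abs_mul, abs_pow, abs_pow]
  _ ≤ 3*M^2 := by nlinarith [abs_nonneg y, abs_nonneg b]

set_option maxHeartbeats 1000000 in
lemma abel_key (n : ℕ) (hn : 0 < n) (hneven : Even n) {f P : ℝ → ℝ} (hfc : Continuous f)
    (hPc : Continuous P) (hPf : ∀ t, f (-t) = 2 * P t - f t)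
    {K : ℝ} (hK1 : 1 ≤ K) (hK : ∀ t ∈ Set.Icc (-1:ℝ) 1, |f t| ≤ K)
    {ε : ℝ} (hε : 0 < ε) (hεK : 10000 * K * ε ≤ 1)
    {x : ℝ → ℝ} (hx0 : x (-1) = ε)
    (hxd : ∀ t ∈ Set.Icc (-1:ℝ) 1,
      HasDerivWithinAt x (f t * x t ^ 3 + t ^ (n-1) * x t ^ 2) (Set.Icc (-1:ℝ) 1) t)
    (hxb : ∀ t ∈ Set.Icc (-1:ℝ) 1, |x t - ε| ≤ 24 * K * ε ^ 2)
    (hret : x (-1) = x 1) :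
    |∫ t in (0:ℝ)..1, (ε^3 + ε^4 * ((t^n - 3)/n)) * P t| ≤ 30000 * K^3 * ε^5 := by
  have hK0 : (0:ℝ) < K := lt_of_lt_of_le one_pos hK1
  have hε1 : ε ≤ 1 := by nlinarith
  have hεK48 : 48 * K * ε ≤ 1 := by nlinarith
  have hKε : K * ε ≤ 1/10000 := by nlinarith
  have h24 : 24 * K * ε^2 ≤ ε / 2 := by nlinarith
  have hI01 : Set.Icc (0:ℝ) 1 ⊆ Set.Icc (-1:ℝ) 1 := fun s hs => ⟨by linarith [hs.1], hs.2⟩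
  have hnegmem : ∀ t ∈ Set.Icc (0:ℝ) 1, -t ∈ Set.Icc (-1:ℝ) 1 :=
    fun t ht => ⟨by linarith [ht.2], by linarith [ht.1]⟩
  have hodd : Odd (n - 1) := Nat.Even.sub_odd hn hneven odd_one
  have negg : ∀ t : ℝ, (-t) ^ (n-1) = -(t ^ (n-1)) := fun t => hodd.neg_pow t
  have hne' : ((n:ℝ)) ≥ 1 := by exact_mod_cast hn
  have hxc : ContinuousOn x (Set.Icc (-1:ℝ) 1) := fun s hs => (hxd s hs).continuousWithinAt
  have hyc : ContinuousOn (fun t => x (-t)) (Set.Icc (0:ℝ) 1) :=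
    hxc.comp continuous_neg.continuousOn hnegmem
  have hxc' : ContinuousOn x (Set.Icc (0:ℝ) 1) := hxc.mono hI01
  -- pointwise size bounds
  have hxabs : ∀ s ∈ Set.Icc (-1:ℝ) 1, |x s| ≤ 3*ε/2 := by
    intro s hs
    have := hxb s hs
    rw [abs_le] at this ⊢
    constructor <;> nlinarith [this.1, this.2]
  have hgb : ∀ t ∈ Set.Icc (-1:ℝ) 1, |t ^ (n-1)| ≤ 1 := by
    intro t ht
    rw [abs_pow]
    exact pow_le_one₀ (abs_nonneg t) (abs_le.mpr ⟨ht.1, ht.2⟩)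
  have hPK : ∀ t ∈ Set.Icc (0:ℝ) 1, |P t| ≤ K := by
    intro t ht
    have h1 := hK t (hI01 ht)
    have h2 := hK (-t) (hnegmem t ht)
    have h3 := hPf t
    have : P t = (f t + f (-t))/2 := by linarith
    rw [this, abs_div]
    rw [show |(2:ℝ)| = 2 by norm_num]
    have := abs_add_le (f t) (f (-t))
    linarith
  -- the weight functions
  set α : ℝ → ℝ := fun t => f t * (x t^2 + x t * x (-t) + x (-t)^2) + t^(n-1) * (x t + x (-t))
    with hα_def
  have hαc : ContinuousOn α (Set.Icc (0:ℝ) 1) := by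
    apply ContinuousOn.add
    · exact hfc.continuousOn.mul (((hxc'.pow 2).add ((hxc'.mul hyc))).add (hyc.pow 2))
    · exact (continuous_pow (n-1)).continuousOn.mul (hxc'.add hyc)
  set A : ℝ → ℝ := fun t => ∫ s in (0:ℝ)..t, α s with hA_def
  have hAd : ∀ t ∈ Set.Icc (0:ℝ) 1, HasDerivWithinAt A (α t) (Set.Icc 0 1) t :=
    fun t ht => abel_hasDerivWithinAt_integral hαc ht
  have hAc : ContinuousOn A (Set.Icc (0:ℝ) 1) := fun s hs => (hAd s hs).continuousWithinAt
  -- derivative of t ↦ x (-t)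
  have hyd : ∀ t ∈ Set.Icc (0:ℝ) 1, HasDerivWithinAt (fun t => x (-t))
      ((f (-t) * x (-t) ^ 3 + (-t) ^ (n-1) * x (-t) ^ 2) * (-1)) (Set.Icc 0 1) t := by
    intro t ht
    have h1 := hxd (-t) (hnegmem t ht)
    have h2 : HasDerivWithinAt (fun s : ℝ => -s) (-1) (Set.Icc (0:ℝ) 1) t :=
      (hasDerivAt_neg t).hasDerivWithinAt
    exact h1.comp t h2 hnegmem
  -- derivative of d = x - y
  have hdd : ∀ t ∈ Set.Icc (0:ℝ) 1, HasDerivWithinAt (fun t => x t - x (-t))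
      (α t * (x t - x (-t)) + 2 * P t * x (-t) ^ 3) (Set.Icc 0 1) t := by
    intro t ht
    have h1 := ((hxd t (hI01 ht)).mono hI01).sub (hyd t ht)
    have heqv : f t * x t ^ 3 + t ^ (n-1) * x t ^ 2
        - (f (-t) * x (-t) ^ 3 + (-t) ^ (n-1) * x (-t) ^ 2) * (-1)
        = α t * (x t - x (-t)) + 2 * P t * x (-t) ^ 3 := by
      rw [hPf t, negg t, hα_def]
      ring
    rwa [heqv] at h1
  -- derivative of W * d
  have hWd : ∀ t ∈ Set.Icc (0:ℝ) 1, HasDerivWithinAt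
      (fun t => Real.exp (-A t) * (x t - x (-t)))
      (Real.exp (-A t) * (2 * P t * x (-t) ^ 3)) (Set.Icc 0 1) t := by
    intro t ht
    have hE : HasDerivWithinAt (fun t => Real.exp (-A t)) (Real.exp (-A t) * (-α t))
        (Set.Icc 0 1) t := (hAd t ht).neg.exp
    have := hE.mul (hdd t ht)
    have heqv : Real.exp (-A t) * (-α t) * (x t - x (-t))
        + Real.exp (-A t) * (α t * (x t - x (-t)) + 2 * P t * x (-t) ^ 3)
        = Real.exp (-A t) * (2 * P t * x (-t) ^ 3) := by ring
    rwa [heqv] at this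
  -- FTC: the exact identity
  have hWcont : ContinuousOn (fun t => Real.exp (-A t) * (2 * P t * x (-t) ^ 3))
      (Set.Icc (0:ℝ) 1) := by
    apply ContinuousOn.mul
    · exact (hAc.neg).rexp
    · exact (continuousOn_const.mul hPc.continuousOn).mul (hyc.pow 3)
  have hIdent : (∫ t in (0:ℝ)..1, Real.exp (-A t) * (2 * P t * x (-t) ^ 3)) = 0 := by
    rw [abel_integral_deriv (by norm_num) hWd hWcont]
    have : x 1 - x (-(1:ℝ)) = 0 := by rw [← hret]; ring
    rw [this]
    rw [show -(0:ℝ) = 0 by norm_num]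
    simp
  -- now the estimates
  have hrefined := abel_refined n hn hneven hfc hK1 hK hε hε1 hεK48 hx0 hxd hxb
  have hG1b : ∀ t ∈ Set.Icc (0:ℝ) 1, |(t^n - 1)/(n:ℝ)| ≤ 2 := by
    intro t ht
    rw [abs_div]
    have h1 : |t^n - 1| ≤ 2 := by
      have h0 : (0:ℝ) ≤ t^n := pow_nonneg ht.1 n
      have h2 : t^n ≤ 1 := pow_le_one₀ ht.1 ht.2
      rw [abs_le]; constructor <;> linarith
    have h2 : |(n:ℝ)| ≥ 1 := by rwa [abs_of_pos (by linarith : (0:ℝ) < n)]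
    calc |t^n - 1| / |(n:ℝ)| ≤ |t^n - 1| := div_le_self (abs_nonneg _) h2
    _ ≤ 2 := h1
  -- second-order estimate for y = x(-t)
  have hy2 : ∀ t ∈ Set.Icc (0:ℝ) 1, |x (-t) - ε - ε^2 * ((t^n - 1)/n)| ≤ 128*K*ε^3 := by
    intro t ht
    have := hrefined (-t) (hnegmem t ht)
    rwa [show ((-t:ℝ))^n = t^n from hneven.neg_pow t] at this
  have hyabs : ∀ t ∈ Set.Icc (0:ℝ) 1, |x (-t)| ≤ 3*ε/2 := fun t ht => hxabs (-t) (hnegmem t ht)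
  have htn1 : ∀ t ∈ Set.Icc (0:ℝ) 1, |t^n/(n:ℝ)| ≤ 1 := by
    intro t ht
    rw [abs_div]
    have h1 : |t^n| ≤ 1 := by
      rw [abs_pow]; exact pow_le_one₀ (abs_nonneg t) (abs_le.mpr ⟨by linarith [ht.1], ht.2⟩)
    have h2 : (1:ℝ) ≤ |(n:ℝ)| := by rwa [abs_of_pos (by linarith : (0:ℝ) < n)]
    calc |t^n| / |(n:ℝ)| ≤ |t^n| := div_le_self (abs_nonneg _) h2
    _ ≤ 1 := h1
  -- cube estimate
  have hy3 : ∀ t ∈ Set.Icc (0:ℝ) 1,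
      |x (-t)^3 - ε^3 - 3*ε^4*((t^n-1)/n)| ≤ 3476*K*ε^5 := by
    intro t ht
    have hGb := hG1b t ht
    have hyb := hy2 t ht
    have hy15 := hyabs t ht
    have hbabs : |ε + ε^2*((t^n-1)/n)| ≤ 3*ε := by
      calc |ε + ε^2*((t^n-1)/n)| ≤ |ε| + |ε^2*((t^n-1)/n)| := abs_add_le _ _
      _ ≤ ε + ε^2*2 := by
          rw [abs_of_pos hε, abs_mul, abs_of_nonneg (by positivity : (0:ℝ) ≤ ε^2)]
          nlinarith [abs_nonneg ((t^n-1)/(n:ℝ))]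
      _ ≤ 3*ε := by nlinarith
    have key1 : |x (-t)^3 - (ε + ε^2*((t^n-1)/n))^3| ≤ 128*K*ε^3 * (3*(3*ε)^2) := by
      apply abel_cube_diff (by positivity) _ (by linarith : |x (-t)| ≤ 3*ε) hbabs
      have e : x (-t) - (ε + ε^2*((t^n-1)/n)) = x (-t) - ε - ε^2*((t^n-1)/n) := by ring
      rw [e]; exact hyb
    have key2 : |(ε + ε^2*((t^n-1)/n))^3 - ε^3 - 3*ε^4*((t^n-1)/n)| ≤ 20*ε^5 := by
      have e : (ε + ε^2*((t^n-1)/n))^3 - ε^3 - 3*ε^4*((t^n-1)/n)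
          = ε^5*(3*((t^n-1)/n)^2 + ε*((t^n-1)/n)^3) := by ring
      rw [e, abs_mul, abs_of_nonneg (by positivity : (0:ℝ) ≤ ε^5)]
      have h2 : ((t^n-1)/(n:ℝ))^2 ≤ 4 := by
        have h2' := abs_le.mp hGb
        nlinarith [h2'.1, h2'.2]
      have h3 : |((t^n-1)/(n:ℝ))^3| ≤ 8 := by
        rw [abs_pow]
        calc |(t^n-1)/(n:ℝ)|^3 ≤ 2^3 := pow_le_pow_left₀ (abs_nonneg _) hGb 3
        _ = 8 := by norm_num
      have hb : |3*((t^n-1)/n)^2 + ε*((t^n-1)/n)^3| ≤ 20 := by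
        calc |3*((t^n-1)/n)^2 + ε*((t^n-1)/n)^3|
            ≤ |3*((t^n-1)/(n:ℝ))^2| + |ε*((t^n-1)/(n:ℝ))^3| := abs_add_le _ _
        _ ≤ 3*4 + 1*8 := by
            rw [abs_mul, abs_mul, abs_of_pos hε, show |(3:ℝ)| = 3 by norm_num]
            have e1 : |((t^n-1)/(n:ℝ))^2| ≤ 4 := by rw [abs_of_nonneg (sq_nonneg _)]; exact h2
            nlinarith [abs_nonneg (((t^n-1)/(n:ℝ))^3), h3]
        _ = 20 := by norm_num
      calc ε^5 * |3*((t^n-1)/n)^2 + ε*((t^n-1)/n)^3| ≤ ε^5 * 20 :=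
            mul_le_mul_of_nonneg_left hb (by positivity)
      _ = 20*ε^5 := by ring
    calc |x (-t)^3 - ε^3 - 3*ε^4*((t^n-1)/n)|
        ≤ |x (-t)^3 - (ε + ε^2*((t^n-1)/n))^3|
          + |(ε + ε^2*((t^n-1)/n))^3 - ε^3 - 3*ε^4*((t^n-1)/n)| := by
          have h := abs_add_le (x (-t)^3 - (ε + ε^2*((t^n-1)/n))^3)
            ((ε + ε^2*((t^n-1)/n))^3 - ε^3 - 3*ε^4*((t^n-1)/n))
          rw [show x (-t)^3 - (ε + ε^2*((t^n-1)/n))^3 +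
            ((ε + ε^2*((t^n-1)/(n:ℝ)))^3 - ε^3 - 3*ε^4*((t^n-1)/n))
            = x (-t)^3 - ε^3 - 3*ε^4*((t^n-1)/n) from by ring] at h
          exact h
    _ ≤ 128*K*ε^3 * (3*(3*ε)^2) + 20*ε^5 := add_le_add key1 key2
    _ ≤ 3476*K*ε^5 := by nlinarith [mul_nonneg hK0.le (pow_nonneg hε.le 5), pow_nonneg hε.le 5]
  
  -- α estimate
  have hαb : ∀ s ∈ Set.Icc (0:ℝ) 1, |α s - 2*ε*s^(n-1)| ≤ 55*K*ε^2 := by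
    intro s hs
    have hx3 := hxabs s (hI01 hs)
    have hy3' := hyabs s hs
    have hfb := hK s (hI01 hs)
    have hgbs := hgb s (hI01 hs)
    have hxbs := hxb s (hI01 hs)
    have hybs : |x (-s) - ε| ≤ 24*K*ε^2 := hxb (-s) (hnegmem s hs)
    have e : α s - 2*ε*s^(n-1)
        = f s * (x s^2 + x s * x (-s) + x (-s)^2)
          + s^(n-1) * ((x s - ε) + (x (-s) - ε)) := by
      rw [hα_def]; ring
    rw [e]
    have b1 : |f s * (x s^2 + x s * x (-s) + x (-s)^2)| ≤ K * (3*(3*ε/2)^2) := by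
      rw [abs_mul]
      apply mul_le_mul hfb _ (abs_nonneg _) (by linarith)
      calc |x s^2 + x s * x (-s) + x (-s)^2|
          ≤ |x s|^2 + |x s| * |x (-s)| + |x (-s)|^2 := by
            calc |x s^2 + x s * x (-s) + x (-s)^2|
                ≤ |x s^2 + x s * x (-s)| + |x (-s)^2| := abs_add_le _ _
            _ ≤ |x s^2| + |x s * x (-s)| + |x (-s)^2| := by
                linarith [abs_add_le (x s^2) (x s * x (-s))]
            _ = |x s|^2 + |x s| * |x (-s)| + |x (-s)|^2 := by rw [abs_mul, abs_pow, abs_pow]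
      _ ≤ 3*(3*ε/2)^2 := by nlinarith [abs_nonneg (x s), abs_nonneg (x (-s))]
    have b2 : |s^(n-1) * ((x s - ε) + (x (-s) - ε))| ≤ 1 * (48*K*ε^2) := by
      rw [abs_mul]
      apply mul_le_mul hgbs _ (abs_nonneg _) zero_le_one
      calc |(x s - ε) + (x (-s) - ε)| ≤ |x s - ε| + |x (-s) - ε| := abs_add_le _ _
      _ ≤ 48*K*ε^2 := by linarith
    calc |f s * (x s^2 + x s * x (-s) + x (-s)^2) + s^(n-1) * ((x s - ε) + (x (-s) - ε))|
        ≤ |f s * (x s^2 + x s * x (-s) + x (-s)^2)|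
          + |s^(n-1) * ((x s - ε) + (x (-s) - ε))| := abs_add_le _ _
    _ ≤ K * (3*(3*ε/2)^2) + 1 * (48*K*ε^2) := add_le_add b1 b2
    _ ≤ 55*K*ε^2 := by nlinarith [mul_nonneg hK0.le (sq_nonneg ε)]
  -- A estimate
  have hAe : ∀ t ∈ Set.Icc (0:ℝ) 1, |A t - 2*ε*(t^n/n)| ≤ 55*K*ε^2 := by
    intro t ht
    have hApow : (∫ s in (0:ℝ)..t, s^(n-1)) = t^n/n := by
      rw [integral_pow]
      have hsub : n - 1 + 1 = n := Nat.succ_pred_eq_of_pos hn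
      have hcast : ((n - 1 : ℕ) : ℝ) + 1 = (n : ℝ) := by
        exact_mod_cast congrArg (Nat.cast : ℕ → ℝ) hsub
      rw [hsub, hcast, zero_pow hn.ne']
      ring
    have hint1 : IntervalIntegrable α volume 0 t :=
      (hαc.mono (by rw [Set.uIcc_of_le ht.1]; exact Set.Icc_subset_Icc le_rfl ht.2)).intervalIntegrable
    have hint2 : IntervalIntegrable (fun s : ℝ => 2*ε*s^(n-1)) volume 0 t :=
      ((intervalIntegral.intervalIntegrable_pow _).const_mul _)
    have e : A t - 2*ε*(t^n/n) = ∫ s in (0:ℝ)..t, (α s - 2*ε*s^(n-1)) := by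
      rw [intervalIntegral.integral_sub hint1 hint2, intervalIntegral.integral_const_mul, hApow,
        hA_def]
    rw [e, ← Real.norm_eq_abs]
    have hb := intervalIntegral.norm_integral_le_of_norm_le_const (C := 55*K*ε^2)
      (f := fun s => α s - 2*ε*s^(n-1)) (a := (0:ℝ)) (b := t) ?_
    · calc ‖_‖ ≤ 55*K*ε^2 * |t - 0| := hb
      _ ≤ 55*K*ε^2 * 1 := by
          apply mul_le_mul_of_nonneg_left _ (by positivity)
          rw [sub_zero, abs_of_nonneg ht.1]; exact ht.2
      _ = 55*K*ε^2 := by ring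
    · intro s hs
      rw [Set.uIoc_of_le ht.1] at hs
      rw [Real.norm_eq_abs]
      exact hαb s ⟨hs.1.le, hs.2.trans ht.2⟩
  have hAsz : ∀ t ∈ Set.Icc (0:ℝ) 1, |A t| ≤ 57*K*ε := by
    intro t ht
    have h1 := hAe t ht
    have h2 := htn1 t ht
    calc |A t| ≤ |A t - 2*ε*(t^n/n)| + |2*ε*(t^n/n)| := by
          have h := abs_add_le (A t - 2*ε*(t^n/n)) (2*ε*(t^n/n))
          rw [show A t - 2*ε*(t^n/(n:ℝ)) + 2*ε*(t^n/n) = A t from by ring] at h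
          exact h
    _ ≤ 55*K*ε^2 + 2*ε*1 := by
        refine add_le_add h1 ?_
        rw [abs_mul, abs_of_pos (by positivity : (0:ℝ) < 2*ε)]
        exact mul_le_mul_of_nonneg_left h2 (by positivity)
    _ ≤ 57*K*ε := by nlinarith
  have hWe : ∀ t ∈ Set.Icc (0:ℝ) 1,
      |Real.exp (-A t) - (1 - 2*ε*(t^n/n))| ≤ 3304*K^2*ε^2 := by
    intro t ht
    have hAz := hAsz t ht
    have hA1 : |A t| ≤ 1 := by nlinarith
    have he : |Real.exp (-A t) - 1 - (-A t)| ≤ (-A t)^2 :=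
      Real.abs_exp_sub_one_sub_id_le (by rwa [abs_neg])
    have hA2 : (-A t)^2 ≤ (57*K*ε)^2 := by
      rw [neg_pow]
      rw [show ((-1:ℝ))^2 * A t ^2 = A t ^ 2 from by ring, ← sq_abs]
      exact pow_le_pow_left₀ (abs_nonneg _) hAz 2
    have h3 := hAe t ht
    calc |Real.exp (-A t) - (1 - 2*ε*(t^n/n))|
        ≤ |Real.exp (-A t) - 1 - (-A t)| + |A t - 2*ε*(t^n/n)| := by
          have h := abs_add_le (Real.exp (-A t) - 1 - (-A t)) (-(A t - 2*ε*(t^n/n)))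
          rw [abs_neg] at h
          rw [show Real.exp (-A t) - 1 - (-A t) + -(A t - 2*ε*(t^n/(n:ℝ)))
            = Real.exp (-A t) - (1 - 2*ε*(t^n/n)) from by ring] at h
          exact h
    _ ≤ (57*K*ε)^2 + 55*K*ε^2 := add_le_add (he.trans hA2) h3
    _ ≤ 3304*K^2*ε^2 := by nlinarith [mul_nonneg hK0.le (sq_nonneg ε), sq_nonneg (K*ε)]
  have hWb : ∀ t ∈ Set.Icc (0:ℝ) 1, |Real.exp (-A t)| ≤ 3 := by
    intro t ht
    have h1 := hWe t ht
    have h2 := htn1 t ht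
    have h3 : |1 - 2*ε*(t^n/n)| ≤ 1 + 2*ε := by
      calc |1 - 2*ε*(t^n/n)| ≤ |(1:ℝ)| + |2*ε*(t^n/n)| := by
            rw [sub_eq_add_neg]
            exact (abs_add_le _ _).trans (by rw [abs_neg])
      _ ≤ 1 + 2*ε := by
          rw [abs_one]
          have : |2*ε*(t^n/(n:ℝ))| ≤ 2*ε*1 := by
            rw [abs_mul, abs_of_pos (by positivity : (0:ℝ) < 2*ε)]
            exact mul_le_mul_of_nonneg_left h2 (by positivity)
          linarith
    calc |Real.exp (-A t)|
        ≤ |Real.exp (-A t) - (1 - 2*ε*(t^n/n))| + |1 - 2*ε*(t^n/n)| := by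
          have h := abs_add_le (Real.exp (-A t) - (1 - 2*ε*(t^n/n))) (1 - 2*ε*(t^n/n))
          rw [show Real.exp (-A t) - (1 - 2*ε*(t^n/(n:ℝ))) + (1 - 2*ε*(t^n/n))
            = Real.exp (-A t) from by ring] at h
          exact h
    _ ≤ 3304*K^2*ε^2 + (1 + 2*ε) := add_le_add h1 h3
    _ ≤ 3 := by nlinarith [hKε, mul_nonneg hK0.le hε.le, sq_nonneg (K*ε - 1/10000)]
  -- core pointwise estimate
  have hcore : ∀ t ∈ Set.Icc (0:ℝ) 1,
      |Real.exp (-A t) * x (-t)^3 - (ε^3 + ε^4*((t^n - 3)/n))| ≤ 24000*K^2*ε^5 := by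
    intro t ht
    have e : Real.exp (-A t) * x (-t)^3 - (ε^3 + ε^4*((t^n - 3)/n))
        = (Real.exp (-A t) - (1 - 2*ε*(t^n/n))) * x (-t)^3
          + ((1 - 2*ε*(t^n/n)) * (x (-t)^3 - ε^3 - 3*ε^4*((t^n-1)/n))
          + (-6)*ε^5*(t^n/n)*((t^n-1)/n)) := by ring
    have b1 : |(Real.exp (-A t) - (1 - 2*ε*(t^n/n))) * x (-t)^3|
        ≤ 3304*K^2*ε^2 * (4*ε^3) := by
      rw [abs_mul]
      apply mul_le_mul (hWe t ht) _ (abs_nonneg _) (by positivity)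
      rw [abs_pow]
      calc |x (-t)|^3 ≤ (3*ε/2)^3 := pow_le_pow_left₀ (abs_nonneg _) (hyabs t ht) 3
      _ ≤ 4*ε^3 := by nlinarith [pow_nonneg hε.le 3]
    have hw03 : |1 - 2*ε*(t^n/n)| ≤ 3 := by
      have h2 := htn1 t ht
      calc |1 - 2*ε*(t^n/n)| ≤ |(1:ℝ)| + |2*ε*(t^n/n)| := by
            rw [sub_eq_add_neg]
            exact (abs_add_le _ _).trans (by rw [abs_neg])
      _ ≤ 3 := by
          rw [abs_one]
          have : |2*ε*(t^n/(n:ℝ))| ≤ 2*ε*1 := by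
            rw [abs_mul, abs_of_pos (by positivity : (0:ℝ) < 2*ε)]
            exact mul_le_mul_of_nonneg_left h2 (by positivity)
          nlinarith
    have b2 : |(1 - 2*ε*(t^n/n)) * (x (-t)^3 - ε^3 - 3*ε^4*((t^n-1)/n))|
        ≤ 3 * (3476*K*ε^5) := by
      rw [abs_mul]
      exact mul_le_mul hw03 (hy3 t ht) (abs_nonneg _) (by norm_num)
    have b3 : |(-6)*ε^5*(t^n/n)*((t^n-1)/n)| ≤ 12*ε^5 := by
      rw [abs_mul, abs_mul]
      have e6 : |(-6:ℝ)*ε^5| = 6*ε^5 := by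
        rw [abs_mul, abs_neg, abs_of_nonneg (by positivity : (0:ℝ) ≤ ε^5)]
        norm_num
      rw [e6]
      calc 6*ε^5 * |t^n/(n:ℝ)| * |(t^n-1)/(n:ℝ)| ≤ 6*ε^5 * 1 * 2 := by
            apply mul_le_mul _ (hG1b t ht) (abs_nonneg _) (by positivity)
            exact mul_le_mul_of_nonneg_left (htn1 t ht) (by positivity)
      _ = 12*ε^5 := by ring
    rw [e]
    calc |(Real.exp (-A t) - (1 - 2*ε*(t^n/n))) * x (-t)^3
          + ((1 - 2*ε*(t^n/n)) * (x (-t)^3 - ε^3 - 3*ε^4*((t^n-1)/n))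
          + (-6)*ε^5*(t^n/n)*((t^n-1)/n))|
        ≤ |(Real.exp (-A t) - (1 - 2*ε*(t^n/n))) * x (-t)^3|
          + (|(1 - 2*ε*(t^n/n)) * (x (-t)^3 - ε^3 - 3*ε^4*((t^n-1)/n))|
          + |(-6)*ε^5*(t^n/n)*((t^n-1)/n)|) := by
          refine (abs_add_le _ _).trans ?_
          exact add_le_add le_rfl (abs_add_le _ _)
    _ ≤ 3304*K^2*ε^2 * (4*ε^3) + (3 * (3476*K*ε^5) + 12*ε^5) :=
        add_le_add b1 (add_le_add b2 b3)
    _ ≤ 24000*K^2*ε^5 := by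
        nlinarith [mul_nonneg (mul_nonneg hK0.le hK0.le) (pow_nonneg hε.le 5),
          mul_nonneg hK0.le (pow_nonneg hε.le 5), pow_nonneg hε.le 5]
  -- conclusion
  have hIdent' : (∫ t in (0:ℝ)..1, Real.exp (-A t) * (P t * x (-t)^3)) = 0 := by
    have e : (fun t => Real.exp (-A t) * (2 * P t * x (-t)^3))
        = fun t => 2 * (Real.exp (-A t) * (P t * x (-t)^3)) := funext fun t => by ring
    rw [e, intervalIntegral.integral_const_mul] at hIdent
    linarith
  have hptw : ∀ t ∈ Set.Icc (0:ℝ) 1,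
      |(ε^3 + ε^4*((t^n - 3)/n)) * P t - Real.exp (-A t) * (P t * x (-t)^3)|
        ≤ 30000*K^3*ε^5 := by
    intro t ht
    have e : (ε^3 + ε^4*((t^n - 3)/n)) * P t - Real.exp (-A t) * (P t * x (-t)^3)
        = (-(Real.exp (-A t) * x (-t)^3 - (ε^3 + ε^4*((t^n - 3)/n)))) * P t := by ring
    rw [e, abs_mul, abs_neg]
    calc |Real.exp (-A t) * x (-t)^3 - (ε^3 + ε^4*((t^n - 3)/n))| * |P t|
        ≤ (24000*K^2*ε^5) * K :=
          mul_le_mul (hcore t ht) (hPK t ht) (abs_nonneg _) (by positivity)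
    _ ≤ 30000*K^3*ε^5 := by
        nlinarith [mul_nonneg (mul_nonneg (mul_nonneg hK0.le hK0.le) hK0.le) (pow_nonneg hε.le 5)]
  have hc1 : ContinuousOn (fun t : ℝ => (ε^3 + ε^4*((t^n - 3)/n)) * P t) (Set.Icc (0:ℝ) 1) :=
    ((continuous_const.add (continuous_const.mul
      (((continuous_pow n).sub continuous_const).div_const _))).mul hPc).continuousOn
  have hc2 : ContinuousOn (fun t => Real.exp (-A t) * (P t * x (-t)^3)) (Set.Icc (0:ℝ) 1) :=
    (hAc.neg.rexp).mul (hPc.continuousOn.mul (hyc.pow 3))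
  have hsplit : (∫ t in (0:ℝ)..1, (ε^3 + ε^4*((t^n - 3)/n)) * P t)
      = ∫ t in (0:ℝ)..1, ((ε^3 + ε^4*((t^n - 3)/n)) * P t
          - Real.exp (-A t) * (P t * x (-t)^3)) := by
    rw [intervalIntegral.integral_sub
      ((hc1.mono (by rw [Set.uIcc_of_le (by norm_num : (0:ℝ) ≤ 1)])).intervalIntegrable)
      ((hc2.mono (by rw [Set.uIcc_of_le (by norm_num : (0:ℝ) ≤ 1)])).intervalIntegrable),
      hIdent']
    ring
  rw [hsplit, ← Real.norm_eq_abs]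
  have hb := intervalIntegral.norm_integral_le_of_norm_le_const (C := 30000*K^3*ε^5)
    (f := fun t => (ε^3 + ε^4*((t^n - 3)/n)) * P t - Real.exp (-A t) * (P t * x (-t)^3))
    (a := (0:ℝ)) (b := 1) ?_
  · calc ‖_‖ ≤ 30000*K^3*ε^5 * |1 - 0| := hb
    _ = 30000*K^3*ε^5 := by norm_num
  · intro s hs
    rw [Set.uIoc_of_le (by norm_num : (0:ℝ) ≤ 1)] at hs
    rw [Real.norm_eq_abs]
    exact hptw s ⟨hs.1.le, hs.2⟩

set_option maxHeartbeats 1000000 in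
/-- Let `n` be a positive even integer, `g(t) = t^(n-1)`, and let
`f(t) = p(t^2) + t q(t^2)` be a real polynomial whose even part `t ↦ p(t^2)`
changes sign at most two times on `[-1,1]`. If the Abel equation
`x' = f(t) x^3 + g(t) x^2` on `[-1,1]` has a center at `x = 0`, then all moments
`m_k = ∫_{-1}^1 f(t) G(t)^k dt`, `k ≥ 0`, vanish, where `G(t) = (t^n − 1)/n`. -/
theorem all_moments_vanish_of_center
    (n : ℕ) (hn : 0 < n) (hneven : Even n)
    (p q : Polynomial ℝ)
    (f : ℝ → ℝ) (hfpq : ∀ t : ℝ, f t = p.eval (t ^ 2) + t * q.eval (t ^ 2))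
    (hsign : ChangesSignAtMostTwiceOn (fun t : ℝ => p.eval (t ^ 2)))
    (hcenter : HasCenter f (fun t : ℝ => t ^ (n - 1)) (-1) 1) :
    ∀ k : ℕ, ∫ t in (-1 : ℝ)..1, f t * ((t ^ n - 1) / n) ^ k = 0 := by
  -- continuity of f and the even part P
  have hfc : Continuous f := by
    rw [show f = fun t => p.eval (t ^ 2) + t * q.eval (t ^ 2) from funext hfpq]
    exact (p.continuous.comp (continuous_pow 2)).add
      (continuous_id.mul (q.continuous.comp (continuous_pow 2)))
  set P : ℝ → ℝ := fun t => p.eval (t ^ 2) with hP_def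
  have hPc : Continuous P := p.continuous.comp (continuous_pow 2)
  have hPf : ∀ t, f (-t) = 2 * P t - f t := by
    intro t
    rw [hfpq (-t), hfpq t, show ((-t:ℝ)) ^ 2 = t ^ 2 from by ring, hP_def]
    ring
  -- the claim: p = 0
  have hp0 : p = 0 := by
    -- bound K
    obtain ⟨C, hC⟩ := isCompact_Icc.exists_bound_of_continuousOn
      (f := f) (s := Set.Icc (-1:ℝ) 1) hfc.continuousOn
    set K := max C 1 with hK_def
    have hK1 : (1:ℝ) ≤ K := le_max_right _ _
    have hK0 : (0:ℝ) < K := lt_of_lt_of_le one_pos hK1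
    have hK : ∀ t ∈ Set.Icc (-1:ℝ) 1, |f t| ≤ K := by
      intro t ht
      calc |f t| = ‖f t‖ := (Real.norm_eq_abs _).symm
      _ ≤ C := hC t ht
      _ ≤ K := le_max_left _ _
    obtain ⟨δ, hδ, hcent⟩ := hcenter
    set ε₀ : ℝ := min (δ/2) (1/(10000*K)) with hε₀_def
    have hε₀ : 0 < ε₀ := lt_min (by linarith) (by positivity)
    -- the key inequality for all small ε
    set M0 : ℝ := ∫ t in (0:ℝ)..1, P t with hM0_def
    set M1 : ℝ := ∫ t in (0:ℝ)..1, ((t^n - 3)/n) * P t with hM1_def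
    have hPint : IntervalIntegrable P volume 0 1 := hPc.intervalIntegrable _ _
    have hGPint : IntervalIntegrable (fun t : ℝ => ((t^n - 3)/n) * P t) volume 0 1 :=
      ((((continuous_pow n).sub continuous_const).div_const _).mul hPc).intervalIntegrable _ _
    have key : ∀ ε : ℝ, 0 < ε → ε ≤ ε₀ → |ε^3 * M0 + ε^4 * M1| ≤ 30000 * K^3 * ε^5 := by
      intro ε hε hεle
      have hεK : 10000 * K * ε ≤ 1 := by
        have h1 : ε ≤ 1/(10000*K) := hεle.trans (min_le_right _ _)
        rw [le_div_iff₀ (by positivity : (0:ℝ) < 10000*K)] at h1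
        nlinarith [h1]
      have hε1 : ε ≤ 1 := by nlinarith
      have hεK48 : 48 * K * ε ≤ 1 := by nlinarith
      obtain ⟨x, hx0, hxd, hxb⟩ := abel_solution_exists n hfc hK1 hK hε hε1 hεK48
      have hret : x (-1) = x 1 := by
        apply hcent x _ (by rw [hx0, abs_of_pos hε]; linarith [hεle.trans (min_le_left _ _)])
        intro t ht
        simpa using hxd t ht
      have hkey := abel_key n hn hneven hfc hPc hPf hK1 hK hε hεK hx0 hxd hxb hret
      have hlin : (∫ t in (0:ℝ)..1, (ε^3 + ε^4 * ((t^n - 3)/n)) * P t)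
          = ε^3 * M0 + ε^4 * M1 := by
        have e : (fun t : ℝ => (ε^3 + ε^4 * ((t^n - 3)/n)) * P t)
            = fun t : ℝ => ε^3 * P t + ε^4 * (((t^n - 3)/n) * P t) := funext fun t => by ring
        rw [e, intervalIntegral.integral_add ((hPint.const_mul _))
          ((hGPint.const_mul _)), intervalIntegral.integral_const_mul,
          intervalIntegral.integral_const_mul, hM0_def, hM1_def]
      rwa [hlin] at hkey
    -- extract M0 = 0
    have hM0 : M0 = 0 := by
      by_contra h0
      have habs : 0 < |M0| := abs_pos.mpr h0
      set D : ℝ := |M1| + 30000 * K^3 + 1 with hD_def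
      have hD : 0 < D := by positivity
      set ε : ℝ := min ε₀ (|M0|/(2*D)) with hε_def
      have hε : 0 < ε := lt_min hε₀ (by positivity)
      have hεle : ε ≤ ε₀ := min_le_left _ _
      have hεD : ε ≤ |M0|/(2*D) := min_le_right _ _
      have hε1 : ε ≤ 1 := by
        have := hεle.trans (min_le_right _ _)
        have hK3 : (1:ℝ) ≤ 10000*K := by nlinarith
        calc ε ≤ 1/(10000*K) := this
        _ ≤ 1 := by rw [div_le_one (by positivity)]; exact hK3
      have hk := key ε hε hεle
      have htri : ε^3 * |M0| ≤ |ε^3 * M0 + ε^4 * M1| + ε^4 * |M1| := by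
        have h1 := abs_add_le (ε^3 * M0 + ε^4 * M1) (-(ε^4 * M1))
        rw [show ε^3 * M0 + ε^4 * M1 + -(ε^4 * M1) = ε^3 * M0 from by ring, abs_neg,
          abs_mul, abs_mul, abs_of_nonneg (by positivity : (0:ℝ) ≤ ε^3),
          abs_of_nonneg (by positivity : (0:ℝ) ≤ ε^4)] at h1
        exact h1
      have hstep : ε^3 * |M0| ≤ ε^3 * (ε * D) := by
        have e2 : ε^4 * |M1| = ε^3 * (ε * |M1|) := by ring
        have e3 : 30000 * K^3 * ε^5 ≤ ε^3 * (ε * (30000*K^3)) := by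
          nlinarith [mul_nonneg (mul_nonneg (pow_pos hK0 3).le (pow_nonneg hε.le 4))
            (sub_nonneg.mpr hε1)]
        calc ε^3 * |M0| ≤ 30000 * K^3 * ε^5 + ε^4 * |M1| := by linarith
        _ ≤ ε^3 * (ε * (30000*K^3)) + ε^3 * (ε * |M1|) := by rw [e2]; linarith
        _ = ε^3 * (ε * (|M1| + 30000*K^3)) := by ring
        _ ≤ ε^3 * (ε * D) := by
            rw [hD_def]
            nlinarith [pow_nonneg hε.le 3, hε.le]
      have hM0le : |M0| ≤ ε * D := le_of_mul_le_mul_left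
        (by linarith [hstep] : ε^3 * |M0| ≤ ε^3 * (ε * D)) (by positivity)
      have : ε * D ≤ |M0|/2 := by
        rw [le_div_iff₀ (by positivity : (0:ℝ) < 2*D)] at hεD
        nlinarith [hεD]
      nlinarith [hM0le, this, habs]
    -- extract M1 = 0
    have hM1 : M1 = 0 := by
      by_contra h1
      have habs : 0 < |M1| := abs_pos.mpr h1
      set D : ℝ := 30000 * K^3 + 1 with hD_def
      have hD : 0 < D := by positivity
      set ε : ℝ := min ε₀ (|M1|/(2*D)) with hε_def
      have hε : 0 < ε := lt_min hε₀ (by positivity)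
      have hεle : ε ≤ ε₀ := min_le_left _ _
      have hεD : ε ≤ |M1|/(2*D) := min_le_right _ _
      have hk := key ε hε hεle
      rw [hM0, mul_zero, zero_add, abs_mul,
        abs_of_nonneg (by positivity : (0:ℝ) ≤ ε^4)] at hk
      have hstep : ε^4 * |M1| ≤ ε^4 * (ε * D) := by
        calc ε^4 * |M1| ≤ 30000 * K^3 * ε^5 := hk
        _ ≤ ε^4 * (ε * D) := by
            rw [hD_def]
            have hε1 : ε ≤ 1 := by
              have h1 := hεle.trans (min_le_right _ _)
              rw [le_div_iff₀ (by positivity : (0:ℝ) < 10000*K)] at h1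
              nlinarith [h1]
            nlinarith [mul_nonneg (mul_nonneg (pow_pos hK0 3).le (pow_nonneg hε.le 4))
              (sub_nonneg.mpr hε1), pow_nonneg hε.le 5]
      have hM1le : |M1| ≤ ε * D := le_of_mul_le_mul_left hstep (by positivity)
      have : ε * D ≤ |M1|/2 := by
        rw [le_div_iff₀ (by positivity : (0:ℝ) < 2*D)] at hεD
        nlinarith [hεD]
      nlinarith [hM1le, this, habs]
    -- convert to the two moments of P on [0,1]
    have hm0 : (∫ t in (0:ℝ)..1, P t) = 0 := hM0
    have hm1 : (∫ t in (0:ℝ)..1, P t * ((t^n - 1)/n)) = 0 := by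
      have hGP1 : IntervalIntegrable (fun t : ℝ => P t * ((t^n - 1)/n)) volume 0 1 :=
        (hPc.mul (((continuous_pow n).sub continuous_const).div_const _)).intervalIntegrable _ _
      have e : (fun t : ℝ => ((t^n - 3)/n) * P t)
          = fun t : ℝ => P t * ((t^n - 1)/n) - (2/n) * P t := by
        funext t
        have hn0 : (n:ℝ) ≠ 0 := by positivity
        field_simp
        ring
      have : M1 = (∫ t in (0:ℝ)..1, P t * ((t^n - 1)/n)) - (2/n) * M0 := by
        rw [hM1_def, e, intervalIntegral.integral_sub hGP1 (hPint.const_mul _),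
          intervalIntegral.integral_const_mul, hM0_def]
      rw [hM0, hM1] at this
      linarith [this]
    -- sign analysis
    have heven : ∀ t : ℝ, P (-t) = P t := by
      intro t; rw [hP_def]; simp only []
      rw [show ((-t:ℝ)) ^ 2 = t ^ 2 from by ring]
    obtain ⟨r, hr, hs1, hs2⟩ := abel_sign_split heven hsign
    have hGm : StrictMonoOn (fun t : ℝ => (t^n - 1)/n) (Set.Icc (0:ℝ) 1) := by
      intro a ha b hb hab
      have h1 : a^n < b^n := pow_lt_pow_left₀ hab ha.1 hn.ne'
      have hn0 : (0:ℝ) < n := by exact_mod_cast hn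
      exact div_lt_div_of_pos_right (by linarith) hn0
    have hvan := abel_sign_vanish hr hPc.continuousOn
      (((continuous_pow n).sub continuous_const).div_const _).continuousOn hGm hs1 hs2 hm0 hm1
    exact abel_poly_zero p hvan
  -- with p = 0, the integrand is odd
  intro k
  apply abel_integral_odd
  intro t
  have hft : f (-t) = -f t := by
    have := hPf t
    rw [hP_def] at this
    simp only [hp0, Polynomial.eval_zero] at this
    linarith [this]
  rw [hft, show ((-t:ℝ))^n = t^n from hneven.neg_pow t]
  ring
end

section
/- Let f = F' and g = G' be real polynomials satisfying the Polynomial Composition Condition on [a,b]: there exist real polynomials F̃, G̃ and W with F(t) = F̃(W(t)), G(t) = G̃(W(t)) for all t, and W(a) = W(b). Then the Abel equation x'(t) = f(t)x(t)^3 + g(t)x(t)^2 has a center on [a,b]. -/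
open MeasureTheory Polynomial

open Set Metric Real Filter
open scoped NNReal Topology


open MeasureTheory Polynomial Set Metric Real
open scoped NNReal

/-- Picard–Lindelöf existence, also recording that the solution stays in the closed ball. -/
theorem my_pl_exists {v : ℝ → ℝ → ℝ} {tMin tMax : ℝ} {t₀ : Icc tMin tMax} (x₀ : ℝ)
    {R C L : ℝ≥0}
    (hpl : IsPicardLindelof v t₀ x₀ R 0 C L) :
    ∃ f : ℝ → ℝ, f t₀ = x₀ ∧ ∀ t ∈ Icc tMin tMax,
      f t ∈ closedBall x₀ R ∧ HasDerivWithinAt f (v t (f t)) (Icc tMin tMax) t := by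
  have hx : x₀ ∈ closedBall x₀ ((0 : ℝ≥0) : ℝ) := mem_closedBall_self le_rfl
  obtain ⟨α, hα⟩ := ODE.FunSpace.exists_isFixedPt_next hpl hx
  refine ⟨α.compProj, by rw [ODE.FunSpace.compProj_val, ← hα, ODE.FunSpace.next_apply₀],
    fun t ht => ⟨α.compProj_mem_closedBall hpl.mul_max_le, ?_⟩⟩
  apply ODE.hasDerivWithinAt_picard_Icc t₀.2 hpl.continuousOn_uncurry
    α.continuous_compProj.continuousOn (fun _ ht' ↦ α.compProj_mem_closedBall hpl.mul_max_le)
    x₀ ht |>.congr_of_mem _ ht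
  intro t' ht'
  nth_rw 1 [← hα]
  rw [ODE.FunSpace.compProj_of_mem ht', ODE.FunSpace.next_apply]
open Set Metric Real
open scoped NNReal

/-- Lipschitz bound for `y ↦ A y³ + B y²` on the unit ball. -/
theorem cubic_lipschitzOnWith {A B : ℝ} {L : ℝ≥0} (h : 3 * |A| + 2 * |B| ≤ L) :
    LipschitzOnWith L (fun y : ℝ => A * y ^ 3 + B * y ^ 2) (closedBall (0 : ℝ) 1) := by
  rw [lipschitzOnWith_iff_dist_le_mul]
  intro y hy z hz
  rw [mem_closedBall, Real.dist_eq, sub_zero] at hy hz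
  rw [Real.dist_eq, Real.dist_eq]
  have hy0 := abs_nonneg y
  have hz0 := abs_nonneg z
  have hyz : |y * z| ≤ 1 := by rw [abs_mul]; nlinarith
  have hy2 : |y ^ 2| ≤ 1 := by rw [abs_pow]; nlinarith
  have hz2 : |z ^ 2| ≤ 1 := by rw [abs_pow]; nlinarith
  have h3 : |y ^ 2 + y * z + z ^ 2| ≤ 3 := (abs_add_three _ _ _).trans (by linarith)
  have h4 : |y + z| ≤ 2 := (abs_add_le _ _).trans (by linarith)
  have h1 : A * y ^ 3 + B * y ^ 2 - (A * z ^ 3 + B * z ^ 2)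
      = A * ((y ^ 2 + y * z + z ^ 2) * (y - z)) + B * ((y + z) * (y - z)) := by ring
  rw [h1]
  have habs : |A * ((y ^ 2 + y * z + z ^ 2) * (y - z)) + B * ((y + z) * (y - z))|
      ≤ |A| * (|y ^ 2 + y * z + z ^ 2| * |y - z|) + |B| * (|y + z| * |y - z|) := by
    refine (abs_add_le _ _).trans ?_
    rw [abs_mul, abs_mul, abs_mul, abs_mul]
  refine habs.trans ?_
  have hA := abs_nonneg A
  have hB := abs_nonneg B
  have hd := abs_nonneg (y - z)
  nlinarith [mul_nonneg hA hd, mul_nonneg hB hd]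

/-- Uniform bound for the absolute values of two polynomials on a compact interval. -/
theorem poly_bound (p q : Polynomial ℝ) (α β : ℝ) :
    ∃ K : ℝ, 0 ≤ K ∧ ∀ t ∈ Icc α β, |p.eval t| + |q.eval t| ≤ K := by
  obtain ⟨C, hC⟩ := isCompact_Icc.exists_bound_of_continuousOn
    (f := fun t => |p.eval t| + |q.eval t|)
    (by fun_prop)
  refine ⟨max C 0, le_max_right _ _, fun t ht => ?_⟩
  have := hC t ht
  rw [Real.norm_eq_abs] at this
  exact (le_abs_self _).trans (this.trans (le_max_left _ _))
open Set Metric Real Filter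
open scoped NNReal Topology

/-- A priori bound for solutions of `x' = v(t,x)` with `v(t,0) = 0` and `v(t,·)` Lipschitz
on the unit ball: a solution starting small stays small (Gronwall + escape-time argument). -/
theorem apriori_bound (v : ℝ → ℝ → ℝ) (K : ℝ≥0) (α β : ℝ) (hαβ : α ≤ β) (x : ℝ → ℝ) (δ₁ : ℝ)
    (hx : ∀ t ∈ Icc α β, HasDerivWithinAt x (v t (x t)) (Icc α β) t)
    (hv0 : ∀ t ∈ Icc α β, v t 0 = 0)
    (hvl : ∀ t ∈ Icc α β, LipschitzOnWith K (v t) (closedBall 0 1))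
    (hxa : |x α| ≤ δ₁)
    (hδ : δ₁ * Real.exp (K * (β - α)) < 1) :
    ∀ t ∈ Icc α β, |x t| ≤ δ₁ * Real.exp (K * (β - α)) := by
  set B := δ₁ * Real.exp (K * (β - α)) with hB
  have hδ₁0 : 0 ≤ δ₁ := (abs_nonneg _).trans hxa
  have hK0 : (0:ℝ) ≤ (K:ℝ) := K.coe_nonneg
  have hexp1 : 1 ≤ Real.exp (↑K * (β - α)) := by
    apply Real.one_le_exp; nlinarith
  have hδ₁B : δ₁ ≤ B := le_mul_of_one_le_right hδ₁0 hexp1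
  have hB1 : B < 1 := hδ
  have hcont : ContinuousOn x (Icc α β) := fun t ht => (hx t ht).continuousWithinAt
  set S : Set ℝ := {t | t ∈ Icc α β ∧ ∀ u ∈ Icc α t, |x u| ≤ 1} with hS
  have hαS : α ∈ S := by
    refine ⟨⟨le_rfl, hαβ⟩, fun u hu => ?_⟩
    have huα : u = α := le_antisymm hu.2 hu.1
    rw [huα]
    exact hxa.trans (hδ₁B.trans hB1.le)
  have hSne : S.Nonempty := ⟨α, hαS⟩
  have hSbdd : BddAbove S := ⟨β, fun t ht => ht.1.2⟩
  set T := sSup S with hT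
  have hαT : α ≤ T := le_csSup hSbdd hαS
  have hTβ : T ≤ β := csSup_le hSne fun t ht => ht.1.2
  -- |x| ≤ 1 on [α, T)
  have key1 : ∀ u ∈ Ico α T, |x u| ≤ 1 := by
    intro u hu
    obtain ⟨t, htS, hut⟩ := exists_lt_of_lt_csSup hSne hu.2
    exact htS.2 u ⟨hu.1, hut.le⟩
  -- |x| ≤ 1 on [α, T]
  have key2 : ∀ u ∈ Icc α T, |x u| ≤ 1 := by
    have hxT1 : |x T| ≤ 1 := by
      rcases eq_or_lt_of_le hαT with h' | h'
      · rw [← h']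
        exact hxa.trans (hδ₁B.trans hB1.le)
      · have hne : (𝓝[Ico α T] T).NeBot := by
          rw [← mem_closure_iff_nhdsWithin_neBot, closure_Ico (ne_of_lt h')]
          exact ⟨hαT, le_rfl⟩
        have hc : ContinuousWithinAt x (Ico α T) T :=
          (hcont T ⟨hαT, hTβ⟩).mono fun u hu => ⟨hu.1, hu.2.le.trans hTβ⟩
        exact le_of_tendsto hc.abs (eventually_of_mem self_mem_nhdsWithin key1)
    intro u hu
    rcases lt_or_eq_of_le hu.2 with h | h
    · exact key1 u ⟨hu.1, h⟩
    · rw [h]; exact hxT1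
  -- Gronwall bound on [α, T]
  set s' : ℝ → Set ℝ := fun t => if t ∈ Icc α β then closedBall (0:ℝ) 1 else ∅ with hs'
  have hs'pos : ∀ t ∈ Icc α β, s' t = closedBall (0:ℝ) 1 := by
    intro t ht; simp only [hs']; rw [if_pos ht]
  have hv' : ∀ t, LipschitzOnWith K (v t) (s' t) := by
    intro t
    by_cases h : t ∈ Icc α β
    · rw [hs'pos t h]; exact hvl t h
    · have : s' t = ∅ := by simp only [hs']; rw [if_neg h]
      rw [this]; exact lipschitzOnWith_empty K (v t)
  have bound2 : ∀ t ∈ Icc α T, dist (x t) 0 ≤ δ₁ * Real.exp (K * (t - α)) := by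
    intro t ht
    refine dist_le_of_trajectories_ODE_of_mem (fun t _ => hv' t)
      (hcont.mono (Icc_subset_Icc_right hTβ)) (fun u hu => ?_) (fun u hu => ?_)
      continuousOn_const (fun u hu => ?_) (fun u hu => ?_) ?_ t ht
    · exact (hx u ⟨hu.1, hu.2.le.trans hTβ⟩).mono_of_mem_nhdsWithin
        (Icc_mem_nhdsGE_of_mem ⟨hu.1, lt_of_lt_of_le hu.2 hTβ⟩)
    · rw [hs'pos u ⟨hu.1, hu.2.le.trans hTβ⟩, mem_closedBall, Real.dist_eq, sub_zero]
      exact key1 u hu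
    · have huab : u ∈ Icc α β := ⟨hu.1, hu.2.le.trans hTβ⟩
      simpa [hv0 u huab] using (hasDerivWithinAt_const u (Ici u) (0:ℝ))
    · rw [hs'pos u ⟨hu.1, hu.2.le.trans hTβ⟩]
      exact mem_closedBall_self zero_le_one
    · rwa [Real.dist_eq, sub_zero]
  have bound3 : ∀ t ∈ Icc α T, |x t| ≤ B := by
    intro t ht
    have h1 := bound2 t ht
    rw [Real.dist_eq, sub_zero] at h1
    refine h1.trans ?_
    rw [hB]
    refine mul_le_mul_of_nonneg_left (Real.exp_le_exp.mpr ?_) hδ₁0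
    have h2 : t ≤ β := ht.2.trans hTβ
    nlinarith
  -- Show T = β
  have hTeq : T = β := by
    by_contra hne
    have hTβ' : T < β := lt_of_le_of_ne hTβ hne
    have hxT : |x T| < 1 := lt_of_le_of_lt (bound3 T ⟨hαT, le_rfl⟩) hB1
    have hc : ContinuousWithinAt x (Icc α β) T := hcont T ⟨hαT, hTβ⟩
    have hev : {u | |x u| < 1} ∈ 𝓝[Icc α β] T := hc.abs (Iio_mem_nhds hxT)
    rw [mem_nhdsWithin_iff] at hev
    obtain ⟨η, hη, hball⟩ := hev
    set T' := min (T + η / 2) β with hT'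
    have hTT' : T < T' := lt_min (by linarith) hTβ'
    have hT'S : T' ∈ S := by
      refine ⟨⟨hαT.trans hTT'.le, min_le_right _ _⟩, fun u hu => ?_⟩
      rcases le_or_gt u T with h | h
      · exact key2 u ⟨hu.1, h⟩
      · have huab : u ∈ Icc α β := ⟨hu.1, hu.2.trans (min_le_right _ _)⟩
        have huball : u ∈ ball T η := by
          rw [mem_ball, Real.dist_eq, abs_of_pos (by linarith)]
          have : u ≤ T + η / 2 := hu.2.trans (min_le_left _ _)
          linarith
        exact (hball ⟨huball, huab⟩).le
    exact absurd (le_csSup hSbdd hT'S) (not_le.mpr hTT')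
  intro t ht
  exact bound3 t (hTeq ▸ ht)

set_option maxHeartbeats 1000000 in
/-- If `f = F'`, `g = G'` satisfy the Polynomial Composition Condition on `[a,b]`
(`F = F̃ ∘ W`, `G = G̃ ∘ W` with `W(a) = W(b)`), then the Abel equation
`x' = f(t) x^3 + g(t) x^2` has a center on `[a,b]`. -/
theorem center_of_polynomial_composition_condition
    (a b : ℝ) (hab : a ≤ b)
    (F G Ftilde Gtilde W : Polynomial ℝ)
    (hF : F = Ftilde.comp W)
    (hG : G = Gtilde.comp W)
    (hW : W.eval a = W.eval b) :
    HasCenter (fun t : ℝ => F.derivative.eval t) (fun t : ℝ => G.derivative.eval t) a b := by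
  classical
  set f : ℝ → ℝ := fun t => F.derivative.eval t with hf
  set g : ℝ → ℝ := fun t => G.derivative.eval t with hg
  set v : ℝ → ℝ → ℝ := fun t y => f t * y ^ 3 + g t * y ^ 2 with hv
  set v₁ : ℝ → ℝ → ℝ :=
    fun w y => Ftilde.derivative.eval w * y ^ 3 + Gtilde.derivative.eval w * y ^ 2 with hv₁
  set c := W.eval a with hc
  -- bound on W over [a,b]
  obtain ⟨M₀', hM₀'⟩ := isCompact_Icc.exists_bound_of_continuousOn
    (f := fun t => W.eval t) (W.continuous.continuousOn (s := Icc a b))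
  set M₀ : ℝ := max M₀' 1 with hM₀def
  have hM₀1 : (1:ℝ) ≤ M₀ := le_max_right _ _
  have hM₀0 : (0:ℝ) < M₀ := lt_of_lt_of_le one_pos hM₀1
  have hWbd : ∀ t ∈ Icc a b, |W.eval t| ≤ M₀ := fun t ht =>
    ((Real.norm_eq_abs _ ▸ hM₀' t ht).trans (le_max_left _ _))
  have hcmem : c ∈ Icc (-M₀) M₀ := by
    have := hWbd a ⟨le_rfl, hab⟩
    rw [abs_le] at this
    exact ⟨this.1, this.2⟩
  -- coefficient bounds
  obtain ⟨K₁, hK₁0, hK₁⟩ := poly_bound F.derivative G.derivative a b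
  obtain ⟨K₂, hK₂0, hK₂⟩ := poly_bound Ftilde.derivative Gtilde.derivative (-M₀) M₀
  -- radius and Lipschitz constants
  set r : ℝ := min (1/2) (1/(8*(K₂+1)*(M₀+1))) with hrdef
  have hr0 : 0 < r := lt_min (by norm_num) (by positivity)
  have hrhalf : r ≤ 1/2 := min_le_left _ _
  have hrsmall : 8*(K₂+1)*(M₀+1)*r ≤ 1 := by
    have h1 : r ≤ 1/(8*(K₂+1)*(M₀+1)) := min_le_right _ _
    have h2 : (0:ℝ) < 8*(K₂+1)*(M₀+1) := by positivity
    rw [le_div_iff₀ h2] at h1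
    linarith [h1]
  set Kx : ℝ≥0 := Real.toNNReal (3*K₁) with hKxdef
  have hKxcoe : (Kx:ℝ) = 3*K₁ := Real.coe_toNNReal _ (by linarith)
  set L : ℝ≥0 := Real.toNNReal (3*K₂) with hLdef
  have hLcoe : (L:ℝ) = 3*K₂ := Real.coe_toNNReal _ (by linarith)
  -- choice of δ
  set δ : ℝ := min r (Real.exp (-(Kx * (b-a))) / 2) with hδdef
  have hδ0 : 0 < δ := lt_min hr0 (by positivity)
  refine ⟨δ, hδ0, fun x hx hxa => ?_⟩
  have hxa' : |x a| < δ := hxa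
  have hxar : |x a| ≤ r := (hxa'.le.trans (min_le_left _ _))
  -- Lipschitz of v on the unit ball, uniformly on [a,b]
  have hvlip : ∀ t ∈ Icc a b, LipschitzOnWith Kx (v t) (closedBall 0 1) := by
    intro t ht
    apply cubic_lipschitzOnWith
    rw [hKxcoe]
    have := hK₁ t ht
    have h1 := abs_nonneg (F.derivative.eval t)
    have h2 := abs_nonneg (G.derivative.eval t)
    simp only [hf, hg]
    linarith
  have hv0 : ∀ t ∈ Icc a b, v t 0 = 0 := by intro t _; simp [hv]
  -- a priori bound for x
  have hxode : ∀ t ∈ Icc a b, HasDerivWithinAt x (v t (x t)) (Icc a b) t := fun t ht => hx t ht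
  have hexppos : (0:ℝ) < Real.exp (Kx * (b-a)) := Real.exp_pos _
  have hprod : |x a| * Real.exp (Kx * (b-a)) ≤ 1/2 := by
    have h1 : |x a| ≤ Real.exp (-(Kx * (b-a))) / 2 := hxa'.le.trans (min_le_right _ _)
    calc |x a| * Real.exp (Kx * (b-a))
        ≤ (Real.exp (-(Kx * (b-a))) / 2) * Real.exp (Kx * (b-a)) := by
          exact mul_le_mul_of_nonneg_right h1 hexppos.le
      _ = 1/2 := by
          rw [div_mul_eq_mul_div, ← Real.exp_add]
          norm_num
  have hxbound : ∀ t ∈ Icc a b, |x t| ≤ |x a| * Real.exp (Kx * (b-a)) :=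
    apriori_bound v Kx a b hab x (|x a|) hxode hv0 hvlip le_rfl
      (lt_of_le_of_lt hprod (by norm_num))
  have hxbound1 : ∀ t ∈ Icc a b, |x t| ≤ 1 := fun t ht =>
    (hxbound t ht).trans (hprod.trans (by norm_num))
  -- Picard–Lindelöf for y on [-M₀, M₀]
  have hballsub : closedBall (x a) r ⊆ closedBall (0:ℝ) 1 := by
    intro y hy
    rw [mem_closedBall, Real.dist_eq, sub_zero]
    rw [mem_closedBall, Real.dist_eq] at hy
    have := abs_sub_abs_le_abs_sub y (x a)
    linarith
  have hyabs : ∀ y ∈ closedBall (x a) r, |y| ≤ 2*r := by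
    intro y hy
    rw [mem_closedBall, Real.dist_eq] at hy
    have := abs_sub_abs_le_abs_sub y (x a)
    linarith
  have hrc : ((r.toNNReal : ℝ≥0) : ℝ) = r := Real.coe_toNNReal _ hr0.le
  have hCc : (((4*K₂*r^2).toNNReal : ℝ≥0) : ℝ) = 4*K₂*r^2 := Real.coe_toNNReal _ (by positivity)
  have hpl : IsPicardLindelof v₁ (⟨c, hcmem⟩ : Icc (-M₀) M₀) (x a) r.toNNReal 0
      (4*K₂*r^2).toNNReal L := by
    refine ⟨?_, ?_, ?_, ?_⟩
    · intro w hw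
      rw [hrc]
      refine (cubic_lipschitzOnWith ?_).mono hballsub
      rw [hLcoe]
      have := hK₂ w hw
      have h1 := abs_nonneg (Ftilde.derivative.eval w)
      have h2 := abs_nonneg (Gtilde.derivative.eval w)
      linarith
    · intro y _
      exact (((Ftilde.derivative.continuous).mul continuous_const).add
        (((Gtilde.derivative.continuous).mul continuous_const))).continuousOn
    · intro w hw y hy
      rw [hrc] at hy
      rw [hCc]
      have hy2 : |y| ≤ 2*r := hyabs y hy
      have hy1 : |y| ≤ 1 := by linarith
      have hy0 : (0:ℝ) ≤ |y| := abs_nonneg _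
      have hAB := hK₂ w hw
      have h1 := abs_nonneg (Ftilde.derivative.eval w)
      have h2 := abs_nonneg (Gtilde.derivative.eval w)
      rw [Real.norm_eq_abs]
      calc |v₁ w y| ≤ |Ftilde.derivative.eval w * y^3| + |Gtilde.derivative.eval w * y^2| :=
            abs_add_le _ _
        _ = |Ftilde.derivative.eval w| * |y|^3 + |Gtilde.derivative.eval w| * |y|^2 := by
            rw [abs_mul, abs_mul, abs_pow, abs_pow]
        _ ≤ 4*K₂*r^2 := by
            have hy3 : |y|^3 ≤ |y|^2 := by nlinarith
            have hyr : |y|^2 ≤ 4*r^2 := by nlinarith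
            nlinarith [mul_le_mul hAB hyr (sq_nonneg |y|) hK₂0,
              mul_nonneg h1 (sub_nonneg.mpr hy3)]
    · rw [hCc, hrc, NNReal.coe_zero, sub_zero]
      have hmax : max (M₀ - c) (c - -M₀) ≤ 2*M₀ := by
        rw [max_le_iff]
        constructor <;> [linarith [hcmem.1]; linarith [hcmem.2]]
      calc 4*K₂*r^2 * max (M₀ - c) (c - -M₀) ≤ 4*K₂*r^2 * (2*M₀) := by
            have h4 : (0:ℝ) ≤ 4*K₂*r^2 := by positivity
            exact mul_le_mul_of_nonneg_left hmax h4
        _ = (8*K₂*M₀*r)*r := by ring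
        _ ≤ 1*r := by
            refine mul_le_mul_of_nonneg_right ?_ hr0.le
            refine le_trans ?_ hrsmall
            nlinarith [hr0.le]
        _ = r := one_mul r
  obtain ⟨y, hyc, hy⟩ := my_pl_exists (x a) hpl
  have hyc : y c = x a := hyc
  simp only [hrc] at hy
  -- the transported solution z
  set z : ℝ → ℝ := fun t => y (W.eval t) with hzdef
  have hmaps : MapsTo (fun u => W.eval u) (Icc a b) (Icc (-M₀) M₀) := by
    intro t ht
    have := hWbd t ht
    rw [abs_le] at this
    exact ⟨this.1, this.2⟩
  have hzode : ∀ t ∈ Icc a b, HasDerivWithinAt z (v t (z t)) (Icc a b) t := by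
    intro t ht
    have hWt : W.eval t ∈ Icc (-M₀) M₀ := hmaps ht
    have hdy := (hy (W.eval t) hWt).2
    have hdW : HasDerivWithinAt (fun u => W.eval u) (W.derivative.eval t) (Icc a b) t :=
      (W.hasDerivAt t).hasDerivWithinAt
    have hcomp := HasDerivWithinAt.comp t hdy hdW hmaps
    have heq : v₁ (W.eval t) (y (W.eval t)) * W.derivative.eval t = v t (z t) := by
      simp only [hv, hv₁, hzdef, hf, hg, hF, hG, derivative_comp, eval_mul, eval_comp]
      ring
    rw [heq] at hcomp
    exact hcomp
  have hzbound1 : ∀ t ∈ Icc a b, |z t| ≤ 1 := by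
    intro t ht
    have := hballsub (hy (W.eval t) (hmaps ht)).1
    rwa [mem_closedBall, Real.dist_eq, sub_zero] at this
  -- uniqueness on [a,b]
  set s' : ℝ → Set ℝ := fun t => if t ∈ Icc a b then closedBall (0:ℝ) 1 else ∅ with hs'
  have hs'pos : ∀ t ∈ Icc a b, s' t = closedBall (0:ℝ) 1 := by
    intro t ht; simp only [hs']; rw [if_pos ht]
  have hv' : ∀ t, LipschitzOnWith Kx (v t) (s' t) := by
    intro t
    by_cases h : t ∈ Icc a b
    · rw [hs'pos t h]; exact hvlip t h
    · have : s' t = ∅ := by simp only [hs']; rw [if_neg h]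
      rw [this]; exact lipschitzOnWith_empty Kx (v t)
  have hza : x a = z a := by
    simp only [hzdef, ← hc, hyc]
  have huniq : EqOn x z (Icc a b) := by
    refine ODE_solution_unique_of_mem_Icc_right (fun t _ => hv' t)
      (fun t ht => (hxode t ht).continuousWithinAt) (fun u hu => ?_) (fun u hu => ?_)
      (fun t ht => (hzode t ht).continuousWithinAt) (fun u hu => ?_) (fun u hu => ?_) hza
    · exact (hxode u ⟨hu.1, hu.2.le⟩).mono_of_mem_nhdsWithin (Icc_mem_nhdsGE_of_mem ⟨hu.1, hu.2⟩)
    · rw [hs'pos u ⟨hu.1, hu.2.le⟩, mem_closedBall, Real.dist_eq, sub_zero]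
      exact hxbound1 u ⟨hu.1, hu.2.le⟩
    · exact (hzode u ⟨hu.1, hu.2.le⟩).mono_of_mem_nhdsWithin (Icc_mem_nhdsGE_of_mem ⟨hu.1, hu.2⟩)
    · rw [hs'pos u ⟨hu.1, hu.2.le⟩, mem_closedBall, Real.dist_eq, sub_zero]
      exact hzbound1 u ⟨hu.1, hu.2.le⟩
  have hxb : x b = z b := huniq ⟨hab, le_rfl⟩
  have hzb : z b = x a := by
    simp only [hzdef, ← hW, ← hc, hyc]
  rw [hxb, hzb]
end

section
/- Let f, g be continuous on [a,b] and suppose there exist continuous functions f̂, ĝ and a continuously differentiable function σ on [a,b] with σ(a) = σ(b), such that f(t) = f̂(σ(t))σ'(t) and g(t) = ĝ(σ(t))σ'(t) for all t ∈ [a,b]. Then the Abel equation x'(t) = f(t)x(t)^3 + g(t)x(t)^2 has a center on [a,b]. -/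
open MeasureTheory

/-- On the ball of radius `M`, the Abel nonlinearity `u ↦ c u³ + d u²` is Lipschitz with
constant `K` whenever `3|c|M² + 2|d|M ≤ K`. -/
lemma abel_lipschitzOn (c d M K : ℝ) (hM : 0 ≤ M) (hK : 3 * |c| * M^2 + 2 * |d| * M ≤ K) :
    LipschitzOnWith K.toNNReal (fun u => c*u^3 + d*u^2) (Metric.closedBall 0 M) := by
  have hK0 : 0 ≤ K := le_trans (by positivity) hK
  apply LipschitzOnWith.of_dist_le_mul
  intro u hu z hz
  rw [Metric.mem_closedBall, Real.dist_eq, sub_zero] at hu hz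
  rw [Real.dist_eq, Real.dist_eq, Real.coe_toNNReal _ hK0]
  have h : (c*u^3 + d*u^2) - (c*z^3 + d*z^2)
      = (c*(u^2+u*z+z^2) + d*(u+z)) * (u - z) := by ring
  rw [h, abs_mul]
  have h1 : |u^2 + u*z + z^2| ≤ 3*M^2 := by
    have h1a := abs_add_le (u^2 + u*z) (z^2)
    have h1b := abs_add_le (u^2) (u*z)
    have h1c : |u^2| = |u| ^ 2 := abs_pow u 2
    have h1d : |z^2| = |z| ^ 2 := abs_pow z 2
    have h1e : |u*z| = |u| * |z| := abs_mul u z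
    nlinarith [abs_nonneg u, abs_nonneg z, mul_le_mul hu hz (abs_nonneg z) hM]
  have h2 : |u + z| ≤ 2*M := (abs_add_le u z).trans (by linarith)
  have h3 : |c*(u^2+u*z+z^2) + d*(u+z)| ≤ 3 * |c| * M^2 + 2 * |d| * M := by
    refine (abs_add_le _ _).trans ?_
    rw [abs_mul, abs_mul]
    have := mul_le_mul_of_nonneg_left h1 (abs_nonneg c)
    have := mul_le_mul_of_nonneg_left h2 (abs_nonneg d)
    linarith
  have := mul_le_mul_of_nonneg_right (h3.trans hK) (abs_nonneg (u - z))
  linarith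

/-- (Alwash–Lloyd) If `f, g` are continuous on `[a,b]` and can be expressed as
`f(t) = f̂(σ(t)) σ'(t)`, `g(t) = ĝ(σ(t)) σ'(t)` with `f̂, ĝ` continuous and `σ`
continuously differentiable on `[a,b]` and closed (`σ(a) = σ(b)`), then the Abel
equation `x' = f(t) x^3 + g(t) x^2` has a center on `[a,b]`. -/
theorem center_of_composition_condition
    (a b : ℝ) (hab : a ≤ b)
    (f g : ℝ → ℝ)
    (hf : ContinuousOn f (Set.Icc a b))
    (hg : ContinuousOn g (Set.Icc a b))
    (fhat ghat σ σ' : ℝ → ℝ)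
    (hfhat : Continuous fhat)
    (hghat : Continuous ghat)
    (hσ : ∀ t ∈ Set.Icc a b, HasDerivWithinAt σ (σ' t) (Set.Icc a b) t)
    (hσ' : ContinuousOn σ' (Set.Icc a b))
    (hclosed : σ a = σ b)
    (hfcomp : ∀ t ∈ Set.Icc a b, f t = fhat (σ t) * σ' t)
    (hgcomp : ∀ t ∈ Set.Icc a b, g t = ghat (σ t) * σ' t) :
    HasCenter f g a b := by
  classical
  have hσc : ContinuousOn σ (Set.Icc a b) := fun t ht => (hσ t ht).continuousWithinAt
  obtain ⟨S₀, hS₀⟩ := isCompact_Icc.exists_bound_of_continuousOn hσc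
  set S : ℝ := max 1 S₀ with hSdef
  have hS1 : (1:ℝ) ≤ S := le_max_left _ _
  have hS : ∀ t ∈ Set.Icc a b, |σ t| ≤ S := fun t ht => by
    rw [← Real.norm_eq_abs]; exact (hS₀ t ht).trans (le_max_right _ _)
  have hmaps : Set.MapsTo σ (Set.Icc a b) (Set.Icc (-S) S) := fun t ht => by
    have h := abs_le.mp (hS t ht); exact Set.mem_Icc.mpr ⟨h.1, h.2⟩
  obtain ⟨Cf, hCf⟩ := (isCompact_Icc :
    IsCompact (Set.Icc (-S) S)).exists_bound_of_continuousOn hfhat.continuousOn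
  obtain ⟨Cg, hCg⟩ := (isCompact_Icc :
    IsCompact (Set.Icc (-S) S)).exists_bound_of_continuousOn hghat.continuousOn
  set C₀ : ℝ := max 1 (max Cf Cg) with hC₀def
  have hC₁ : (1:ℝ) ≤ C₀ := le_max_left _ _
  have hCfb : ∀ s ∈ Set.Icc (-S) S, |fhat s| ≤ C₀ := fun s hs => by
    rw [← Real.norm_eq_abs]
    exact (hCf s hs).trans ((le_max_left _ _).trans (le_max_right _ _))
  have hCgb : ∀ s ∈ Set.Icc (-S) S, |ghat s| ≤ C₀ := fun s hs => by
    rw [← Real.norm_eq_abs]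
    exact (hCg s hs).trans ((le_max_right _ _).trans (le_max_right _ _))
  have hSC : (0:ℝ) < 16*S*C₀ := by nlinarith
  set δ : ℝ := min (1/2) (1/(16*S*C₀)) with hδdef
  have hδpos : 0 < δ := lt_min (by norm_num) (by positivity)
  have hδhalf : δ ≤ 1/2 := min_le_left _ _
  have hδ16 : δ ≤ 1/(16*S*C₀) := min_le_right _ _
  have hδ16' : δ * (16*S*C₀) ≤ 1 := by
    rw [← le_div_iff₀ hSC]; simpa using hδ16
  refine ⟨δ, hδpos, ?_⟩
  intro x hx hxa
  have ht₀ : σ a ∈ Set.Icc (-S) S := hmaps (Set.left_mem_Icc.mpr hab)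
  -- Picard–Lindelöf: existence of a solution of `y' = f̂(s) y³ + ĝ(s) y²` on `[-S, S]`
  have hpl : IsPicardLindelof (fun s y => fhat s * y^3 + ghat s * y^2) (tmin := -S) (tmax := S)
      ⟨σ a, ht₀⟩ (x a) δ.toNNReal 0 (8*C₀*δ^2).toNNReal ((5*C₀).toNNReal) := by
    have hδc : ((δ.toNNReal : ℝ)) = δ := Real.coe_toNNReal _ hδpos.le
    have hLc : (((8*C₀*δ^2).toNNReal : ℝ)) = 8*C₀*δ^2 := Real.coe_toNNReal _ (by positivity)
    refine ⟨?_, ?_, ?_, ?_⟩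
    · intro s hs
      rw [hδc]
      have hfb := hCfb s hs
      have hgb := hCgb s hs
      have key := abel_lipschitzOn (fhat s) (ghat s) 1 (5*C₀) one_pos.le
        (by nlinarith [abs_nonneg (fhat s), abs_nonneg (ghat s)])
      refine key.mono ?_
      intro y hy
      rw [Metric.mem_closedBall, Real.dist_eq] at hy ⊢
      rw [sub_zero]
      have := abs_sub_abs_le_abs_sub y (x a)
      have habs := abs_lt.mp hxa
      linarith [abs_nonneg (x a)]
    · intro y _
      exact ((hfhat.mul continuous_const).add (hghat.mul continuous_const)).continuousOn
    · intro s hs y hy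
      rw [hLc, Real.norm_eq_abs]
      rw [hδc] at hy
      rw [Metric.mem_closedBall, Real.dist_eq] at hy
      have hyb : |y| ≤ 2*δ := by
        have := abs_sub_abs_le_abs_sub y (x a)
        linarith
    -- `|f̂ y³ + ĝ y²| ≤ C₀(2δ)³ + C₀(2δ)² ≤ 8 C₀ δ²`
      have hfb := hCfb s hs
      have hgb := hCgb s hs
      have step1 : |fhat s * y^3 + ghat s * y^2| ≤ |fhat s| * |y|^3 + |ghat s| * |y|^2 := by
        have h := abs_add_le (fhat s * y^3) (ghat s * y^2)
        rw [abs_mul, abs_mul, abs_pow, abs_pow] at h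
        exact h
      have step2 : |fhat s| * |y|^3 + |ghat s| * |y|^2 ≤ C₀ * (2*δ)^3 + C₀ * (2*δ)^2 := by
        gcongr <;> first | exact hfb | exact hgb | exact hyb
      have h2δ : 2*δ ≤ 1 := by linarith
      have hprod : 0 ≤ C₀ * δ^2 * (1 - 2*δ) :=
        mul_nonneg (mul_nonneg (by linarith) (sq_nonneg δ)) (by linarith)
      nlinarith [step1, step2, hprod]
    · simp only [hLc, hδc, NNReal.coe_zero, sub_zero]
      have hmax : max (S - σ a) (σ a - (-S)) ≤ 2*S := by
        rcases ht₀ with ⟨h1, h2⟩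
        apply max_le <;> linarith
      have hnn : (0:ℝ) ≤ 8*C₀*δ^2 := by positivity
      have hmul := mul_le_mul_of_nonneg_left hmax hnn
      nlinarith [mul_le_mul_of_nonneg_left hδ16' hδpos.le]
  obtain ⟨y, hy₀, hy⟩ := hpl.exists_eq_forall_mem_Icc_hasDerivWithinAt₀
  -- the transported solution `z = y ∘ σ`
  set z : ℝ → ℝ := fun t => y (σ t) with hzdef
  have hyc : ContinuousOn y (Set.Icc (-S) S) := fun s hs => (hy s hs).continuousWithinAt
  have hzc : ContinuousOn z (Set.Icc a b) := hyc.comp hσc hmaps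
  have hxc : ContinuousOn x (Set.Icc a b) := fun t ht => (hx t ht).continuousWithinAt
  obtain ⟨Mx, hMx⟩ := isCompact_Icc.exists_bound_of_continuousOn hxc
  obtain ⟨Mz, hMz⟩ := isCompact_Icc.exists_bound_of_continuousOn hzc
  obtain ⟨CF, hCF⟩ := isCompact_Icc.exists_bound_of_continuousOn hf
  obtain ⟨CG, hCG⟩ := isCompact_Icc.exists_bound_of_continuousOn hg
  set M : ℝ := max 1 (max Mx Mz) with hMdef
  set C₁ : ℝ := max 1 (max CF CG) with hC₁def
  have hM1 : (1:ℝ) ≤ M := le_max_left _ _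
  have hMxb : ∀ t ∈ Set.Icc a b, |x t| ≤ M := fun t ht => by
    rw [← Real.norm_eq_abs]
    exact (hMx t ht).trans ((le_max_left _ _).trans (le_max_right _ _))
  have hMzb : ∀ t ∈ Set.Icc a b, |z t| ≤ M := fun t ht => by
    rw [← Real.norm_eq_abs]
    exact (hMz t ht).trans ((le_max_right _ _).trans (le_max_right _ _))
  have hCFb : ∀ t ∈ Set.Icc a b, |f t| ≤ C₁ := fun t ht => by
    rw [← Real.norm_eq_abs]
    exact (hCF t ht).trans ((le_max_left _ _).trans (le_max_right _ _))
  have hCGb : ∀ t ∈ Set.Icc a b, |g t| ≤ C₁ := fun t ht => by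
    rw [← Real.norm_eq_abs]
    exact (hCG t ht).trans ((le_max_right _ _).trans (le_max_right _ _))
  set w : ℝ → ℝ → ℝ :=
    fun t u => if t ∈ Set.Icc a b then f t * u^3 + g t * u^2 else 0 with hwdef
  have hlip : ∀ t, LipschitzOnWith (3*C₁*M^2 + 2*C₁*M).toNNReal (w t)
      (Metric.closedBall 0 M) := by
    intro t
    by_cases ht : t ∈ Set.Icc a b
    · have hfb := hCFb t ht
      have hgb := hCGb t ht
      have key := abel_lipschitzOn (f t) (g t) M (3*C₁*M^2 + 2*C₁*M) (by linarith) (by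
        have h1 := mul_le_mul_of_nonneg_right hfb (sq_nonneg M)
        have h2 := mul_le_mul_of_nonneg_right hgb (by linarith : (0:ℝ) ≤ M)
        nlinarith)
      have hwt : w t = fun u => f t * u^3 + g t * u^2 := by
        funext u; exact if_pos ht
      rw [hwt]; exact key
    · have hwt : w t = fun _ => (0:ℝ) := by funext u; exact if_neg ht
      rw [hwt]
      exact ((LipschitzWith.const (0:ℝ)).weaken (zero_le)).lipschitzOnWith
  have hx' : ∀ t ∈ Set.Ico a b, HasDerivWithinAt x (w t (x t)) (Set.Ici t) t := by
    intro t ht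
    have ht' : t ∈ Set.Icc a b := Set.Ico_subset_Icc_self ht
    have h1 := (hx t ht').mono_of_mem_nhdsWithin (Icc_mem_nhdsGE_of_mem ht)
    have heq : w t (x t) = f t * x t ^ 3 + g t * x t ^ 2 := if_pos ht'
    rw [heq]; exact h1
  have hz' : ∀ t ∈ Set.Ico a b, HasDerivWithinAt z (w t (z t)) (Set.Ici t) t := by
    intro t ht
    have ht' : t ∈ Set.Icc a b := Set.Ico_subset_Icc_self ht
    have hd : HasDerivWithinAt z
        (σ' t • (fhat (σ t) * (y (σ t))^3 + ghat (σ t) * (y (σ t))^2)) (Set.Icc a b) t :=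
      (hy (σ t) (hmaps ht')).scomp t (hσ t ht') hmaps
    have h1 := hd.mono_of_mem_nhdsWithin (Icc_mem_nhdsGE_of_mem ht)
    have heq : w t (z t)
        = σ' t • (fhat (σ t) * (y (σ t))^3 + ghat (σ t) * (y (σ t))^2) := by
      have : w t (z t) = f t * z t ^ 3 + g t * z t ^ 2 := if_pos ht'
      rw [this, hfcomp t ht', hgcomp t ht', smul_eq_mul, hzdef]
      ring
    rw [heq]; exact h1
  have hxs : ∀ t ∈ Set.Ico a b, x t ∈ Metric.closedBall (0:ℝ) M := by
    intro t ht
    rw [Metric.mem_closedBall, Real.dist_eq, sub_zero]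
    exact hMxb t (Set.Ico_subset_Icc_self ht)
  have hzs : ∀ t ∈ Set.Ico a b, z t ∈ Metric.closedBall (0:ℝ) M := by
    intro t ht
    rw [Metric.mem_closedBall, Real.dist_eq, sub_zero]
    exact hMzb t (Set.Ico_subset_Icc_self ht)
  have hinit : x a = z a := hy₀.symm
  have huniq : Set.EqOn x z (Set.Icc a b) :=
    ODE_solution_unique_of_mem_Icc_right (fun t _ => hlip t) hxc hx' hxs hzc hz' hzs hinit
  have hb' : x b = z b := huniq (Set.right_mem_Icc.mpr hab)
  rw [hb']
  show x a = y (σ b)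
  rw [← hclosed]
  exact hy₀.symm
end

section
/- Let f, g be continuous on [-1,1] and for ρ small let x(t,ρ) denote the solution of the Abel equation x' = f(t)x^3 + g(t)x^2 with x(-1,ρ) = ρ. Then x = 0 is a center of the Abel equation if and only if ∫_{-1}^1 g(t) dt = 0 and there exists ρ_0 > 0 such that ∫_{-1}^1 f(t) x(t,ρ) dt = 0 for all |ρ| < ρ_0. -/
open MeasureTheory intervalIntegral

open Set Real

lemma abel_lip {A B M : ℝ} (hA : |A| ≤ M) (hB : |B| ≤ M) :
    LipschitzOnWith (Real.toNNReal (5*M)) (fun z : ℝ => A * z^3 + B * z^2) (Set.Icc (-1:ℝ) 1) := by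
  have hM0 : 0 ≤ M := (abs_nonneg A).trans hA
  apply LipschitzOnWith.of_dist_le_mul
  intro z hz w hw
  rw [Real.dist_eq, Real.dist_eq, Real.coe_toNNReal _ (by positivity)]
  have hz1 : |z| ≤ 1 := abs_le.mpr ⟨hz.1, hz.2⟩
  have hw1 : |w| ≤ 1 := abs_le.mpr ⟨hw.1, hw.2⟩
  have key : A * z^3 + B * z^2 - (A * w^3 + B * w^2)
      = (A*(z^2+z*w+w^2) + B*(z+w)) * (z - w) := by ring
  rw [key, abs_mul]
  have h2 : |z^2+z*w+w^2| ≤ 3 := by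
    have hzw : |z*w| ≤ 1 := by rw [abs_mul]; nlinarith [abs_nonneg z, abs_nonneg w]
    have hz2 : |z^2| ≤ 1 := by rw [abs_pow]; nlinarith [abs_nonneg z]
    have hw2 : |w^2| ≤ 1 := by rw [abs_pow]; nlinarith [abs_nonneg w]
    calc |z^2+z*w+w^2| ≤ |z^2| + |z*w| + |w^2| := abs_add_three _ _ _
    _ ≤ 3 := by linarith
  have h3 : |z+w| ≤ 2 := (abs_add_le z w).trans (by linarith)
  have h1 : |A*(z^2+z*w+w^2) + B*(z+w)| ≤ 5*M := by
    have h4 := abs_add_le (A*(z^2+z*w+w^2)) (B*(z+w))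
    rw [abs_mul, abs_mul] at h4
    nlinarith [abs_nonneg (z^2+z*w+w^2), abs_nonneg (z+w), abs_nonneg A, abs_nonneg B]
  exact mul_le_mul_of_nonneg_right h1 (abs_nonneg _)

lemma abel_gronwall_core {f g y : ℝ → ℝ} {M b : ℝ} (hM0 : 0 ≤ M)
    (hM : ∀ t ∈ Set.Icc (-1:ℝ) 1, |f t| ≤ M ∧ |g t| ≤ M)
    (hy : ∀ t ∈ Set.Icc (-1:ℝ) 1,
      HasDerivWithinAt y (f t * y t ^ 3 + g t * y t ^ 2) (Set.Icc (-1:ℝ) 1) t)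
    (hb : b ∈ Set.Icc (-1:ℝ) 1)
    (hball : ∀ s ∈ Set.Icc (-1:ℝ) b, |y s| ≤ 1) :
    ∀ t ∈ Set.Icc (-1:ℝ) b, |y t| ≤ |y (-1)| * Real.exp ((2*M) * (t + 1)) := by
  have ycont : ContinuousOn y (Set.Icc (-1:ℝ) 1) :=
    fun t ht => (hy t ht).continuousWithinAt
  intro t ht
  have H := norm_le_gronwallBound_of_norm_deriv_right_le (f := y)
    (f' := fun s => f s * y s ^ 3 + g s * y s ^ 2) (δ := |y (-1)|) (K := 2*M) (ε := 0)
    (a := -1) (b := b)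
    (ycont.mono (Set.Icc_subset_Icc le_rfl hb.2))
    (fun s hs => (hy s ⟨hs.1, hs.2.le.trans hb.2⟩).mono_of_mem_nhdsWithin
      (Icc_mem_nhdsGE_of_mem ⟨hs.1, lt_of_lt_of_le hs.2 hb.2⟩))
    (le_refl _) ?_ t ht
  · rwa [gronwallBound_ε0, Real.norm_eq_abs, show t - (-1) = t + 1 by ring] at H
  · intro s hs
    have hs1 : s ∈ Set.Icc (-1:ℝ) 1 := ⟨hs.1, hs.2.le.trans hb.2⟩
    obtain ⟨hfs, hgs⟩ := hM s hs1
    have hys : |y s| ≤ 1 := hball s ⟨hs.1, hs.2.le⟩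
    rw [Real.norm_eq_abs, Real.norm_eq_abs, add_zero]
    have e1 : |f s * y s ^ 3 + g s * y s ^ 2| ≤ |f s| * |y s| ^ 3 + |g s| * |y s| ^ 2 := by
      calc |f s * y s ^ 3 + g s * y s ^ 2| ≤ |f s * y s ^ 3| + |g s * y s ^ 2| := abs_add_le _ _
      _ = |f s| * |y s| ^ 3 + |g s| * |y s| ^ 2 := by rw [abs_mul, abs_mul, abs_pow, abs_pow]
    have h3 : |y s| ^ 3 ≤ |y s| := by
      calc |y s| ^ 3 ≤ |y s| ^ 1 := pow_le_pow_of_le_one (abs_nonneg _) hys (by norm_num)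
      _ = |y s| := pow_one _
    have h2 : |y s| ^ 2 ≤ |y s| := by
      calc |y s| ^ 2 ≤ |y s| ^ 1 := pow_le_pow_of_le_one (abs_nonneg _) hys (by norm_num)
      _ = |y s| := pow_one _
    have := abs_nonneg (y s)
    nlinarith [pow_nonneg (abs_nonneg (y s)) 3, pow_nonneg (abs_nonneg (y s)) 2]

lemma abel_bound {f g y : ℝ → ℝ} {M : ℝ} (hM0 : 0 ≤ M)
    (hM : ∀ t ∈ Set.Icc (-1:ℝ) 1, |f t| ≤ M ∧ |g t| ≤ M)
    (hy : ∀ t ∈ Set.Icc (-1:ℝ) 1,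
      HasDerivWithinAt y (f t * y t ^ 3 + g t * y t ^ 2) (Set.Icc (-1:ℝ) 1) t)
    (hsmall : |y (-1)| * Real.exp (4*M) < 1) :
    ∀ t ∈ Set.Icc (-1:ℝ) 1, |y t| ≤ |y (-1)| * Real.exp (4*M) := by
  have ycont : ContinuousOn y (Set.Icc (-1:ℝ) 1) :=
    fun t ht => (hy t ht).continuousWithinAt
  set E := Real.exp (4*M) with hEdef
  have hE1 : 1 ≤ E := Real.one_le_exp (by positivity)
  set c : ℝ := (|y (-1)| * E + 1)/2 with hcdef
  have hc0 : 0 < c := by positivity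
  have hclt : |y (-1)| * E < c := by
    rw [hcdef]; linarith
  have hc1 : c ≤ 1 := by
    rw [hcdef]
    nlinarith [abs_nonneg (y (-1))]
  have hy0c : |y (-1)| < c := by
    nlinarith [abs_nonneg (y (-1))]
  set S : Set ℝ := {t | t ∈ Set.Icc (-1:ℝ) 1 ∧ ∀ s ∈ Set.Icc (-1:ℝ) t, |y s| ≤ c} with hSdef
  have hmem : (-1:ℝ) ∈ S := by
    refine ⟨⟨le_refl _, by norm_num⟩, fun s hs => ?_⟩
    have : s = -1 := le_antisymm hs.2 hs.1
    rw [this]; exact hy0c.le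
  have bddS : BddAbove S := ⟨1, fun t ht => ht.1.2⟩
  set T := sSup S with hTdef
  have hT1 : -1 ≤ T := le_csSup bddS hmem
  have hT2 : T ≤ 1 := csSup_le ⟨_, hmem⟩ (fun t ht => ht.1.2)
  have hlt : ∀ s, -1 ≤ s → s < T → |y s| ≤ c := by
    intro s hs1 hs2
    obtain ⟨t, htS, hst⟩ := exists_lt_of_lt_csSup ⟨_, hmem⟩ hs2
    exact htS.2 s ⟨hs1, hst.le⟩
  have hTy : ∀ s ∈ Set.Icc (-1:ℝ) T, |y s| ≤ c := by
    intro s hs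
    rcases lt_or_eq_of_le hs.2 with h | h
    · exact hlt s hs.1 h
    · subst h
      rcases eq_or_lt_of_le hT1 with h1 | h1
      · rw [← h1]; exact hy0c.le
      · -- limit argument at T
        have hclos : T ∈ closure (Set.Ico (-1:ℝ) T) := by
          rw [closure_Ico (ne_of_lt h1)]
          exact ⟨hT1, le_refl _⟩
        have hne : (nhdsWithin T (Set.Ico (-1:ℝ) T)).NeBot :=
          mem_closure_iff_nhdsWithin_neBot.mp hclos
        have hcw : ContinuousWithinAt y (Set.Ico (-1:ℝ) T) T :=
          (ycont T ⟨hT1, hT2⟩).mono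
            (fun u hu => ⟨hu.1, hu.2.le.trans hT2⟩)
        have htend : Filter.Tendsto (fun s => |y s|)
            (nhdsWithin T (Set.Ico (-1:ℝ) T)) (nhds |y T|) :=
          (continuous_abs.tendsto _).comp hcw
        refine le_of_tendsto htend ?_
        exact Filter.eventually_of_mem self_mem_nhdsWithin
          (fun u hu => hlt u hu.1 hu.2)
  have core : ∀ t ∈ Set.Icc (-1:ℝ) T,
      |y t| ≤ |y (-1)| * Real.exp ((2*M) * (t + 1)) :=
    abel_gronwall_core hM0 hM hy ⟨hT1, hT2⟩ (fun s hs => (hTy s hs).trans hc1)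
  have strict : ∀ t ∈ Set.Icc (-1:ℝ) T, |y t| < c := by
    intro t ht
    refine lt_of_le_of_lt ((core t ht).trans ?_) hclt
    apply mul_le_mul_of_nonneg_left _ (abs_nonneg _)
    apply Real.exp_le_exp.mpr
    nlinarith [ht.2.trans hT2]
  have hTeq : T = 1 := by
    by_contra hne1
    have hTlt : T < 1 := lt_of_le_of_ne hT2 hne1
    have hyT : |y T| < c := strict T ⟨hT1, le_refl _⟩
    have hcont : ContinuousWithinAt y (Set.Icc (-1:ℝ) 1) T := ycont T ⟨hT1, hT2⟩
    have htend : Filter.Tendsto (fun s => |y s|)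
        (nhdsWithin T (Set.Icc (-1:ℝ) 1)) (nhds |y T|) :=
      (continuous_abs.tendsto _).comp hcont
    have hev : ∀ᶠ s in nhdsWithin T (Set.Icc (-1:ℝ) 1), |y s| < c :=
      htend.eventually (eventually_lt_nhds hyT)
    rw [eventually_nhdsWithin_iff, Metric.eventually_nhds_iff] at hev
    obtain ⟨ε, hε, hball⟩ := hev
    set t' := min 1 (T + ε/2) with ht'def
    have hTt' : T < t' := lt_min hTlt (by linarith)
    have ht'S : t' ∈ S := by
      refine ⟨⟨le_trans hT1 hTt'.le, min_le_left _ _⟩, fun s hs => ?_⟩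
      rcases le_or_gt s T with h | h
      · exact hTy s ⟨hs.1, h⟩
      · have hs1 : s ∈ Set.Icc (-1:ℝ) 1 := ⟨hs.1, hs.2.trans (min_le_left _ _)⟩
        have hd : dist s T < ε := by
          rw [Real.dist_eq, abs_of_pos (by linarith)]
          have : s ≤ T + ε/2 := hs.2.trans (min_le_right _ _)
          linarith
        exact (hball hd hs1).le
    exact absurd (le_csSup bddS ht'S) (not_le.mpr hTt')
  intro t ht
  have := core t (hTeq ▸ ht)
  refine this.trans ?_
  apply mul_le_mul_of_nonneg_left _ (abs_nonneg _)
  apply Real.exp_le_exp.mpr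
  nlinarith [ht.2]

lemma abel_ftc {f g y : ℝ → ℝ}
    (hf : ContinuousOn f (Set.Icc (-1:ℝ) 1)) (hg : ContinuousOn g (Set.Icc (-1:ℝ) 1))
    (hy : ∀ t ∈ Set.Icc (-1:ℝ) 1,
      HasDerivWithinAt y (f t * y t ^ 3 + g t * y t ^ 2) (Set.Icc (-1:ℝ) 1) t)
    (hy0 : ∀ t ∈ Set.Icc (-1:ℝ) 1, y t ≠ 0) :
    (∫ t in (-1:ℝ)..1, (f t * y t + g t)) = (y (-1))⁻¹ - (y 1)⁻¹ := by
  have ycont : ContinuousOn y (Set.Icc (-1:ℝ) 1) :=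
    fun t ht => (hy t ht).continuousWithinAt
  set w : ℝ → ℝ := fun t => -(y t)⁻¹ with hwdef
  have hw : ∀ t ∈ Set.Icc (-1:ℝ) 1,
      HasDerivWithinAt w (f t * y t + g t) (Set.Icc (-1:ℝ) 1) t := by
    intro t ht
    have h1 := ((hy t ht).inv (hy0 t ht)).neg
    have hyt := hy0 t ht
    refine h1.congr_deriv ?_
    field_simp
  have wcont : ContinuousOn w (Set.Icc (-1:ℝ) 1) := (ycont.inv₀ hy0).neg
  have hcont2 : ContinuousOn (fun t => f t * y t + g t) (Set.Icc (-1:ℝ) 1) :=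
    (hf.mul ycont).add hg
  have hint : IntervalIntegrable (fun t => f t * y t + g t) volume (-1:ℝ) 1 := by
    apply ContinuousOn.intervalIntegrable
    rwa [Set.uIcc_of_le (by norm_num : (-1:ℝ) ≤ 1)]
  have := intervalIntegral.integral_eq_sub_of_hasDeriv_right_of_le
    (by norm_num : (-1:ℝ) ≤ 1) wcont
    (fun t ht => (((hw t ⟨ht.1.le, ht.2.le⟩).mono_of_mem_nhdsWithin
      (Icc_mem_nhdsGE_of_mem ⟨ht.1.le, ht.2⟩)).mono Set.Ioi_subset_Ici_self)) hint
  rw [this]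
  simp [hwdef]
  ring

lemma abel_unique {f g y z : ℝ → ℝ} {M : ℝ}
    (hM : ∀ t ∈ Set.Icc (-1:ℝ) 1, |f t| ≤ M ∧ |g t| ≤ M)
    (hy : ∀ t ∈ Set.Icc (-1:ℝ) 1,
      HasDerivWithinAt y (f t * y t ^ 3 + g t * y t ^ 2) (Set.Icc (-1:ℝ) 1) t)
    (hz : ∀ t ∈ Set.Icc (-1:ℝ) 1,
      HasDerivWithinAt z (f t * z t ^ 3 + g t * z t ^ 2) (Set.Icc (-1:ℝ) 1) t)
    (hby : ∀ t ∈ Set.Icc (-1:ℝ) 1, |y t| ≤ 1)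
    (hbz : ∀ t ∈ Set.Icc (-1:ℝ) 1, |z t| ≤ 1)
    (h0 : y (-1) = z (-1)) :
    Set.EqOn y z (Set.Icc (-1:ℝ) 1) := by
  set pr : ℝ → ℝ := fun t => max (-1) (min 1 t) with hprdef
  have hprIcc : ∀ t, pr t ∈ Set.Icc (-1:ℝ) 1 :=
    fun t => ⟨le_max_left _ _, max_le (by norm_num) (min_le_left _ _)⟩
  have hpreq : ∀ t ∈ Set.Icc (-1:ℝ) 1, pr t = t := by
    intro t ht
    simp only [hprdef]
    rw [min_eq_right ht.2, max_eq_right ht.1]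
  set v : ℝ → ℝ → ℝ := fun t u => f (pr t) * u ^ 3 + g (pr t) * u ^ 2 with hvdef
  have hv : ∀ t, LipschitzOnWith (Real.toNNReal (5*M)) (v t) (Set.Icc (-1:ℝ) 1) :=
    fun t => abel_lip (hM _ (hprIcc t)).1 (hM _ (hprIcc t)).2
  apply ODE_solution_unique_of_mem_Icc_right (fun t _ => hv t)
    (fun t ht => (hy t ht).continuousWithinAt) ?_
    (fun t ht => abs_le.mp (hby t ⟨ht.1, ht.2.le⟩)) 
    (fun t ht => (hz t ht).continuousWithinAt) ?_
    (fun t ht => abs_le.mp (hbz t ⟨ht.1, ht.2.le⟩)) h0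
  · intro t ht
    have := (hy t ⟨ht.1, ht.2.le⟩).mono_of_mem_nhdsWithin
      (Icc_mem_nhdsGE_of_mem ⟨ht.1, ht.2⟩)
    rwa [show v t (y t) = f t * y t ^ 3 + g t * y t ^ 2 by
      rw [hvdef]; simp only; rw [hpreq t ⟨ht.1, ht.2.le⟩]]
  · intro t ht
    have := (hz t ⟨ht.1, ht.2.le⟩).mono_of_mem_nhdsWithin
      (Icc_mem_nhdsGE_of_mem ⟨ht.1, ht.2⟩)
    rwa [show v t (z t) = f t * z t ^ 3 + g t * z t ^ 2 by
      rw [hvdef]; simp only; rw [hpreq t ⟨ht.1, ht.2.le⟩]]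

lemma abel_vanish {f g y : ℝ → ℝ} {M : ℝ}
    (hM : ∀ t ∈ Set.Icc (-1:ℝ) 1, |f t| ≤ M ∧ |g t| ≤ M)
    (hy : ∀ t ∈ Set.Icc (-1:ℝ) 1,
      HasDerivWithinAt y (f t * y t ^ 3 + g t * y t ^ 2) (Set.Icc (-1:ℝ) 1) t)
    (hby : ∀ t ∈ Set.Icc (-1:ℝ) 1, |y t| ≤ 1)
    {t₀ : ℝ} (ht₀ : t₀ ∈ Set.Icc (-1:ℝ) 1) (h0 : y t₀ = 0) :
    ∀ t ∈ Set.Icc (-1:ℝ) 1, y t = 0 := by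
  set pr : ℝ → ℝ := fun t => max (-1) (min 1 t) with hprdef
  have hprIcc : ∀ t, pr t ∈ Set.Icc (-1:ℝ) 1 :=
    fun t => ⟨le_max_left _ _, max_le (by norm_num) (min_le_left _ _)⟩
  have hpreq : ∀ t ∈ Set.Icc (-1:ℝ) 1, pr t = t := by
    intro t ht
    simp only [hprdef]
    rw [min_eq_right ht.2, max_eq_right ht.1]
  set v : ℝ → ℝ → ℝ := fun t u => f (pr t) * u ^ 3 + g (pr t) * u ^ 2 with hvdef
  have hv : ∀ t, LipschitzOnWith (Real.toNNReal (5*M)) (v t) (Set.Icc (-1:ℝ) 1) :=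
    fun t => abel_lip (hM _ (hprIcc t)).1 (hM _ (hprIcc t)).2
  have hv0 : ∀ t, v t 0 = 0 := by intro t; simp [hvdef]
  have hzmem : ∀ (t : ℝ), (0:ℝ) ∈ Set.Icc (-1:ℝ) 1 := fun _ => by norm_num
  have hright : Set.EqOn y (fun _ => (0:ℝ)) (Set.Icc t₀ 1) := by
    apply ODE_solution_unique_of_mem_Icc_right (fun t _ => hv t)
      (fun t ht => ((hy t ⟨ht₀.1.trans ht.1, ht.2⟩).continuousWithinAt).mono (Set.Icc_subset_Icc ht₀.1 le_rfl)) ?_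
      (fun t ht => abs_le.mp (hby t ⟨ht₀.1.trans ht.1, ht.2.le⟩))
      continuousOn_const ?_ (fun t _ => hzmem t) h0
    · intro t ht
      have htI : t ∈ Set.Icc (-1:ℝ) 1 := ⟨ht₀.1.trans ht.1, ht.2.le⟩
      have := (hy t htI).mono_of_mem_nhdsWithin
        (Icc_mem_nhdsGE_of_mem ⟨htI.1, ht.2⟩)
      rwa [show v t (y t) = f t * y t ^ 3 + g t * y t ^ 2 by
        rw [hvdef]; simp only; rw [hpreq t htI]]
    · intro t ht
      rw [show v t ((fun _ => (0:ℝ)) t) = 0 from hv0 t]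
      exact hasDerivWithinAt_const _ _ _
  have hleft : Set.EqOn y (fun _ => (0:ℝ)) (Set.Icc (-1:ℝ) t₀) := by
    apply ODE_solution_unique_of_mem_Icc_left (fun t _ => hv t)
      (fun t ht => ((hy t ⟨ht.1, ht.2.trans ht₀.2⟩).continuousWithinAt).mono (Set.Icc_subset_Icc le_rfl ht₀.2)) ?_
      (fun t ht => abs_le.mp (hby t ⟨ht.1.le, ht.2.trans ht₀.2⟩))
      continuousOn_const ?_ (fun t _ => hzmem t) h0
    · intro t ht
      have htI : t ∈ Set.Icc (-1:ℝ) 1 := ⟨ht.1.le, ht.2.trans ht₀.2⟩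
      have := (hy t htI).mono_of_mem_nhdsWithin
        (Icc_mem_nhdsLE_of_mem ⟨ht.1, htI.2⟩)
      rwa [show v t (y t) = f t * y t ^ 3 + g t * y t ^ 2 by
        rw [hvdef]; simp only; rw [hpreq t htI]]
    · intro t ht
      rw [show v t ((fun _ => (0:ℝ)) t) = 0 from hv0 t]
      exact hasDerivWithinAt_const _ _ _
  intro t ht
  rcases le_or_gt t t₀ with h | h
  · exact hleft ⟨ht.1, h⟩
  · exact hright ⟨h.le, ht.2⟩

/-- (Lijun–Yun) Let `f, g` be continuous on `[-1,1]` and let `x(t,ρ)` denote, for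
`|ρ| < ρ₁`, the solution of `x' = f(t) x^3 + g(t) x^2` with `x(-1,ρ) = ρ`. Then
`x = 0` is a center if and only if `∫_{-1}^1 g(t) dt = 0` and there exists
`ρ₀ > 0` with `∫_{-1}^1 f(t) x(t,ρ) dt = 0` for all `|ρ| < ρ₀`. -/
theorem center_iff_integral_conditions
    (f g : ℝ → ℝ)
    (hf : ContinuousOn f (Set.Icc (-1 : ℝ) 1))
    (hg : ContinuousOn g (Set.Icc (-1 : ℝ) 1))
    (ρ₁ : ℝ) (hρ₁ : 0 < ρ₁)
    (x : ℝ → ℝ → ℝ)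
    (hinit : ∀ ρ : ℝ, |ρ| < ρ₁ → x (-1) ρ = ρ)
    (hsol : ∀ ρ : ℝ, |ρ| < ρ₁ → ∀ t ∈ Set.Icc (-1 : ℝ) 1,
      HasDerivWithinAt (fun τ => x τ ρ) (f t * x t ρ ^ 3 + g t * x t ρ ^ 2) (Set.Icc (-1 : ℝ) 1) t) :
    HasCenter f g (-1) 1 ↔
      ((∫ t in (-1 : ℝ)..1, g t) = 0 ∧
        ∃ ρ₀ > (0 : ℝ), ρ₀ ≤ ρ₁ ∧ ∀ ρ : ℝ, |ρ| < ρ₀ →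
          (∫ t in (-1 : ℝ)..1, f t * x t ρ) = 0) := by
  obtain ⟨Mf, hMf⟩ := isCompact_Icc.exists_bound_of_continuousOn hf
  obtain ⟨Mg, hMg⟩ := isCompact_Icc.exists_bound_of_continuousOn hg
  set M : ℝ := max 1 (max Mf Mg) with hMdef
  have hM1 : (1:ℝ) ≤ M := le_max_left _ _
  have hM0 : (0:ℝ) ≤ M := zero_le_one.trans hM1
  have hM : ∀ t ∈ Set.Icc (-1:ℝ) 1, |f t| ≤ M ∧ |g t| ≤ M := by
    intro t ht
    constructor
    · exact (Real.norm_eq_abs (f t) ▸ hMf t ht).trans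
        ((le_max_left Mf Mg).trans (le_max_right 1 _))
    · exact (Real.norm_eq_abs (g t) ▸ hMg t ht).trans
        ((le_max_right Mf Mg).trans (le_max_right 1 _))
  set E : ℝ := Real.exp (4*M) with hEdef
  have hE1 : (1:ℝ) ≤ E := Real.one_le_exp (by positivity)
  have hEpos : (0:ℝ) < E := zero_lt_one.trans_le hE1
  have key_bound : ∀ ρ : ℝ, |ρ| < ρ₁ → |ρ| * E < 1 →
      ∀ t ∈ Set.Icc (-1:ℝ) 1, |x t ρ| ≤ |ρ| * E := by
    intro ρ h1 h2 t ht
    have h3 := abel_bound (f := f) (g := g) (y := fun τ => x τ ρ) hM0 hM (hsol ρ h1)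
      (show |x (-1) ρ| * Real.exp (4*M) < 1 by rw [hinit ρ h1, ← hEdef]; exact h2) t ht
    have h4 : |x t ρ| ≤ |x (-1) ρ| * Real.exp (4*M) := h3
    rwa [hinit ρ h1, ← hEdef] at h4
  have huIcc : Set.uIcc (-1:ℝ) 1 = Set.Icc (-1:ℝ) 1 := Set.uIcc_of_le (by norm_num)
  have hIg : IntervalIntegrable g volume (-1:ℝ) 1 := by
    apply ContinuousOn.intervalIntegrable; rwa [huIcc]
  have hIfy : ∀ y : ℝ → ℝ, ContinuousOn y (Set.Icc (-1:ℝ) 1) →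
      IntervalIntegrable (fun t => f t * y t) volume (-1:ℝ) 1 := by
    intro y hy
    apply ContinuousOn.intervalIntegrable
    rw [huIcc]; exact hf.mul hy
  have key_ftc : ∀ y : ℝ → ℝ,
      (∀ t ∈ Set.Icc (-1:ℝ) 1,
        HasDerivWithinAt y (f t * y t ^ 3 + g t * y t ^ 2) (Set.Icc (-1:ℝ) 1) t) →
      (∀ t ∈ Set.Icc (-1:ℝ) 1, y t ≠ 0) →
      (∫ t in (-1:ℝ)..1, f t * y t) + (∫ t in (-1:ℝ)..1, g t)
        = (y (-1))⁻¹ - (y 1)⁻¹ := by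
    intro y hy hy0
    have ycont : ContinuousOn y (Set.Icc (-1:ℝ) 1) :=
      fun t ht => (hy t ht).continuousWithinAt
    rw [← intervalIntegral.integral_add (hIfy y ycont) hIg]
    exact abel_ftc hf hg hy hy0
  have key_int_bound : ∀ (y : ℝ → ℝ) (C : ℝ), 0 ≤ C →
      (∀ t ∈ Set.Icc (-1:ℝ) 1, |y t| ≤ C) →
      |∫ t in (-1:ℝ)..1, f t * y t| ≤ M * C * 2 := by
    intro y C hC hb
    have h := intervalIntegral.norm_integral_le_of_norm_le_const
      (C := M*C) (f := fun t => f t * y t) (a := -1) (b := 1) ?_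
    · rw [Real.norm_eq_abs] at h
      have h2 : |(1:ℝ) - (-1)| = 2 := by norm_num
      rwa [h2] at h
    · intro t ht
      rw [Set.uIoc_of_le (by norm_num : (-1:ℝ) ≤ 1)] at ht
      have htI : t ∈ Set.Icc (-1:ℝ) 1 := ⟨ht.1.le, ht.2⟩
      rw [Real.norm_eq_abs, abs_mul]
      exact mul_le_mul (hM t htI).1 (hb t htI) (abs_nonneg _) hM0
  constructor
  · rintro ⟨δ, hδ, hcen⟩
    set ρ₀ : ℝ := min δ (min ρ₁ (1/(2*E))) with hρ₀def
    have hρ₀pos : 0 < ρ₀ := lt_min hδ (lt_min hρ₁ (by positivity))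
    have hρ₀δ : ρ₀ ≤ δ := min_le_left _ _
    have hρ₀1 : ρ₀ ≤ ρ₁ := (min_le_right _ _).trans (min_le_left _ _)
    have hρ₀E : ρ₀ ≤ 1/(2*E) := (min_le_right _ _).trans (min_le_right _ _)
    have hsmallE : ∀ ρ:ℝ, |ρ| < ρ₀ → |ρ| * E < 1 := by
      intro ρ h
      have h2 : |ρ| < 1/(2*E) := h.trans_le hρ₀E
      have h3 : (1/(2*E))*E = 1/2 := by field_simp
      nlinarith
    have claimA : ∀ ρ:ℝ, |ρ| < ρ₀ → ρ ≠ 0 →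
        (∫ t in (-1:ℝ)..1, f t * x t ρ) + (∫ t in (-1:ℝ)..1, g t) = 0 := by
      intro ρ hρ hρ0
      have hρ1 : |ρ| < ρ₁ := hρ.trans_le hρ₀1
      have hbnd := key_bound ρ hρ1 (hsmallE ρ hρ)
      have hb1 : ∀ t ∈ Set.Icc (-1:ℝ) 1, |x t ρ| ≤ 1 :=
        fun t ht => (hbnd t ht).trans (hsmallE ρ hρ).le
      have hnz : ∀ t ∈ Set.Icc (-1:ℝ) 1, x t ρ ≠ 0 := by
        intro t ht hzero
        have hv := abel_vanish hM (hsol ρ hρ1) hb1 ht hzero (-1) (by norm_num)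
        rw [hinit ρ hρ1] at hv
        exact hρ0 hv
      have hcent : x (-1) ρ = x 1 ρ :=
        hcen (fun τ => x τ ρ) (hsol ρ hρ1)
          (show |x (-1) ρ| < δ by rw [hinit ρ hρ1]; exact hρ.trans_le hρ₀δ)
      have hF : (∫ t in (-1:ℝ)..1, f t * x t ρ) + (∫ t in (-1:ℝ)..1, g t)
          = (x (-1) ρ)⁻¹ - (x 1 ρ)⁻¹ := key_ftc (fun τ => x τ ρ) (hsol ρ hρ1) hnz
      rw [hcent, sub_self] at hF
      exact hF
    have hg0 : (∫ t in (-1:ℝ)..1, g t) = 0 := by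
      by_contra hne
      have habs : 0 < |∫ t in (-1:ℝ)..1, g t| := abs_pos.mpr hne
      set ρ : ℝ := min (ρ₀/2) ((|∫ t in (-1:ℝ)..1, g t|) / (4*M*E)) with hρdef
      have hρpos : 0 < ρ := lt_min (by linarith) (by positivity)
      have hρlt : |ρ| < ρ₀ := by
        rw [abs_of_pos hρpos]
        exact (min_le_left _ _).trans_lt (by linarith)
      have hA := claimA ρ hρlt (ne_of_gt hρpos)
      have hbnd := key_bound ρ (hρlt.trans_le hρ₀1) (hsmallE ρ hρlt)
      have hIb := key_int_bound (fun t => x t ρ) (|ρ| * E)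
        (by positivity) hbnd
      have heq : (∫ t in (-1:ℝ)..1, f t * x t ρ) = -(∫ t in (-1:ℝ)..1, g t) := by
        linarith
      rw [heq, abs_neg] at hIb
      have h5 : |ρ| * (4*M*E) ≤ |∫ t in (-1:ℝ)..1, g t| := by
        rw [abs_of_pos hρpos]
        exact (le_div_iff₀ (by positivity)).mp (min_le_right _ _)
      nlinarith [abs_nonneg ρ]
    refine ⟨hg0, ρ₀, hρ₀pos, hρ₀1, ?_⟩
    intro ρ hρ
    by_cases hρ0 : ρ = 0
    · subst hρ0
      have h01 : |(0:ℝ)| < ρ₁ := by simpa using hρ₁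
      have h02 : |(0:ℝ)| * E < 1 := by simp
      have hbnd := key_bound 0 h01 h02
      have hzero : ∀ t ∈ Set.Icc (-1:ℝ) 1, x t 0 = 0 := by
        intro t ht
        have := hbnd t ht
        simp only [abs_zero, zero_mul] at this
        exact abs_eq_zero.mp (le_antisymm this (abs_nonneg _))
      rw [show (∫ t in (-1:ℝ)..1, f t * x t 0) = ∫ t in (-1:ℝ)..1, (0:ℝ) from
        intervalIntegral.integral_congr (by
          rw [huIcc]
          intro t ht
          simp [hzero t ht])]
      simp
    · have hA := claimA ρ hρ hρ0
      rw [hg0, add_zero] at hA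
      exact hA
  · rintro ⟨hg0, ρ₀, hρ₀pos, hρ₀le, hzint⟩
    refine ⟨min ρ₀ (1/(2*E)), lt_min hρ₀pos (by positivity), ?_⟩
    intro y hdy hsmall
    have hρρ₀ : |y (-1)| < ρ₀ := hsmall.trans_le (min_le_left _ _)
    have hρ1 : |y (-1)| < ρ₁ := hρρ₀.trans_le hρ₀le
    have hρE : |y (-1)| * E < 1 := by
      have h2 : |y (-1)| < 1/(2*E) := hsmall.trans_le (min_le_right _ _)
      have h3 : (1/(2*E))*E = 1/2 := by field_simp
      nlinarith [abs_nonneg (y (-1))]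
    have hbndy : ∀ t ∈ Set.Icc (-1:ℝ) 1, |y t| ≤ |y (-1)| * E := by
      intro t ht
      have h4 := abel_bound hM0 hM hdy
        (show |y (-1)| * Real.exp (4*M) < 1 by rw [← hEdef]; exact hρE) t ht
      rwa [← hEdef] at h4
    have hbndx := key_bound (y (-1)) hρ1 hρE
    have hequ : Set.EqOn y (fun τ => x τ (y (-1))) (Set.Icc (-1:ℝ) 1) :=
      abel_unique hM hdy (hsol _ hρ1)
        (fun t ht => (hbndy t ht).trans hρE.le)
        (fun t ht => (hbndx t ht).trans hρE.le)
        (by rw [hinit _ hρ1])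
    by_cases hρ0 : y (-1) = 0
    · have h1 : |y 1| ≤ |y (-1)| * E := hbndy 1 (by norm_num)
      rw [hρ0, abs_zero, zero_mul] at h1
      have h2 : y 1 = 0 := abs_eq_zero.mp (le_antisymm h1 (abs_nonneg _))
      rw [hρ0, h2]
    · have hnz : ∀ t ∈ Set.Icc (-1:ℝ) 1, y t ≠ 0 := by
        intro t ht hzero
        exact hρ0 (abel_vanish hM hdy (fun s hs => (hbndy s hs).trans hρE.le) ht hzero
          (-1) (by norm_num))
      have hftc := key_ftc y hdy hnz
      have hxy : (∫ t in (-1:ℝ)..1, f t * y t)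
          = ∫ t in (-1:ℝ)..1, f t * x t (y (-1)) := by
        apply intervalIntegral.integral_congr
        rw [huIcc]
        intro t ht
        simp [hequ ht]
      rw [hxy, hzint _ hρρ₀, hg0, add_zero] at hftc
      have : (y (-1))⁻¹ = (y 1)⁻¹ := by linarith
      exact inv_inj.mp this
end
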